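/- arXiv:2510.00734 — 6 statements merged into one kernel-verified Lean document; each statement's English description precedes it below -/
import Mathlib

section
/- Let π₁ and π₂ be probability densities on ℝ^l with π₁ absolutely continuous with respect to π₂, and assume ∫_{ℝ^l} (π₁(z) + π₂(z)) log²π₂(z) dz < ∞, D_KL(π₁,π₂) < ∞, and π₁ log π₁ is integrable. Then |Ent(π₁) - Ent(π₂)| ≤ √2 · sqrt(∫_{ℝ^l} (π₁(z) + π₂(z)) log²π₂(z) dz) · sqrt(D_KL(π₁, π₂)) + D_KL(π₁, π₂). -/
open MeasureTheory Real

/-- Differential entropy of a probability density `ρ` on `ℝ^l`. -/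
noncomputable def diffEntropy {l : ℕ} (ρ : (Fin l → ℝ) → ℝ) : ℝ :=
  - ∫ y, ρ y * Real.log (ρ y)

/-- Kullback–Leibler divergence between probability densities `π₁` and `π₂` on `ℝ^l`. -/
noncomputable def klDiv {l : ℕ} (π₁ π₂ : (Fin l → ℝ) → ℝ) : ℝ :=
  ∫ z, π₁ z * Real.log (π₁ z / π₂ z)

lemma tlemma {t : ℝ} (ht : 0 < t) :
    (t - 1) ^ 2 ≤ 2 * (t + 1) * (t * Real.log t - t + 1) := by
  set s := Real.sqrt t with hs_def
  have hs : 0 < s := Real.sqrt_pos.mpr ht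
  have hst : s ^ 2 = t := Real.sq_sqrt ht.le
  have h1 : Real.log s⁻¹ ≤ s⁻¹ - 1 := Real.log_le_sub_one_of_pos (by positivity)
  rw [Real.log_inv] at h1
  have h2 : s - 1 ≤ s * Real.log s := by
    have := mul_le_mul_of_nonneg_left h1 hs.le
    have h3 : s * (s⁻¹ - 1) = 1 - s := by field_simp
    nlinarith
  rw [← hst, Real.log_pow]
  push_cast
  nlinarith [sq_nonneg (s - 1), sq_nonneg (s + 1), sq_nonneg ((s-1)*(s+1)),
    mul_le_mul_of_nonneg_left h2 (sq_nonneg (s-1)), sq_nonneg s,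
    mul_le_mul_of_nonneg_left h2 hs.le]

lemma pqlemma {p q : ℝ} (hp : 0 ≤ p) (hq : 0 ≤ q) (hac : q = 0 → p = 0) :
    (p - q) ^ 2 / (p + q) ≤ 2 * (p * Real.log (p / q) - p + q) := by
  rcases eq_or_lt_of_le hq with hq0 | hq0
  · have hp0 := hac hq0.symm
    simp [← hq0, hp0]
  rcases eq_or_lt_of_le hp with hp0 | hp0
  · rw [← hp0]
    have : ((0:ℝ) - q) ^ 2 / (0 + q) = q := by field_simp; ring
    simp only [this]
    nlinarith
  have hpq : 0 < p + q := by linarith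
  rw [div_le_iff₀ hpq]
  set t := p / q with ht_def
  have ht : 0 < t := div_pos hp0 hq0
  have hpt : p = q * t := by rw [ht_def]; field_simp
  have := mul_le_mul_of_nonneg_left (tlemma ht) (sq_nonneg q)
  rw [hpt]
  ring_nf
  ring_nf at this
  nlinarith [this]

/-- For probability densities `π₁ ≪ π₂` on `ℝ^l` with
`∫ (π₁+π₂) log²π₂ < ∞`, `D_KL(π₁,π₂) < ∞` and `π₁ log π₁` integrable,
`|Ent(π₁) - Ent(π₂)|
  ≤ √2 · sqrt(∫ (π₁+π₂) log²π₂) · sqrt(D_KL(π₁,π₂)) + D_KL(π₁,π₂)`. -/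
theorem entropy_difference_kl_bound {l : ℕ} (π₁ π₂ : (Fin l → ℝ) → ℝ)
    (h₁_meas : Measurable π₁) (h₂_meas : Measurable π₂)
    (h₁_nonneg : ∀ z, 0 ≤ π₁ z) (h₂_nonneg : ∀ z, 0 ≤ π₂ z)
    (h₁_prob : ∫ z, π₁ z = 1) (h₂_prob : ∫ z, π₂ z = 1)
    (h_ac : ∀ᵐ z, π₂ z = 0 → π₁ z = 0)
    (h_log₂ : Integrable (fun z => (π₁ z + π₂ z) * (Real.log (π₂ z)) ^ 2))
    (h_kl : Integrable (fun z => π₁ z * Real.log (π₁ z / π₂ z)))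
    (h_int : Integrable (fun z => π₁ z * Real.log (π₁ z))) :
    |diffEntropy π₁ - diffEntropy π₂|
      ≤ Real.sqrt 2 * Real.sqrt (∫ z, (π₁ z + π₂ z) * (Real.log (π₂ z)) ^ 2)
          * Real.sqrt (klDiv π₁ π₂)
        + klDiv π₁ π₂ := by
  have hμ1 : Integrable π₁ := integrable_of_integral_eq_one h₁_prob
  have hμ2 : Integrable π₂ := integrable_of_integral_eq_one h₂_prob
  have hLmeas : Measurable fun z => Real.log (π₂ z) := h₂_meas.log
  -- integrability of πᵢ * log² π₂
  have h1log2 : Integrable (fun z => π₁ z * (Real.log (π₂ z)) ^ 2) := by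
    refine h_log₂.mono' (h₁_meas.mul (hLmeas.pow_const 2)).aestronglyMeasurable ?_
    filter_upwards with z
    rw [Real.norm_eq_abs, abs_of_nonneg (mul_nonneg (h₁_nonneg z) (sq_nonneg _))]
    nlinarith [mul_nonneg (h₂_nonneg z) (sq_nonneg (Real.log (π₂ z)))]
  have h2log2 : Integrable (fun z => π₂ z * (Real.log (π₂ z)) ^ 2) := by
    refine h_log₂.mono' (h₂_meas.mul (hLmeas.pow_const 2)).aestronglyMeasurable ?_
    filter_upwards with z
    rw [Real.norm_eq_abs, abs_of_nonneg (mul_nonneg (h₂_nonneg z) (sq_nonneg _))]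
    nlinarith [mul_nonneg (h₁_nonneg z) (sq_nonneg (Real.log (π₂ z)))]
  -- integrability of πᵢ * log π₂
  have habsL : ∀ z, |Real.log (π₂ z)| ≤ 1 + (Real.log (π₂ z)) ^ 2 := by
    intro z
    nlinarith [sq_nonneg (|Real.log (π₂ z)| - 1), sq_abs (Real.log (π₂ z))]
  have h1L : Integrable (fun z => π₁ z * Real.log (π₂ z)) := by
    refine (hμ1.add h1log2).mono' (h₁_meas.mul hLmeas).aestronglyMeasurable ?_
    filter_upwards with z
    rw [Real.norm_eq_abs, abs_mul, abs_of_nonneg (h₁_nonneg z)]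
    calc π₁ z * |Real.log (π₂ z)| ≤ π₁ z * (1 + (Real.log (π₂ z)) ^ 2) :=
          mul_le_mul_of_nonneg_left (habsL z) (h₁_nonneg z)
      _ = π₁ z + π₁ z * (Real.log (π₂ z)) ^ 2 := by ring
  have h2L : Integrable (fun z => π₂ z * Real.log (π₂ z)) := by
    refine (hμ2.add h2log2).mono' (h₂_meas.mul hLmeas).aestronglyMeasurable ?_
    filter_upwards with z
    rw [Real.norm_eq_abs, abs_mul, abs_of_nonneg (h₂_nonneg z)]
    calc π₂ z * |Real.log (π₂ z)| ≤ π₂ z * (1 + (Real.log (π₂ z)) ^ 2) :=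
          mul_le_mul_of_nonneg_left (habsL z) (h₂_nonneg z)
      _ = π₂ z + π₂ z * (Real.log (π₂ z)) ^ 2 := by ring
  -- KL decomposition
  have hkl_ae : ∀ᵐ z, π₁ z * Real.log (π₁ z / π₂ z)
      = π₁ z * Real.log (π₁ z) - π₁ z * Real.log (π₂ z) := by
    filter_upwards [h_ac] with z hz
    by_cases h1 : π₁ z = 0
    · simp [h1]
    by_cases h2 : π₂ z = 0
    · exact absurd (hz h2) h1
    rw [Real.log_div h1 h2]; ring
  have hkl_eq : klDiv π₁ π₂
      = (∫ z, π₁ z * Real.log (π₁ z)) - ∫ z, π₁ z * Real.log (π₂ z) := by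
    rw [klDiv, integral_congr_ae hkl_ae, integral_sub h_int h1L]
  have hent : diffEntropy π₁ - diffEntropy π₂
      = (∫ z, (π₂ z - π₁ z) * Real.log (π₂ z)) - klDiv π₁ π₂ := by
    have hsplit : ∫ z, (π₂ z - π₁ z) * Real.log (π₂ z)
        = (∫ z, π₂ z * Real.log (π₂ z)) - ∫ z, π₁ z * Real.log (π₂ z) := by
      simp_rw [sub_mul]
      exact integral_sub h2L h1L
    rw [diffEntropy, diffEntropy, hkl_eq, hsplit]; ring
  -- KL nonneg
  have hkl_nonneg : 0 ≤ klDiv π₁ π₂ := by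
    have hle : ∀ᵐ z, π₁ z - π₂ z ≤ π₁ z * Real.log (π₁ z / π₂ z) := by
      filter_upwards [h_ac] with z hz
      by_cases h2 : π₂ z = 0
      · simp [hz h2, h2]
      have h2' : 0 < π₂ z := (h₂_nonneg z).lt_of_ne (Ne.symm h2)
      by_cases h1 : π₁ z = 0
      · simp [h1]; linarith
      have h1' : 0 < π₁ z := (h₁_nonneg z).lt_of_ne (Ne.symm h1)
      have hlog : Real.log (π₂ z / π₁ z) ≤ π₂ z / π₁ z - 1 :=
        Real.log_le_sub_one_of_pos (by positivity)
      rw [Real.log_div h2 h1] at hlog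
      rw [Real.log_div h1 h2]
      have hm := mul_le_mul_of_nonneg_left hlog h1'.le
      have heq : π₁ z * (π₂ z / π₁ z - 1) = π₂ z - π₁ z := by field_simp
      nlinarith
    have h0 : ∫ z, (π₁ z - π₂ z) ≤ klDiv π₁ π₂ := integral_mono_ae (hμ1.sub hμ2) h_kl hle
    rw [integral_sub hμ1 hμ2, h₁_prob, h₂_prob] at h0
    linarith
  -- Cauchy-Schwarz setup
  set u : (Fin l → ℝ) → ℝ := fun z => |π₁ z - π₂ z| / Real.sqrt (π₁ z + π₂ z) with hu_def
  set v : (Fin l → ℝ) → ℝ := fun z => Real.sqrt (π₁ z + π₂ z) * |Real.log (π₂ z)| with hv_def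
  have hu_meas : Measurable u := (h₁_meas.sub h₂_meas).abs.div (h₁_meas.add h₂_meas).sqrt
  have hv_meas : Measurable v := (h₁_meas.add h₂_meas).sqrt.mul hLmeas.abs
  have hu_nonneg : ∀ z, 0 ≤ u z := fun z => div_nonneg (abs_nonneg _) (Real.sqrt_nonneg _)
  have hv_nonneg : ∀ z, 0 ≤ v z := fun z => mul_nonneg (Real.sqrt_nonneg _) (abs_nonneg _)
  have hu_sq : ∀ z, u z ^ 2 = (π₁ z - π₂ z) ^ 2 / (π₁ z + π₂ z) := by
    intro z
    rw [hu_def]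
    rw [div_pow, sq_abs, Real.sq_sqrt (add_nonneg (h₁_nonneg z) (h₂_nonneg z))]
  have hv_sq : ∀ z, v z ^ 2 = (π₁ z + π₂ z) * (Real.log (π₂ z)) ^ 2 := by
    intro z
    rw [hv_def]
    rw [mul_pow, sq_abs, Real.sq_sqrt (add_nonneg (h₁_nonneg z) (h₂_nonneg z))]
  have hv2_int : Integrable (fun z => v z ^ 2) := by
    have : (fun z => v z ^ 2) = fun z => (π₁ z + π₂ z) * (Real.log (π₂ z)) ^ 2 :=
      funext hv_sq
    rw [this]; exact h_log₂
  have hu2_int : Integrable (fun z => u z ^ 2) := by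
    refine (hμ1.add hμ2).mono' (hu_meas.pow_const 2).aestronglyMeasurable ?_
    filter_upwards with z
    rw [Real.norm_eq_abs, abs_of_nonneg (sq_nonneg _), hu_sq, Pi.add_apply]
    rcases eq_or_lt_of_le (add_nonneg (h₁_nonneg z) (h₂_nonneg z)) with h | h
    · rw [← h]; simp
    · rw [div_le_iff₀ h]
      nlinarith [mul_nonneg (h₁_nonneg z) (h₂_nonneg z)]
  have hu2_le : ∫ z, u z ^ 2 ≤ 2 * klDiv π₁ π₂ := by
    have hae : ∀ᵐ z, u z ^ 2 ≤ 2 * (π₁ z * Real.log (π₁ z / π₂ z) - π₁ z + π₂ z) := by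
      filter_upwards [h_ac] with z hz
      rw [hu_sq]
      exact pqlemma (h₁_nonneg z) (h₂_nonneg z) hz
    have hint2 : Integrable (fun z => 2 * (π₁ z * Real.log (π₁ z / π₂ z) - π₁ z + π₂ z)) :=
      ((h_kl.sub hμ1).add hμ2).const_mul 2
    have hmono := integral_mono_ae hu2_int hint2 hae
    have heval : ∫ z, 2 * (π₁ z * Real.log (π₁ z / π₂ z) - π₁ z + π₂ z)
        = 2 * (klDiv π₁ π₂ - 1 + 1) := by
      have hsub : Integrable (fun z => π₁ z * Real.log (π₁ z / π₂ z) - π₁ z) volume :=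
        h_kl.sub hμ1
      rw [integral_const_mul, integral_add hsub hμ2,
        integral_sub h_kl hμ1, h₁_prob, h₂_prob, klDiv]
    rw [heval] at hmono
    linarith
  have hu2_nonneg : 0 ≤ ∫ z, u z ^ 2 := integral_nonneg fun z => sq_nonneg _
  have hv2_nonneg : 0 ≤ ∫ z, v z ^ 2 := integral_nonneg fun z => sq_nonneg _
  -- Hölder
  have hconj : Real.HolderConjugate 2 2 := ⟨by norm_num, by norm_num, by norm_num⟩
  have h2e : (ENNReal.ofReal (2:ℝ)) = 2 := by norm_num
  have hu_mem : MemLp u (ENNReal.ofReal (2:ℝ)) := by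
    rw [h2e]
    exact (memLp_two_iff_integrable_sq hu_meas.aestronglyMeasurable).mpr hu2_int
  have hv_mem : MemLp v (ENNReal.ofReal (2:ℝ)) := by
    rw [h2e]
    exact (memLp_two_iff_integrable_sq hv_meas.aestronglyMeasurable).mpr hv2_int
  have hholder := MeasureTheory.integral_mul_norm_le_Lp_mul_Lq hconj hu_mem hv_mem
  have hnorm_u : ∀ z, ‖u z‖ = u z := fun z => Real.norm_of_nonneg (hu_nonneg z)
  have hnorm_v : ∀ z, ‖v z‖ = v z := fun z => Real.norm_of_nonneg (hv_nonneg z)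
  have hrw : ∫ a, ‖u a‖ * ‖v a‖ = ∫ a, u a * v a := by
    congr 1; funext a; rw [hnorm_u, hnorm_v]
  have hrw_u : ∫ a, ‖u a‖ ^ (2:ℝ) = ∫ a, u a ^ 2 := by
    congr 1; funext a; rw [hnorm_u, ← Real.rpow_natCast (u a) 2]; norm_num
  have hrw_v : ∫ a, ‖v a‖ ^ (2:ℝ) = ∫ a, v a ^ 2 := by
    congr 1; funext a; rw [hnorm_v, ← Real.rpow_natCast (v a) 2]; norm_num
  rw [hrw, hrw_u, hrw_v] at hholder
  rw [← Real.sqrt_eq_rpow, ← Real.sqrt_eq_rpow] at hholder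
  -- pointwise identification
  have hpt : ∀ z, |π₂ z - π₁ z| * |Real.log (π₂ z)| = u z * v z := by
    intro z
    rw [hu_def, hv_def]
    simp only
    rcases eq_or_lt_of_le (add_nonneg (h₁_nonneg z) (h₂_nonneg z)) with h | h
    · have h1 : π₁ z = 0 := by linarith [h₁_nonneg z, h₂_nonneg z]
      have h2 : π₂ z = 0 := by linarith [h₁_nonneg z, h₂_nonneg z]
      simp [h1, h2]
    · have hs : (0:ℝ) < Real.sqrt (π₁ z + π₂ z) := Real.sqrt_pos.mpr h
      rw [abs_sub_comm (π₂ z) (π₁ z)]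
      field_simp
  -- put it together
  have habs : |∫ z, (π₂ z - π₁ z) * Real.log (π₂ z)|
      ≤ Real.sqrt (∫ z, u z ^ 2) * Real.sqrt (∫ z, v z ^ 2) := by
    calc |∫ z, (π₂ z - π₁ z) * Real.log (π₂ z)|
        ≤ ∫ z, |π₂ z - π₁ z| * |Real.log (π₂ z)| := by
          simpa [Real.norm_eq_abs, abs_mul] using
            norm_integral_le_integral_norm (fun z => (π₂ z - π₁ z) * Real.log (π₂ z))
      _ = ∫ z, u z * v z := by congr 1; funext z; rw [hpt]
      _ ≤ Real.sqrt (∫ z, u z ^ 2) * Real.sqrt (∫ z, v z ^ 2) := hholder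
  have hsqrt_u : Real.sqrt (∫ z, u z ^ 2) ≤ Real.sqrt 2 * Real.sqrt (klDiv π₁ π₂) := by
    rw [← Real.sqrt_mul (by norm_num : (0:ℝ) ≤ 2)]
    exact Real.sqrt_le_sqrt hu2_le
  have hsqrt_v : Real.sqrt (∫ z, v z ^ 2)
      = Real.sqrt (∫ z, (π₁ z + π₂ z) * (Real.log (π₂ z)) ^ 2) := by
    congr 1; congr 1; funext z; rw [hv_sq]
  have hfinal : |∫ z, (π₂ z - π₁ z) * Real.log (π₂ z)|
      ≤ Real.sqrt 2 * Real.sqrt (∫ z, (π₁ z + π₂ z) * (Real.log (π₂ z)) ^ 2)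
        * Real.sqrt (klDiv π₁ π₂) := by
    rw [hsqrt_v] at habs
    calc |∫ z, (π₂ z - π₁ z) * Real.log (π₂ z)|
        ≤ Real.sqrt (∫ z, u z ^ 2)
          * Real.sqrt (∫ z, (π₁ z + π₂ z) * (Real.log (π₂ z)) ^ 2) := habs
      _ ≤ (Real.sqrt 2 * Real.sqrt (klDiv π₁ π₂))
          * Real.sqrt (∫ z, (π₁ z + π₂ z) * (Real.log (π₂ z)) ^ 2) :=
          mul_le_mul_of_nonneg_right hsqrt_u (Real.sqrt_nonneg _)
      _ = Real.sqrt 2 * Real.sqrt (∫ z, (π₁ z + π₂ z) * (Real.log (π₂ z)) ^ 2)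
          * Real.sqrt (klDiv π₁ π₂) := by ring
  rw [hent]
  calc |(∫ z, (π₂ z - π₁ z) * Real.log (π₂ z)) - klDiv π₁ π₂|
      ≤ |∫ z, (π₂ z - π₁ z) * Real.log (π₂ z)| + |klDiv π₁ π₂| := abs_sub _ _
    _ ≤ Real.sqrt 2 * Real.sqrt (∫ z, (π₁ z + π₂ z) * (Real.log (π₂ z)) ^ 2)
        * Real.sqrt (klDiv π₁ π₂) + klDiv π₁ π₂ := by
        rw [abs_of_nonneg hkl_nonneg]
        exact add_le_add_left hfinal _
end

section
/- Fix p > 1/2. Then the function σ ↦ (1/(2σ²) - 1/2 + log σ)^p / |log σ|, defined for σ > 0 with σ ≠ 1, tends to 0 as σ → 1. (The numerator equals D_KL(N(0,1), N(0,σ²))^p and the denominator equals |Ent(N(0,1)) - Ent(N(0,σ²))|, showing that the Kullback–Leibler divergence raised to any power p > 1/2 is asymptotically negligible compared to the differential entropy difference between the one-dimensional normal distributions N(0,1) and N(0,σ²) as σ → 1.) -/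
open Real Filter Topology

/-- For any fixed `p > 1/2`, the function
`σ ↦ (1/(2σ²) - 1/2 + log σ)^p / |log σ|` tends to `0` as `σ → 1` (σ ≠ 1).
The numerator is `D_KL(N(0,1), N(0,σ²))^p` and the denominator is
`|Ent(N(0,1)) - Ent(N(0,σ²))|`. -/
theorem kl_power_negligible_vs_entropy_difference (p : ℝ) (hp : 1 / 2 < p) :
    Filter.Tendsto
      (fun σ : ℝ => (1 / (2 * σ ^ 2) - 1 / 2 + Real.log σ) ^ p / |Real.log σ|)
      (nhdsWithin 1 {σ : ℝ | σ ≠ 1}) (nhds 0) := by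
  have hp0 : 0 < p := lt_trans (by norm_num) hp
  -- |log σ| → 0
  have hlog : Tendsto (fun σ : ℝ => |Real.log σ|)
      (nhdsWithin 1 {σ : ℝ | σ ≠ 1}) (nhds 0) := by
    have h := ((Real.continuousAt_log one_ne_zero).abs).tendsto
    simp only [Real.log_one, abs_zero] at h
    exact h.mono_left nhdsWithin_le_nhds
  -- dominating function tends to 0
  have hdom : Tendsto (fun σ : ℝ => (2:ℝ)^p * |Real.log σ| ^ (2*p - 1))
      (nhdsWithin 1 {σ : ℝ | σ ≠ 1}) (nhds 0) := by
    have hexp : (0:ℝ) < 2*p - 1 := by linarith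
    have hc : ContinuousAt (fun x : ℝ => x ^ (2*p - 1)) 0 :=
      Real.continuousAt_rpow_const 0 _ (Or.inr hexp.le)
    have h0 : (0:ℝ) ^ (2*p - 1) = 0 := Real.zero_rpow (by linarith)
    have := (hc.tendsto.comp hlog).const_mul ((2:ℝ)^p)
    simpa [h0] using this
  -- eventual facts
  have hev : ∀ᶠ σ : ℝ in nhdsWithin 1 {σ : ℝ | σ ≠ 1},
      0 < σ ∧ |2 * Real.log σ| ≤ 1 ∧ σ ≠ 1 := by
    have h1 : ∀ᶠ σ : ℝ in nhds 1, 0 < σ ∧ |2 * Real.log σ| ≤ 1 := by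
      have hc : ContinuousAt (fun σ : ℝ => |2 * Real.log σ|) 1 :=
        (continuousAt_const.mul (Real.continuousAt_log one_ne_zero)).abs
      have h2 : ∀ᶠ σ : ℝ in nhds 1, |2 * Real.log σ| ≤ 1 :=
        hc.eventually_le_const (by simp [Real.log_one] : |2 * Real.log (1:ℝ)| < 1)
      have h3 : ∀ᶠ σ : ℝ in nhds (1:ℝ), 0 < σ :=
        Filter.Tendsto.eventually_const_lt (by norm_num) tendsto_id
      exact h3.and h2
    have h4 := eventually_nhdsWithin_of_eventually_nhds
      (s := {σ : ℝ | σ ≠ 1}) h1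
    have h5 : ∀ᶠ σ : ℝ in nhdsWithin 1 {σ : ℝ | σ ≠ 1}, σ ≠ 1 :=
      eventually_mem_nhdsWithin
    filter_upwards [h4, h5] with σ ha hb
    exact ⟨ha.1, ha.2, hb⟩
  -- key pointwise bounds
  have key : ∀ σ : ℝ, 0 < σ → |2 * Real.log σ| ≤ 1 → σ ≠ 1 →
      0 ≤ 1 / (2 * σ ^ 2) - 1 / 2 + Real.log σ ∧
      (1 / (2 * σ ^ 2) - 1 / 2 + Real.log σ) ^ p / |Real.log σ|
        ≤ (2:ℝ)^p * |Real.log σ| ^ (2*p - 1) := by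
    intro σ hσ hσ1 hσne
    set u := Real.log σ with hu
    have hσ2 : σ ^ 2 = Real.exp (2 * u) := by
      rw [show (2:ℝ) * u = (2:ℕ) * u by norm_num, Real.exp_nat_mul, Real.exp_log hσ]
    have hN : 1 / (2 * σ ^ 2) - 1 / 2 + u = (Real.exp (-(2*u)) - 1 + 2*u) / 2 := by
      rw [hσ2, Real.exp_neg]
      field_simp
    have hlb : 0 ≤ Real.exp (-(2*u)) - 1 + 2*u := by
      have := Real.add_one_le_exp (-(2*u))
      linarith
    have hub : Real.exp (-(2*u)) - 1 + 2*u ≤ 4 * u^2 := by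
      have h := Real.abs_exp_sub_one_sub_id_le (x := -(2*u)) (by simpa using hσ1)
      have h2 : Real.exp (-(2*u)) - 1 - (-(2*u)) ≤ (-(2*u))^2 :=
        le_trans (le_abs_self _) h
      nlinarith
    have hN0 : 0 ≤ 1 / (2 * σ ^ 2) - 1 / 2 + u := by rw [hN]; positivity
    refine ⟨hN0, ?_⟩
    have hNle : 1 / (2 * σ ^ 2) - 1 / 2 + u ≤ 2 * u^2 := by rw [hN]; linarith
    have hupos : 0 < |u| := by
      rw [abs_pos, hu]
      exact Real.log_ne_zero_of_pos_of_ne_one hσ hσne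
    have hrpow : (1 / (2 * σ ^ 2) - 1 / 2 + u) ^ p ≤ (2 * u^2) ^ p :=
      Real.rpow_le_rpow hN0 hNle hp0.le
    have h2u : (2 * u^2 : ℝ) ^ p = (2:ℝ)^p * |u| ^ (2*p) := by
      rw [Real.mul_rpow (by norm_num) (sq_nonneg u), ← sq_abs u]
      congr 1
      rw [← Real.rpow_natCast |u| 2, ← Real.rpow_mul (abs_nonneg u)]
      norm_num
    have hsplit : |u| ^ (2*p) = |u| ^ (2*p - 1) * |u| := by
      rw [← Real.rpow_add_one hupos.ne' (2*p - 1)]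
      ring_nf
    calc (1 / (2 * σ ^ 2) - 1 / 2 + u) ^ p / |u|
        ≤ (2 * u^2) ^ p / |u| := by
          gcongr
      _ = (2:ℝ)^p * |u| ^ (2*p - 1) := by
          rw [h2u, hsplit, ← mul_assoc, mul_div_assoc, div_self hupos.ne', mul_one]
  -- squeeze
  apply squeeze_zero' ?_ ?_ hdom
  · filter_upwards [hev] with σ ⟨h1, h2, h3⟩
    exact div_nonneg (Real.rpow_nonneg (key σ h1 h2 h3).1 p) (abs_nonneg _)
  · filter_upwards [hev] with σ ⟨h1, h2, h3⟩
    exact (key σ h1 h2 h3).2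
end

section
/- Let μ be a Borel probability measure on a separable Banach space X, let Γ be a symmetric positive definite d×d real matrix, and let G, G_K : X → ℝ^d be measurable maps with ∫_X ‖G(x) - G_K(x)‖_Γ² μ(dx) < ∞. Let π and π^K be the evidence densities on ℝ^d associated with G and G_K respectively. Then D_KL(π^K, π) ≤ (1/2) ∫_X ‖G(x) - G_K(x)‖_Γ² μ(dx). -/
open MeasureTheory Real Matrix

/-- `‖z‖_Γ² = zᵀ Γ⁻¹ z` for `z ∈ ℝ^d`. -/
noncomputable def normGammaSq {d : ℕ} (Γ : Matrix (Fin d) (Fin d) ℝ) (z : Fin d → ℝ) : ℝ :=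
  z ⬝ᵥ (Γ⁻¹ *ᵥ z)

/-- Gaussian likelihood density
`π(y|x) = (2π)^{-d/2} det(Γ)^{-1/2} exp(-½‖G(x)-y‖_Γ²)`. -/
noncomputable def gaussLikelihood {d : ℕ} (Γ : Matrix (Fin d) (Fin d) ℝ) {X : Type*}
    (G : X → (Fin d → ℝ)) (x : X) (y : Fin d → ℝ) : ℝ :=
  (Real.sqrt ((2 * Real.pi) ^ d * Γ.det))⁻¹ *
    Real.exp (-(1 / 2) * normGammaSq Γ (G x - y))

/-- Evidence density `π(y) = ∫_X π(y|x) μ(dx)`. -/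
noncomputable def evidenceDensity {d : ℕ} (Γ : Matrix (Fin d) (Fin d) ℝ) {X : Type*}
    [MeasurableSpace X] (μ : Measure X) (G : X → (Fin d → ℝ)) (y : Fin d → ℝ) : ℝ :=
  ∫ x, gaussLikelihood Γ G x y ∂μ

namespace KLAux
variable {d : ℕ} {Γ : Matrix (Fin d) (Fin d) ℝ}

lemma inv_symm (hΓ_symm : Γ.IsSymm) : (Γ⁻¹)ᵀ = Γ⁻¹ := by
  rw [Matrix.transpose_nonsing_inv, hΓ_symm.eq]

lemma cross_symm (hΓ_symm : Γ.IsSymm) (a b : Fin d → ℝ) :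
    a ⬝ᵥ Γ⁻¹ *ᵥ b = b ⬝ᵥ Γ⁻¹ *ᵥ a := by
  rw [Matrix.dotProduct_mulVec, ← Matrix.mulVec_transpose, inv_symm hΓ_symm,
    dotProduct_comm]

lemma quad_nonneg (hΓ_pd : Γ.PosDef) (z : Fin d → ℝ) : 0 ≤ normGammaSq Γ z := by
  have := hΓ_pd.inv.posSemidef.dotProduct_mulVec_nonneg z
  simpa [normGammaSq] using this

lemma quad_pos (hΓ_pd : Γ.PosDef) {z : Fin d → ℝ} (hz : z ≠ 0) : 0 < normGammaSq Γ z := by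
  have := hΓ_pd.inv.dotProduct_mulVec_pos hz
  simpa [normGammaSq] using this

lemma quad_add (hΓ_symm : Γ.IsSymm) (a b : Fin d → ℝ) :
    normGammaSq Γ (a + b) = normGammaSq Γ a + 2 * (a ⬝ᵥ Γ⁻¹ *ᵥ b) + normGammaSq Γ b := by
  simp only [normGammaSq, Matrix.mulVec_add, dotProduct_add, add_dotProduct]
  rw [cross_symm hΓ_symm b a]
  ring

lemma cross_abs_le (hΓ_symm : Γ.IsSymm) (hΓ_pd : Γ.PosDef) (a b : Fin d → ℝ) :
    |a ⬝ᵥ Γ⁻¹ *ᵥ b| ≤ (1/2) * normGammaSq Γ a + (1/2) * normGammaSq Γ b := by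
  rcases abs_cases (a ⬝ᵥ Γ⁻¹ *ᵥ b) with ⟨h, _⟩ | ⟨h, _⟩ <;> rw [h]
  · have h1 := quad_nonneg hΓ_pd (a - b)
    have h2 : normGammaSq Γ (a - b)
        = normGammaSq Γ a - 2 * (a ⬝ᵥ Γ⁻¹ *ᵥ b) + normGammaSq Γ b := by
      have := quad_add hΓ_symm a (-b)
      simpa [normGammaSq, sub_eq_add_neg, Matrix.mulVec_neg, dotProduct_neg,
        neg_dotProduct] using this
    linarith
  · have h1 := quad_nonneg hΓ_pd (a + b)
    have h2 := quad_add hΓ_symm a b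
    linarith

end KLAux


namespace KLAux
variable {d : ℕ}

lemma continuous_mulVec (M : Matrix (Fin d) (Fin d) ℝ) : Continuous (fun u : Fin d → ℝ => M *ᵥ u) := by
  continuity

lemma continuous_quad (Γ : Matrix (Fin d) (Fin d) ℝ) :
    Continuous (fun z : Fin d → ℝ => z ⬝ᵥ (Γ⁻¹ *ᵥ z)) := by
  have : (fun z : Fin d → ℝ => z ⬝ᵥ (Γ⁻¹ *ᵥ z))
      = fun z => ∑ i, z i * ∑ j, Γ⁻¹ i j * z j := by
    ext z; rfl
  rw [this]
  exact continuous_finset_sum _ fun i _ => (continuous_apply i).mul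
    (continuous_finset_sum _ fun j _ => continuous_const.mul (continuous_apply j))

lemma integral_mulVec_eq {M : Matrix (Fin d) (Fin d) ℝ} (hM : M.det ≠ 0)
    {f : (Fin d → ℝ) → ℝ} (hf : Measurable f) :
    ∫ z, f z = |M.det| * ∫ u, f (M *ᵥ u) := by
  have hT : Measurable (Matrix.toLin' M) := (continuous_mulVec M).measurable
  have h1 : ∫ u, f (M *ᵥ u) = ∫ z, f z ∂(Measure.map (Matrix.toLin' M) volume) := by
    rw [integral_map hT.aemeasurable]
    · simp [Matrix.toLin'_apply]
    · exact hf.aestronglyMeasurable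
  rw [h1, Real.map_matrix_volume_pi_eq_smul_volume_pi hM, integral_smul_measure,
    ENNReal.toReal_ofReal (abs_nonneg _)]
  rw [smul_eq_mul, ← mul_assoc]
  rw [abs_inv, mul_inv_cancel₀ (by simpa using hM), one_mul]

lemma integrable_mulVec_iff {M : Matrix (Fin d) (Fin d) ℝ} (hM : M.det ≠ 0)
    {f : (Fin d → ℝ) → ℝ} (hf : Measurable f) :
    Integrable (fun u => f (M *ᵥ u)) ↔ Integrable f := by
  have hT : Measurable (Matrix.toLin' M) := (continuous_mulVec M).measurable
  have h1 : Integrable (fun u => f (M *ᵥ u)) ↔ Integrable f (Measure.map (Matrix.toLin' M) volume) := by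
    rw [integrable_map_measure hf.aestronglyMeasurable hT.aemeasurable]
    have : f ∘ (Matrix.toLin' M) = fun u => f (M *ᵥ u) := by
      ext u; simp [Function.comp, Matrix.toLin'_apply]
    rw [this]
  rw [h1, Real.map_matrix_volume_pi_eq_smul_volume_pi hM, integrable_smul_measure]
  · simp [abs_inv, hM]
  · exact ENNReal.ofReal_ne_top

end KLAux


namespace KLAux
variable {d : ℕ}

noncomputable def stdE (u : Fin d → ℝ) : ℝ := Real.exp (-(1/2) * ∑ i, u i ^ 2)

lemma stdE_eq_prod (u : Fin d → ℝ) : stdE u = ∏ i, Real.exp (-(1/2) * u i ^ 2) := by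
  rw [stdE, ← Real.exp_sum, Finset.mul_sum]

lemma integrable_1d : Integrable (fun x : ℝ => Real.exp (-(1/2) * x ^ 2)) := by
  simpa using integrable_exp_neg_mul_sq (by norm_num : (0:ℝ) < 1/2)

lemma integral_1d : ∫ x : ℝ, Real.exp (-(1/2) * x ^ 2) = Real.sqrt (2 * π) := by
  have := integral_gaussian (1/2)
  rw [div_div_eq_mul_div, div_one] at this
  simpa [mul_comm] using this

lemma integrable_1d_lin : Integrable (fun x : ℝ => Real.exp (-(1/2) * x ^ 2) * x) := by
  simpa [mul_comm] using integrable_mul_exp_neg_mul_sq (by norm_num : (0:ℝ) < 1/2)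

lemma integral_1d_lin : ∫ x : ℝ, Real.exp (-(1/2) * x ^ 2) * x = 0 := by
  have h := MeasureTheory.integral_neg_eq_self (fun x : ℝ => Real.exp (-(1/2) * x ^ 2) * x) volume
  simp only [neg_sq, mul_neg] at h
  rw [integral_neg] at h
  linarith

lemma sq_exp_bound (x : ℝ) : x ^ 2 * Real.exp (-(1/4) * x ^ 2) ≤ 4 := by
  have h1 : x ^ 2 / 4 ≤ Real.exp (x ^ 2 / 4) := by
    have := Real.add_one_le_exp (x ^ 2 / 4); linarith
  have h2 : Real.exp (-(1/4) * x ^ 2) = (Real.exp (x ^ 2 / 4))⁻¹ := by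
    rw [← Real.exp_neg]; ring_nf
  rw [h2]
  have h3 := Real.exp_pos (x ^ 2 / 4)
  rw [mul_inv_le_iff₀ h3]
  nlinarith

lemma integrable_1d_sq : Integrable (fun x : ℝ => Real.exp (-(1/2) * x ^ 2) * x ^ 2) := by
  apply Integrable.mono' ((integrable_exp_neg_mul_sq (by norm_num : (0:ℝ) < 1/4)).const_mul 4)
  · exact ((Real.continuous_exp.comp (by continuity)).mul (by continuity)).aestronglyMeasurable
  · refine Filter.Eventually.of_forall fun x => ?_
    have h1 : Real.exp (-(1/2) * x ^ 2) = Real.exp (-(1/4) * x ^ 2) * Real.exp (-(1/4) * x ^ 2) := by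
      rw [← Real.exp_add]; ring_nf
    have h2 := sq_exp_bound x
    have h3 := Real.exp_pos (-(1/4) * x ^ 2)
    have h4 : 0 ≤ x ^ 2 := sq_nonneg x
    rw [Real.norm_eq_abs, abs_of_nonneg (by positivity), h1]
    nlinarith [h3.le]

end KLAux

namespace Part2
open KLAux
variable {d : ℕ}

lemma integrable_stdE : Integrable (stdE (d := d)) := by
  have h : stdE (d := d) = fun u => ∏ i, Real.exp (-(1/2) * u i ^ 2) := funext stdE_eq_prod
  rw [h]
  exact Integrable.fintype_prod fun i => integrable_1d

lemma integral_stdE : ∫ u : Fin d → ℝ, stdE u = Real.sqrt (2 * π) ^ d := by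
  have h : (fun u : Fin d → ℝ => stdE u) = fun u => ∏ i, Real.exp (-(1/2) * u i ^ 2) :=
    funext stdE_eq_prod
  rw [h, MeasureTheory.volume_pi, MeasureTheory.integral_fintype_prod_eq_pow
    (fun x : ℝ => Real.exp (-(1/2) * x ^ 2)), integral_1d]
  simp

lemma prod_pick (u : Fin d → ℝ) (j : Fin d) (g : ℝ → ℝ) :
    (∏ i, (Real.exp (-(1/2) * u i ^ 2) * (if i = j then g (u i) else 1))) = stdE u * g (u j) := by
  rw [Finset.prod_mul_distrib, ← stdE_eq_prod]
  congr 1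
  rw [Finset.prod_ite_eq' Finset.univ j (fun i => g (u i))]
  simp

lemma integrable_stdE_lin (j : Fin d) : Integrable (fun u : Fin d → ℝ => stdE u * u j) := by
  have h : (fun u : Fin d → ℝ => stdE u * u j)
      = fun u => ∏ i, (fun i (x : ℝ) => Real.exp (-(1/2) * x ^ 2) * (if i = j then x else 1)) i (u i) := by
    ext u
    exact (prod_pick u j id).symm
  rw [h]
  refine Integrable.fintype_prod
    (f := fun i (x : ℝ) => Real.exp (-(1/2) * x ^ 2) * (if i = j then x else 1)) fun i => ?_
  by_cases hij : i = j <;> simp only [hij, if_true, if_false, mul_one]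
  · exact integrable_1d_lin
  · simpa [hij, neg_mul] using integrable_1d

lemma integral_stdE_lin (j : Fin d) : ∫ u : Fin d → ℝ, stdE u * u j = 0 := by
  have h : (fun u : Fin d → ℝ => stdE u * u j)
      = fun u => ∏ i, (fun i (x : ℝ) => Real.exp (-(1/2) * x ^ 2) * (if i = j then x else 1)) i (u i) := by
    ext u
    exact (prod_pick u j id).symm
  rw [h, MeasureTheory.volume_pi, MeasureTheory.integral_fintype_prod_eq_prod
    (fun i (x : ℝ) => Real.exp (-(1/2) * x ^ 2) * (if i = j then x else 1))]
  apply Finset.prod_eq_zero (Finset.mem_univ j)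
  simpa using integral_1d_lin

lemma integrable_stdE_sq (j : Fin d) : Integrable (fun u : Fin d → ℝ => stdE u * u j ^ 2) := by
  have h : (fun u : Fin d → ℝ => stdE u * u j ^ 2)
      = fun u => ∏ i, (fun i (x : ℝ) => Real.exp (-(1/2) * x ^ 2) * (if i = j then x ^ 2 else 1)) i (u i) := by
    ext u
    exact (prod_pick u j (fun x => x ^ 2)).symm
  rw [h]
  refine Integrable.fintype_prod
    (f := fun i (x : ℝ) => Real.exp (-(1/2) * x ^ 2) * (if i = j then x ^ 2 else 1)) fun i => ?_
  by_cases hij : i = j <;> simp only [hij, if_true, if_false, mul_one]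
  · exact integrable_1d_sq
  · simpa [hij, neg_mul] using integrable_1d

lemma integrable_stdE_sumsq : Integrable (fun u : Fin d → ℝ => stdE u * ∑ j, u j ^ 2) := by
  have h : (fun u : Fin d → ℝ => stdE u * ∑ j, u j ^ 2)
      = fun u => ∑ j, stdE u * u j ^ 2 := by ext u; rw [Finset.mul_sum]
  rw [h]
  exact integrable_finset_sum _ fun j _ => integrable_stdE_sq j

lemma integrable_stdE_dot (v : Fin d → ℝ) :
    Integrable (fun u : Fin d → ℝ => stdE u * (v ⬝ᵥ u)) := by
  have h : (fun u : Fin d → ℝ => stdE u * (v ⬝ᵥ u))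
      = fun u => ∑ j, v j * (stdE u * u j) := by
    ext u; rw [dotProduct, Finset.mul_sum]; congr 1; ext j; ring
  rw [h]
  exact integrable_finset_sum _ fun j _ => (integrable_stdE_lin j).const_mul (v j)

lemma integral_stdE_dot (v : Fin d → ℝ) :
    ∫ u : Fin d → ℝ, stdE u * (v ⬝ᵥ u) = 0 := by
  have h : (fun u : Fin d → ℝ => stdE u * (v ⬝ᵥ u))
      = fun u => ∑ j, v j * (stdE u * u j) := by
    ext u; rw [dotProduct, Finset.mul_sum]; congr 1; ext j; ring
  rw [h, MeasureTheory.integral_finset_sum _ fun j _ => (integrable_stdE_lin j).const_mul (v j)]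
  simp [MeasureTheory.integral_const_mul, integral_stdE_lin]

end Part2



namespace KLAux
variable {d : ℕ} {Γ : Matrix (Fin d) (Fin d) ℝ}

lemma sqrt_pow' (x : ℝ) (n : ℕ) (hx : 0 ≤ x) : Real.sqrt (x ^ n) = Real.sqrt x ^ n := by
  induction n with
  | zero => simp
  | succ n ih => rw [pow_succ, pow_succ, Real.sqrt_mul (by positivity), ih]

open scoped MatrixOrder in
lemma exists_M (hΓ_symm : Γ.IsSymm) (hΓ_pd : Γ.PosDef) :
    ∃ M : Matrix (Fin d) (Fin d) ℝ, M.det ≠ 0 ∧ |M.det| = Real.sqrt Γ.det ∧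
      ∀ u, normGammaSq Γ (M *ᵥ u) = ∑ i, u i ^ 2 := by
  have hiPD : (Γ⁻¹).PosDef := hΓ_pd.inv
  set B := CFC.sqrt (Γ⁻¹) with hBdef
  have hBB : B * B = Γ⁻¹ := CFC.sqrt_mul_sqrt_self _ hiPD.posSemidef.nonneg
  have hBsym : Bᵀ = B := by
    have h := (CFC.sqrt_nonneg (Γ⁻¹)).posSemidef.1
    ext i j
    have := congrFun (congrFun h.eq i) j
    simpa [Matrix.conjTranspose_apply] using this
  have hdet1 : Γ.det * (B.det * B.det) = 1 := by
    have h := Matrix.mul_nonsing_inv Γ hΓ_pd.det_pos.ne'.isUnit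
    have := congrArg Matrix.det h
    rw [← hBB, Matrix.det_mul, Matrix.det_mul, Matrix.det_one] at this
    linear_combination this
  have hdetB : B.det ≠ 0 := by
    intro h; rw [h] at hdet1; simp at hdet1
  have habsB : |B.det| = (Real.sqrt Γ.det)⁻¹ := by
    have h1 : B.det * B.det = (Γ.det)⁻¹ := by
      have hΓd := hΓ_pd.det_pos
      field_simp
      linear_combination hdet1
    rw [← Real.sqrt_mul_self_eq_abs, h1, Real.sqrt_inv]
  refine ⟨B⁻¹, ?_, ?_, ?_⟩
  · rw [Matrix.det_nonsing_inv, Ring.inverse_eq_inv']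
    exact inv_ne_zero hdetB
  · rw [Matrix.det_nonsing_inv, Ring.inverse_eq_inv', abs_inv, habsB, inv_inv]
  · intro u
    have hBu : B *ᵥ (B⁻¹ *ᵥ u) = u := by
      rw [Matrix.mulVec_mulVec, Matrix.mul_nonsing_inv B hdetB.isUnit, Matrix.one_mulVec]
    have key : ∀ z : Fin d → ℝ, normGammaSq Γ z = (B *ᵥ z) ⬝ᵥ (B *ᵥ z) := by
      intro z
      rw [normGammaSq, ← hBB, ← Matrix.mulVec_mulVec, Matrix.dotProduct_mulVec]
      congr 1
      rw [← Matrix.vecMul_transpose B z, hBsym]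
    rw [key, hBu]
    simp [dotProduct, sq]

end KLAux

namespace KLAux
open Part2
variable {d : ℕ} {Γ : Matrix (Fin d) (Fin d) ℝ}

lemma meas_gaussQ : Measurable fun z : Fin d → ℝ => Real.exp (-(1/2) * normGammaSq Γ z) :=
  (Real.continuous_exp.comp ((continuous_const.mul (continuous_quad Γ)))).measurable

lemma meas_quad : Measurable fun z : Fin d → ℝ => normGammaSq Γ z := (continuous_quad Γ).measurable

lemma meas_dot (w : Fin d → ℝ) : Measurable fun z : Fin d → ℝ => w ⬝ᵥ z := by
  have : Continuous fun z : Fin d → ℝ => w ⬝ᵥ z :=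
    continuous_finset_sum _ fun i _ => continuous_const.mul (continuous_apply i)
  exact this.measurable

lemma sqrtN_eq (hΓ_pd : Γ.PosDef) :
    Real.sqrt ((2 * π) ^ d * Γ.det) = Real.sqrt Γ.det * Real.sqrt (2 * π) ^ d := by
  rw [Real.sqrt_mul (by positivity), sqrt_pow' _ _ (by positivity)]
  ring

lemma integrable_gaussQ (hΓ_symm : Γ.IsSymm) (hΓ_pd : Γ.PosDef) :
    Integrable (fun z : Fin d → ℝ => Real.exp (-(1/2) * normGammaSq Γ z)) := by
  obtain ⟨M, hM, _, hQM⟩ := exists_M hΓ_symm hΓ_pd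
  refine (integrable_mulVec_iff hM meas_gaussQ).mp ?_
  have h : (fun u : Fin d → ℝ => Real.exp (-(1/2) * normGammaSq Γ (M *ᵥ u))) = stdE := by
    ext u; rw [hQM u]; rfl
  rw [h]
  exact integrable_stdE

lemma integral_gaussQ (hΓ_symm : Γ.IsSymm) (hΓ_pd : Γ.PosDef) :
    ∫ z : Fin d → ℝ, Real.exp (-(1/2) * normGammaSq Γ z) = Real.sqrt ((2 * π) ^ d * Γ.det) := by
  obtain ⟨M, hM, hMd, hQM⟩ := exists_M hΓ_symm hΓ_pd
  rw [integral_mulVec_eq hM meas_gaussQ]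
  have h : (fun u : Fin d → ℝ => Real.exp (-(1/2) * normGammaSq Γ (M *ᵥ u))) = stdE := by
    ext u; rw [hQM u]; rfl
  rw [h, integral_stdE, hMd, sqrtN_eq hΓ_pd]

lemma integrable_gaussQ_dot (hΓ_symm : Γ.IsSymm) (hΓ_pd : Γ.PosDef) (w : Fin d → ℝ) :
    Integrable (fun z : Fin d → ℝ => Real.exp (-(1/2) * normGammaSq Γ z) * (w ⬝ᵥ z)) := by
  obtain ⟨M, hM, _, hQM⟩ := exists_M hΓ_symm hΓ_pd
  refine (integrable_mulVec_iff (f := fun z => Real.exp (-(1/2) * normGammaSq Γ z) * (w ⬝ᵥ z)) hM (meas_gaussQ.mul (meas_dot w))).mp ?_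
  have h : (fun u : Fin d → ℝ => Real.exp (-(1/2) * normGammaSq Γ (M *ᵥ u)) * (w ⬝ᵥ (M *ᵥ u)))
      = fun u => stdE u * ((Mᵀ *ᵥ w) ⬝ᵥ u) := by
    ext u
    rw [hQM u, Matrix.dotProduct_mulVec w M u, ← Matrix.mulVec_transpose]
    rfl
  rw [h]
  exact integrable_stdE_dot _

lemma integral_gaussQ_dot (hΓ_symm : Γ.IsSymm) (hΓ_pd : Γ.PosDef) (w : Fin d → ℝ) :
    ∫ z : Fin d → ℝ, Real.exp (-(1/2) * normGammaSq Γ z) * (w ⬝ᵥ z) = 0 := by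
  obtain ⟨M, hM, _, hQM⟩ := exists_M hΓ_symm hΓ_pd
  rw [integral_mulVec_eq (f := fun z => Real.exp (-(1/2) * normGammaSq Γ z) * (w ⬝ᵥ z)) hM (meas_gaussQ.mul (meas_dot w))]
  have h : (fun u : Fin d → ℝ => Real.exp (-(1/2) * normGammaSq Γ (M *ᵥ u)) * (w ⬝ᵥ (M *ᵥ u)))
      = fun u => stdE u * ((Mᵀ *ᵥ w) ⬝ᵥ u) := by
    ext u
    rw [hQM u, Matrix.dotProduct_mulVec w M u, ← Matrix.mulVec_transpose]
    rfl
  rw [h, integral_stdE_dot]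
  ring

lemma integrable_gaussQ_quad (hΓ_symm : Γ.IsSymm) (hΓ_pd : Γ.PosDef) :
    Integrable (fun z : Fin d → ℝ => Real.exp (-(1/2) * normGammaSq Γ z) * normGammaSq Γ z) := by
  obtain ⟨M, hM, _, hQM⟩ := exists_M hΓ_symm hΓ_pd
  refine (integrable_mulVec_iff (f := fun z => Real.exp (-(1/2) * normGammaSq Γ z) * normGammaSq Γ z) hM (meas_gaussQ.mul meas_quad)).mp ?_
  have h : (fun u : Fin d → ℝ => Real.exp (-(1/2) * normGammaSq Γ (M *ᵥ u)) * normGammaSq Γ (M *ᵥ u))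
      = fun u => stdE u * ∑ i, u i ^ 2 := by
    ext u; rw [hQM u]; rfl
  rw [h]
  exact integrable_stdE_sumsq

end KLAux

namespace KLAux

lemma mul_exp_neg_le_one {t : ℝ} (ht : 0 ≤ t) : t * Real.exp (-t) ≤ 1 := by
  have h1 : t ≤ Real.exp t := by have := Real.add_one_le_exp t; linarith
  have h2 := Real.exp_pos t
  rw [Real.exp_neg]
  calc t * (Real.exp t)⁻¹ ≤ Real.exp t * (Real.exp t)⁻¹ := by
        apply mul_le_mul_of_nonneg_right h1 (by positivity)
    _ = 1 := mul_inv_cancel₀ h2.ne'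

lemma logsum {α : Type*} [MeasurableSpace α] (μ : Measure α) {a b : α → ℝ}
    (ha_pos : ∀ x, 0 < a x) (hb_pos : ∀ x, 0 < b x)
    (hai : Integrable a μ) (hbi : Integrable b μ)
    (hli : Integrable (fun x => a x * Real.log (a x / b x)) μ)
    (hA : 0 < ∫ x, a x ∂μ) (hB : 0 < ∫ x, b x ∂μ) :
    (∫ x, a x ∂μ) * Real.log ((∫ x, a x ∂μ) / (∫ x, b x ∂μ))
      ≤ ∫ x, a x * Real.log (a x / b x) ∂μ := by
  set A := ∫ x, a x ∂μ with hAdef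
  set Bv := ∫ x, b x ∂μ with hBdef
  set c := Real.log (A / Bv) with hcdef
  have key : ∀ x, a x - (A / Bv) * b x ≤ a x * Real.log (a x / b x) - c * a x := by
    intro x
    have hax := ha_pos x
    have hbx := hb_pos x
    set s : ℝ := (a x * Bv) / (b x * A) with hsdef
    have hs : 0 < s := by positivity
    have hlog_s : Real.log (a x / b x) - c = Real.log s := by
      rw [hcdef, hsdef,
        Real.log_div (by positivity : (0:ℝ) < a x * Bv).ne' (by positivity : (0:ℝ) < b x * A).ne',
        Real.log_mul hax.ne' hB.ne', Real.log_mul hbx.ne' hA.ne',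
        Real.log_div hax.ne' hbx.ne', Real.log_div hA.ne' hB.ne']
      ring
    have hls : 1 - s⁻¹ ≤ Real.log s := by
      have := Real.log_le_sub_one_of_pos (inv_pos.mpr hs)
      rw [Real.log_inv] at this
      linarith
    have h1 : a x * (1 - s⁻¹) ≤ a x * Real.log s := by
      apply mul_le_mul_of_nonneg_left hls hax.le
    have h2 : a x * (1 - s⁻¹) = a x - (A / Bv) * b x := by
      rw [hsdef]
      field_simp
    calc a x - (A / Bv) * b x = a x * (1 - s⁻¹) := h2.symm
      _ ≤ a x * Real.log s := h1
      _ = a x * (Real.log (a x / b x) - c) := by rw [hlog_s]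
      _ = a x * Real.log (a x / b x) - c * a x := by ring
  have hint1 : Integrable (fun x => a x - (A / Bv) * b x) μ := hai.sub (hbi.const_mul _)
  have hint2 : Integrable (fun x => a x * Real.log (a x / b x) - c * a x) μ :=
    hli.sub (hai.const_mul c)
  have hmono := integral_mono hint1 hint2 key
  rw [integral_sub hai (hbi.const_mul _), integral_sub hli (hai.const_mul c),
    integral_const_mul, integral_const_mul, ← hAdef, ← hBdef,
    div_mul_cancel₀ A hB.ne'] at hmono
  have : c * A ≤ ∫ x, a x * Real.log (a x / b x) ∂μ := by linarith
  rw [mul_comm] at this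
  exact this

end KLAux

namespace KLAux
variable {d : ℕ} {Γ : Matrix (Fin d) (Fin d) ℝ}

/-- Inner Gaussian facts for fixed `Δ`, `m`. -/
lemma inner_facts (hΓ_symm : Γ.IsSymm) (hΓ_pd : Γ.PosDef) (Δ m : Fin d → ℝ) :
    Integrable (fun y : Fin d → ℝ =>
        (Real.sqrt ((2 * π) ^ d * Γ.det))⁻¹ * Real.exp (-(1/2) * normGammaSq Γ (m - y)) *
          ((1/2) * normGammaSq Γ Δ + Δ ⬝ᵥ Γ⁻¹ *ᵥ (m - y))) ∧
    (∫ y : Fin d → ℝ,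
        (Real.sqrt ((2 * π) ^ d * Γ.det))⁻¹ * Real.exp (-(1/2) * normGammaSq Γ (m - y)) *
          ((1/2) * normGammaSq Γ Δ + Δ ⬝ᵥ Γ⁻¹ *ᵥ (m - y)))
      = (1/2) * normGammaSq Γ Δ ∧
    (∫ y : Fin d → ℝ, ‖(Real.sqrt ((2 * π) ^ d * Γ.det))⁻¹ *
          Real.exp (-(1/2) * normGammaSq Γ (m - y)) *
          ((1/2) * normGammaSq Γ Δ + Δ ⬝ᵥ Γ⁻¹ *ᵥ (m - y))‖)
      ≤ normGammaSq Γ Δ + (Real.sqrt ((2 * π) ^ d * Γ.det))⁻¹ * (1/2) *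
          (∫ z : Fin d → ℝ, Real.exp (-(1/2) * normGammaSq Γ z) * normGammaSq Γ z) := by
  have hdet := hΓ_pd.det_pos
  have hN : 0 < Real.sqrt ((2 * π) ^ d * Γ.det) := Real.sqrt_pos.mpr (by positivity)
  set c0 := (Real.sqrt ((2 * π) ^ d * Γ.det))⁻¹ with hc0def
  have hc0 : 0 < c0 := inv_pos.mpr hN
  set qΔ := normGammaSq Γ Δ with hqΔdef
  have hqΔ : 0 ≤ qΔ := quad_nonneg hΓ_pd Δ
  set w := Δ ᵥ* Γ⁻¹ with hwdef
  have hdot_eq : ∀ u, Δ ⬝ᵥ Γ⁻¹ *ᵥ u = w ⬝ᵥ u := fun u => Matrix.dotProduct_mulVec Δ Γ⁻¹ u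
  set F : (Fin d → ℝ) → ℝ := fun z =>
    c0 * Real.exp (-(1/2) * normGammaSq Γ z) * ((1/2) * qΔ + Δ ⬝ᵥ Γ⁻¹ *ᵥ z) with hFdef
  have hFeq : F = fun z => c0 * (Real.exp (-(1/2) * normGammaSq Γ z) * ((1/2) * qΔ)
      + Real.exp (-(1/2) * normGammaSq Γ z) * (w ⬝ᵥ z)) := by
    funext z; rw [hFdef]; simp only [hdot_eq]; ring
  have hF_int : Integrable F := by
    rw [hFeq]
    exact (((integrable_gaussQ hΓ_symm hΓ_pd).mul_const ((1/2) * qΔ)).add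
      (integrable_gaussQ_dot hΓ_symm hΓ_pd w)).const_mul c0
  have hF_integral : ∫ z, F z = (1/2) * qΔ := by
    rw [hFeq, integral_const_mul,
      integral_add ((integrable_gaussQ hΓ_symm hΓ_pd).mul_const _)
        (integrable_gaussQ_dot hΓ_symm hΓ_pd w),
      integral_mul_const, integral_gaussQ hΓ_symm hΓ_pd, integral_gaussQ_dot hΓ_symm hΓ_pd w,
      add_zero, hc0def]
    rw [← mul_assoc, inv_mul_cancel₀ hN.ne', one_mul]
  -- bound function
  set Gbd : (Fin d → ℝ) → ℝ := fun z =>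
    c0 * (Real.exp (-(1/2) * normGammaSq Γ z) * qΔ
      + (1/2) * (Real.exp (-(1/2) * normGammaSq Γ z) * normGammaSq Γ z)) with hGbddef
  have hGbd_int : Integrable Gbd := by
    rw [hGbddef]
    exact (((integrable_gaussQ hΓ_symm hΓ_pd).mul_const qΔ).add
      ((integrable_gaussQ_quad hΓ_symm hΓ_pd).const_mul (1/2))).const_mul c0
  have hFbd : ∀ z, ‖F z‖ ≤ Gbd z := by
    intro z
    have hqz : 0 ≤ normGammaSq Γ z := quad_nonneg hΓ_pd z
    have hexp : 0 < Real.exp (-(1/2) * normGammaSq Γ z) := Real.exp_pos _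
    have hcr := cross_abs_le hΓ_symm hΓ_pd Δ z
    rw [hFdef, hGbddef]
    simp only [Real.norm_eq_abs, abs_mul, abs_of_pos hc0, abs_of_pos hexp]
    have habs : |(1/2) * qΔ + Δ ⬝ᵥ Γ⁻¹ *ᵥ z| ≤ qΔ + (1/2) * normGammaSq Γ z := by
      have h1 := abs_add_le ((1/2) * qΔ) (Δ ⬝ᵥ Γ⁻¹ *ᵥ z)
      have h2 : |(1/2) * qΔ| = (1/2) * qΔ := abs_of_nonneg (by positivity)
      linarith
    calc c0 * Real.exp (-(1/2) * normGammaSq Γ z) * |(1/2) * qΔ + Δ ⬝ᵥ Γ⁻¹ *ᵥ z|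
        ≤ c0 * Real.exp (-(1/2) * normGammaSq Γ z) * (qΔ + (1/2) * normGammaSq Γ z) := by
          apply mul_le_mul_of_nonneg_left habs (by positivity)
      _ = c0 * (Real.exp (-(1/2) * normGammaSq Γ z) * qΔ
          + (1/2) * (Real.exp (-(1/2) * normGammaSq Γ z) * normGammaSq Γ z)) := by ring
  have hGbd_integral : ∫ z, Gbd z = qΔ + c0 * (1/2) *
      (∫ z : Fin d → ℝ, Real.exp (-(1/2) * normGammaSq Γ z) * normGammaSq Γ z) := by
    rw [hGbddef, integral_const_mul,
      integral_add ((integrable_gaussQ hΓ_symm hΓ_pd).mul_const qΔ)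
        ((integrable_gaussQ_quad hΓ_symm hΓ_pd).const_mul (1/2)),
      integral_mul_const, integral_gaussQ hΓ_symm hΓ_pd, integral_const_mul]
    rw [mul_add, hc0def, ← mul_assoc, inv_mul_cancel₀ hN.ne', one_mul]
    ring
  have hshift : (fun y : Fin d → ℝ =>
      c0 * Real.exp (-(1/2) * normGammaSq Γ (m - y)) *
        ((1/2) * qΔ + Δ ⬝ᵥ Γ⁻¹ *ᵥ (m - y))) = fun y => F (m - y) := rfl
  refine ⟨?_, ?_, ?_⟩
  · rw [hshift]; exact hF_int.comp_sub_left m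
  · rw [hshift, integral_sub_left_eq_self F volume m, hF_integral]
  · have h1 : (fun y : Fin d → ℝ => ‖c0 * Real.exp (-(1/2) * normGammaSq Γ (m - y)) *
        ((1/2) * qΔ + Δ ⬝ᵥ Γ⁻¹ *ᵥ (m - y))‖) = fun y => ‖F (m - y)‖ := rfl
    rw [h1, integral_sub_left_eq_self (fun z => ‖F z‖) volume m]
    calc ∫ z, ‖F z‖ ≤ ∫ z, Gbd z := integral_mono hF_int.norm hGbd_int hFbd
      _ = _ := hGbd_integral

end KLAux


set_option maxHeartbeats 2000000 in
open KLAux Function in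
/-- For a Borel probability measure `μ` on a separable Banach space `X`,
a symmetric positive definite `Γ`, and measurable maps `G, G_K : X → ℝ^d` with
`∫ ‖G - G_K‖_Γ² dμ < ∞`, the evidence densities satisfy
`D_KL(π^K, π) ≤ ½ ∫ ‖G - G_K‖_Γ² dμ`. -/
theorem kl_evidence_bound_by_forward_error {d : ℕ}
    {X : Type*} [NormedAddCommGroup X] [NormedSpace ℝ X] [CompleteSpace X]
    [TopologicalSpace.SeparableSpace X] [MeasurableSpace X] [BorelSpace X]
    (μ : Measure X) [IsProbabilityMeasure μ]
    (Γ : Matrix (Fin d) (Fin d) ℝ) (hΓ_symm : Γ.IsSymm) (hΓ_pd : Γ.PosDef)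
    (G GK : X → (Fin d → ℝ)) (hG : Measurable G) (hGK : Measurable GK)
    (h_int : Integrable (fun x => normGammaSq Γ (G x - GK x)) μ) :
    ∫ y, evidenceDensity Γ μ GK y *
        Real.log (evidenceDensity Γ μ GK y / evidenceDensity Γ μ G y)
      ≤ (1 / 2) * ∫ x, normGammaSq Γ (G x - GK x) ∂μ := by
  classical
  have hdet := hΓ_pd.det_pos
  have hN : 0 < Real.sqrt ((2 * π) ^ d * Γ.det) := Real.sqrt_pos.mpr (by positivity)
  set c0 : ℝ := (Real.sqrt ((2 * π) ^ d * Γ.det))⁻¹ with hc0def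
  have hc0 : 0 < c0 := inv_pos.mpr hN
  set S : ℝ := ∫ z : Fin d → ℝ, Real.exp (-(1/2) * normGammaSq Γ z) * normGammaSq Γ z
    with hSdef
  have hS : 0 ≤ S := integral_nonneg fun z =>
    mul_nonneg (Real.exp_pos _).le (quad_nonneg hΓ_pd z)
  set φ : X → (Fin d → ℝ) → ℝ := fun x y => gaussLikelihood Γ GK x y with hφdef
  set ψ : X → (Fin d → ℝ) → ℝ := fun x y => gaussLikelihood Γ G x y with hψdef
  set L : X → (Fin d → ℝ) → ℝ := fun x y =>
    (1/2) * normGammaSq Γ (G x - GK x) + (G x - GK x) ⬝ᵥ Γ⁻¹ *ᵥ (GK x - y) with hLdef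
  have hφ_eq : ∀ x y, φ x y = c0 * Real.exp (-(1/2) * normGammaSq Γ (GK x - y)) :=
    fun _ _ => by norm_num [hφdef, gaussLikelihood, hc0def]
  have hψ_eq : ∀ x y, ψ x y = c0 * Real.exp (-(1/2) * normGammaSq Γ (G x - y)) :=
    fun _ _ => by norm_num [hψdef, gaussLikelihood, hc0def]
  have hφ_pos : ∀ x y, 0 < φ x y := fun x y => by rw [hφ_eq]; positivity
  have hψ_pos : ∀ x y, 0 < ψ x y := fun x y => by rw [hψ_eq]; positivity
  have hφ_le : ∀ x y, φ x y ≤ c0 := by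
    intro x y
    rw [hφ_eq]
    calc c0 * Real.exp (-(1/2) * normGammaSq Γ (GK x - y)) ≤ c0 * 1 := by
          refine mul_le_mul_of_nonneg_left ?_ hc0.le
          rw [Real.exp_le_one_iff]
          have := quad_nonneg hΓ_pd (GK x - y); linarith
      _ = c0 := mul_one c0
  have hψ_le : ∀ x y, ψ x y ≤ c0 := by
    intro x y
    rw [hψ_eq]
    calc c0 * Real.exp (-(1/2) * normGammaSq Γ (G x - y)) ≤ c0 * 1 := by
          refine mul_le_mul_of_nonneg_left ?_ hc0.le
          rw [Real.exp_le_one_iff]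
          have := quad_nonneg hΓ_pd (G x - y); linarith
      _ = c0 := mul_one c0
  have hlog : ∀ x y, Real.log (φ x y / ψ x y) = L x y := by
    intro x y
    rw [hφ_eq, hψ_eq, mul_div_mul_left _ _ hc0.ne', ← Real.exp_sub, Real.log_exp, hLdef]
    have hdecomp : G x - y = (G x - GK x) + (GK x - y) := by abel
    rw [hdecomp, quad_add hΓ_symm]
    ring
  -- joint measurability
  have hsubK : Measurable fun p : X × (Fin d → ℝ) => GK p.1 - p.2 :=
    (hGK.comp measurable_fst).sub measurable_snd
  have hφ_jm : Measurable fun p : X × (Fin d → ℝ) => φ p.1 p.2 := by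
    have h : (fun p : X × (Fin d → ℝ) => φ p.1 p.2)
        = fun p => c0 * Real.exp (-(1/2) * normGammaSq Γ (GK p.1 - p.2)) :=
      funext fun p => hφ_eq p.1 p.2
    rw [h]
    exact (meas_gaussQ.comp hsubK).const_mul c0
  have hsubG : Measurable fun p : X × (Fin d → ℝ) => G p.1 - p.2 :=
    (hG.comp measurable_fst).sub measurable_snd
  have hψ_jm : Measurable fun p : X × (Fin d → ℝ) => ψ p.1 p.2 := by
    have h : (fun p : X × (Fin d → ℝ) => ψ p.1 p.2)
        = fun p => c0 * Real.exp (-(1/2) * normGammaSq Γ (G p.1 - p.2)) :=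
      funext fun p => hψ_eq p.1 p.2
    rw [h]
    exact (meas_gaussQ.comp hsubG).const_mul c0
  have hΔm : Measurable fun x => G x - GK x := hG.sub hGK
  have hqΔm : Measurable fun x => normGammaSq Γ (G x - GK x) := meas_quad.comp hΔm
  have hL_jm : Measurable fun p : X × (Fin d → ℝ) => L p.1 p.2 := by
    apply Measurable.add
    · exact (hqΔm.comp measurable_fst).const_mul (1/2)
    · have h : (fun p : X × (Fin d → ℝ) => (G p.1 - GK p.1) ⬝ᵥ Γ⁻¹ *ᵥ (GK p.1 - p.2))
          = fun p => ∑ i, (G p.1 - GK p.1) i * (Γ⁻¹ *ᵥ (GK p.1 - p.2)) i := rfl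
      rw [h]
      refine Finset.measurable_sum _ fun i _ => ?_
      exact ((measurable_pi_apply i).comp (hΔm.comp measurable_fst)).mul
        ((measurable_pi_apply i).comp ((continuous_mulVec Γ⁻¹).measurable.comp hsubK))
  have hφL_jm : Measurable fun p : X × (Fin d → ℝ) => φ p.1 p.2 * L p.1 p.2 :=
    hφ_jm.mul hL_jm
  -- per-x facts in y
  have hkey : ∀ x, (fun y => φ x y * L x y)
      = fun y => c0 * Real.exp (-(1/2) * normGammaSq Γ (GK x - y)) *
          ((1/2) * normGammaSq Γ (G x - GK x) + (G x - GK x) ⬝ᵥ Γ⁻¹ *ᵥ (GK x - y)) :=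
    fun x => funext fun y => by rw [hφ_eq, hLdef]
  have hA1 : ∀ x, Integrable (fun y => φ x y) volume := by
    intro x
    have h : (fun y => φ x y)
        = fun y => c0 * ((fun z => Real.exp (-(1/2) * normGammaSq Γ z)) (GK x - y)) :=
      funext fun y => hφ_eq x y
    rw [h]
    exact ((integrable_gaussQ hΓ_symm hΓ_pd).comp_sub_left (GK x)).const_mul c0
  have hA1ψ : ∀ x, Integrable (fun y => ψ x y) volume := by
    intro x
    have h : (fun y => ψ x y)
        = fun y => c0 * ((fun z => Real.exp (-(1/2) * normGammaSq Γ z)) (G x - y)) :=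
      funext fun y => hψ_eq x y
    rw [h]
    exact ((integrable_gaussQ hΓ_symm hΓ_pd).comp_sub_left (G x)).const_mul c0
  have hA2 : ∀ x, ∫ y, φ x y = 1 := by
    intro x
    have h : (fun y => φ x y)
        = fun y => c0 * ((fun z => Real.exp (-(1/2) * normGammaSq Γ z)) (GK x - y)) :=
      funext fun y => hφ_eq x y
    rw [h, integral_const_mul,
      integral_sub_left_eq_self (fun z => Real.exp (-(1/2) * normGammaSq Γ z)) volume (GK x),
      integral_gaussQ hΓ_symm hΓ_pd, hc0def, inv_mul_cancel₀ hN.ne']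
  have hA2ψ : ∀ x, ∫ y, ψ x y = 1 := by
    intro x
    have h : (fun y => ψ x y)
        = fun y => c0 * ((fun z => Real.exp (-(1/2) * normGammaSq Γ z)) (G x - y)) :=
      funext fun y => hψ_eq x y
    rw [h, integral_const_mul,
      integral_sub_left_eq_self (fun z => Real.exp (-(1/2) * normGammaSq Γ z)) volume (G x),
      integral_gaussQ hΓ_symm hΓ_pd, hc0def, inv_mul_cancel₀ hN.ne']
  have hIF := fun x => inner_facts hΓ_symm hΓ_pd (G x - GK x) (GK x)
  have hA3 : ∀ x, Integrable (fun y => φ x y * L x y) volume := by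
    intro x
    rw [hkey x]
    have h := (hIF x).1
    rw [← hc0def] at h
    exact h
  have hA4 : ∀ x, (∫ y, φ x y * L x y) = (1/2) * normGammaSq Γ (G x - GK x) := by
    intro x
    rw [hkey x]
    have h := (hIF x).2.1
    rw [← hc0def] at h
    exact h
  have hA5 : ∀ x, (∫ y, ‖φ x y * L x y‖)
      ≤ normGammaSq Γ (G x - GK x) + c0 * (1/2) * S := by
    intro x
    have h := (hIF x).2.2
    rw [← hc0def, ← hSdef] at h
    have h2 : (fun y => ‖φ x y * L x y‖)
        = fun y => ‖c0 * Real.exp (-(1/2) * normGammaSq Γ (GK x - y)) *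
          ((1/2) * normGammaSq Γ (G x - GK x) + (G x - GK x) ⬝ᵥ Γ⁻¹ *ᵥ (GK x - y))‖ :=
      funext fun y => by rw [congrFun (hkey x) y]
    rw [h2]
    exact h
  -- product integrability
  have hφ_prod_int : Integrable (fun p : X × (Fin d → ℝ) => φ p.1 p.2)
      (μ.prod volume) := by
    rw [integrable_prod_iff hφ_jm.aestronglyMeasurable]
    refine ⟨Filter.Eventually.of_forall fun x => hA1 x, ?_⟩
    have h : (fun x => ∫ y, ‖φ x y‖) = fun _ => (1:ℝ) := by
      funext x
      have h1 : (fun y => ‖φ x y‖) = fun y => φ x y :=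
        funext fun y => by rw [Real.norm_eq_abs, abs_of_pos (hφ_pos x y)]
      rw [h1, hA2 x]
    rw [h]
    exact integrable_const 1
  have hψ_prod_int : Integrable (fun p : X × (Fin d → ℝ) => ψ p.1 p.2)
      (μ.prod volume) := by
    rw [integrable_prod_iff hψ_jm.aestronglyMeasurable]
    refine ⟨Filter.Eventually.of_forall fun x => hA1ψ x, ?_⟩
    have h : (fun x => ∫ y, ‖ψ x y‖) = fun _ => (1:ℝ) := by
      funext x
      have h1 : (fun y => ‖ψ x y‖) = fun y => ψ x y :=
        funext fun y => by rw [Real.norm_eq_abs, abs_of_pos (hψ_pos x y)]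
      rw [h1, hA2ψ x]
    rw [h]
    exact integrable_const 1
  have hφL_prod_int : Integrable (fun p : X × (Fin d → ℝ) => φ p.1 p.2 * L p.1 p.2)
      (μ.prod volume) := by
    rw [integrable_prod_iff hφL_jm.aestronglyMeasurable]
    refine ⟨Filter.Eventually.of_forall fun x => hA3 x, ?_⟩
    refine Integrable.mono' (g := fun x => normGammaSq Γ (G x - GK x) + c0 * (1/2) * S)
      (h_int.add (integrable_const _)) ?_ ?_
    · exact ((hφL_jm.norm.stronglyMeasurable).integral_prod_right').aestronglyMeasurable
    · refine Filter.Eventually.of_forall fun x => ?_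
      rw [Real.norm_eq_abs, abs_of_nonneg (integral_nonneg fun y => norm_nonneg _)]
      exact hA5 x
  -- evidence densities: per-y facts
  have hρK_eq : ∀ y, evidenceDensity Γ μ GK y = ∫ x, φ x y ∂μ := fun y => rfl
  have hρ_eq : ∀ y, evidenceDensity Γ μ G y = ∫ x, ψ x y ∂μ := fun y => rfl
  have hxφ_int : ∀ y, Integrable (fun x => φ x y) μ := by
    intro y
    refine Integrable.mono' (integrable_const c0)
      (hφ_jm.comp (measurable_prodMk_right (y := y))).aestronglyMeasurable ?_
    exact Filter.Eventually.of_forall fun x => by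
      rw [Real.norm_eq_abs, abs_of_pos (hφ_pos x y)]; exact hφ_le x y
  have hxψ_int : ∀ y, Integrable (fun x => ψ x y) μ := by
    intro y
    refine Integrable.mono' (integrable_const c0)
      (hψ_jm.comp (measurable_prodMk_right (y := y))).aestronglyMeasurable ?_
    exact Filter.Eventually.of_forall fun x => by
      rw [Real.norm_eq_abs, abs_of_pos (hψ_pos x y)]; exact hψ_le x y
  have hρK_pos : ∀ y, 0 < evidenceDensity Γ μ GK y := by
    intro y
    rw [hρK_eq]
    rw [integral_pos_iff_support_of_nonneg (fun x => (hφ_pos x y).le) (hxφ_int y)]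
    have h : Function.support (fun x => φ x y) = Set.univ :=
      Set.eq_univ_of_forall fun x => (hφ_pos x y).ne'
    rw [h]
    simp
  have hρ_pos : ∀ y, 0 < evidenceDensity Γ μ G y := by
    intro y
    rw [hρ_eq]
    rw [integral_pos_iff_support_of_nonneg (fun x => (hψ_pos x y).le) (hxψ_int y)]
    have h : Function.support (fun x => ψ x y) = Set.univ :=
      Set.eq_univ_of_forall fun x => (hψ_pos x y).ne'
    rw [h]
    simp
  have hxφL_int : ∀ y, Integrable (fun x => φ x y * L x y) μ := by
    intro y
    refine Integrable.mono' (g := fun x => c0 * (normGammaSq Γ (G x - GK x) + 2))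
      ((h_int.add (integrable_const 2)).const_mul c0)
      ((hφL_jm.comp (measurable_prodMk_right (y := y))).aestronglyMeasurable) ?_
    refine Filter.Eventually.of_forall fun x => ?_
    have hqΔ : 0 ≤ normGammaSq Γ (G x - GK x) := quad_nonneg hΓ_pd _
    have hqk : 0 ≤ normGammaSq Γ (GK x - y) := quad_nonneg hΓ_pd _
    have hexp : 0 < Real.exp (-(1/2) * normGammaSq Γ (GK x - y)) := Real.exp_pos _
    have hexple : Real.exp (-(1/2) * normGammaSq Γ (GK x - y)) ≤ 1 := by
      rw [Real.exp_le_one_iff]; linarith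
    have hcr := cross_abs_le hΓ_symm hΓ_pd (G x - GK x) (GK x - y)
    have hmexp := mul_exp_neg_le_one (t := (1/2) * normGammaSq Γ (GK x - y)) (by linarith)
    have hmexp' : (1/2) * normGammaSq Γ (GK x - y) *
        Real.exp (-(1/2) * normGammaSq Γ (GK x - y)) ≤ 1 := by
      have : -((1/2) * normGammaSq Γ (GK x - y)) = -(1/2) * normGammaSq Γ (GK x - y) := by ring
      rw [← this]
      exact hmexp
    rw [Real.norm_eq_abs, abs_mul, abs_of_pos (hφ_pos x y), hφ_eq, hLdef]
    have habsL : |(1/2) * normGammaSq Γ (G x - GK x) + (G x - GK x) ⬝ᵥ Γ⁻¹ *ᵥ (GK x - y)|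
        ≤ normGammaSq Γ (G x - GK x) + (1/2) * normGammaSq Γ (GK x - y) := by
      have h1 := abs_add_le ((1/2) * normGammaSq Γ (G x - GK x))
        ((G x - GK x) ⬝ᵥ Γ⁻¹ *ᵥ (GK x - y))
      have h2 : |(1/2) * normGammaSq Γ (G x - GK x)| = (1/2) * normGammaSq Γ (G x - GK x) :=
        abs_of_nonneg (by linarith)
      linarith
    calc c0 * Real.exp (-(1/2) * normGammaSq Γ (GK x - y)) *
          |(1/2) * normGammaSq Γ (G x - GK x) + (G x - GK x) ⬝ᵥ Γ⁻¹ *ᵥ (GK x - y)|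
        ≤ c0 * Real.exp (-(1/2) * normGammaSq Γ (GK x - y)) *
          (normGammaSq Γ (G x - GK x) + (1/2) * normGammaSq Γ (GK x - y)) := by
          refine mul_le_mul_of_nonneg_left habsL (by positivity)
      _ = c0 * (normGammaSq Γ (G x - GK x) * Real.exp (-(1/2) * normGammaSq Γ (GK x - y))
            + (1/2) * normGammaSq Γ (GK x - y) * Real.exp (-(1/2) * normGammaSq Γ (GK x - y))) := by
          ring
      _ ≤ c0 * (normGammaSq Γ (G x - GK x) + 2) := by
          refine mul_le_mul_of_nonneg_left ?_ hc0.le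
          have h3 : normGammaSq Γ (G x - GK x) * Real.exp (-(1/2) * normGammaSq Γ (GK x - y))
              ≤ normGammaSq Γ (G x - GK x) := by
            nlinarith
          linarith
  -- pointwise log-sum inequality
  have hmain_pt : ∀ y, evidenceDensity Γ μ GK y *
      Real.log (evidenceDensity Γ μ GK y / evidenceDensity Γ μ G y)
      ≤ ∫ x, φ x y * L x y ∂μ := by
    intro y
    have hAy : 0 < ∫ x, φ x y ∂μ := by rw [← hρK_eq]; exact hρK_pos y
    have hBy : 0 < ∫ x, ψ x y ∂μ := by rw [← hρ_eq]; exact hρ_pos y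
    have hli : Integrable (fun x => φ x y * Real.log (φ x y / ψ x y)) μ := by
      have h : (fun x => φ x y * Real.log (φ x y / ψ x y)) = fun x => φ x y * L x y :=
        funext fun x => by rw [hlog]
      rw [h]
      exact hxφL_int y
    have h := logsum μ (a := fun x => φ x y) (b := fun x => ψ x y)
      (fun x => hφ_pos x y) (fun x => hψ_pos x y) (hxφ_int y) (hxψ_int y) hli hAy hBy
    have h2 : (fun x => φ x y * Real.log (φ x y / ψ x y)) = fun x => φ x y * L x y :=
      funext fun x => by rw [hlog]
    rw [h2] at h
    rw [hρK_eq, hρ_eq]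
    exact h
  -- integrability over y
  have hR_int : Integrable (fun y => ∫ x, φ x y * L x y ∂μ) volume :=
    hφL_prod_int.integral_prod_right
  have hρK_int : Integrable (fun y => evidenceDensity Γ μ GK y) volume :=
    hφ_prod_int.integral_prod_right
  have hρ_int : Integrable (fun y => evidenceDensity Γ μ G y) volume :=
    hψ_prod_int.integral_prod_right
  have hρK_m : Measurable fun y => evidenceDensity Γ μ GK y :=
    (hφ_jm.stronglyMeasurable.integral_prod_left').measurable
  have hρ_m : Measurable fun y => evidenceDensity Γ μ G y :=
    (hψ_jm.stronglyMeasurable.integral_prod_left').measurable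
  have hlow : ∀ y, evidenceDensity Γ μ GK y - evidenceDensity Γ μ G y
      ≤ evidenceDensity Γ μ GK y *
        Real.log (evidenceDensity Γ μ GK y / evidenceDensity Γ μ G y) := by
    intro y
    have hp := hρK_pos y
    have hq := hρ_pos y
    set p := evidenceDensity Γ μ GK y
    set q := evidenceDensity Γ μ G y
    have hs : 0 < p / q := by positivity
    have h1 : 1 - (p/q)⁻¹ ≤ Real.log (p/q) := by
      have h := Real.log_le_sub_one_of_pos (inv_pos.mpr hs)
      rw [Real.log_inv] at h
      linarith
    have h2 : (p/q)⁻¹ = q / p := by rw [inv_div]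
    have h3 : p * (1 - q / p) = p - q := by field_simp
    calc p - q = p * (1 - q / p) := h3.symm
      _ ≤ p * Real.log (p / q) := by
          refine mul_le_mul_of_nonneg_left ?_ hp.le
          rw [← h2]; exact h1
  have hKL_int : Integrable (fun y => evidenceDensity Γ μ GK y *
      Real.log (evidenceDensity Γ μ GK y / evidenceDensity Γ μ G y)) volume := by
    refine Integrable.mono'
      (g := fun y => |∫ x, φ x y * L x y ∂μ| +
        |evidenceDensity Γ μ GK y - evidenceDensity Γ μ G y|)
      (hR_int.abs.add (hρK_int.sub hρ_int).abs)
      ((hρK_m.mul ((hρK_m.div hρ_m).log)).aestronglyMeasurable) ?_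
    refine Filter.Eventually.of_forall fun y => ?_
    rw [Real.norm_eq_abs]
    have hub := hmain_pt y
    have hlb := hlow y
    rw [abs_le]
    constructor
    · have h1 := neg_abs_le (evidenceDensity Γ μ GK y - evidenceDensity Γ μ G y)
      have h3 : (0:ℝ) ≤ |∫ x, φ x y * L x y ∂μ| := abs_nonneg _
      linarith
    · have h2 := le_abs_self (∫ x, φ x y * L x y ∂μ)
      have h3 : (0:ℝ) ≤ |evidenceDensity Γ μ GK y - evidenceDensity Γ μ G y| := abs_nonneg _
      linarith
  -- conclusion
  have hswap : ∫ x, (∫ y, φ x y * L x y) ∂μ = ∫ y, (∫ x, φ x y * L x y ∂μ) :=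
    integral_integral_swap hφL_prod_int
  calc ∫ y, evidenceDensity Γ μ GK y *
        Real.log (evidenceDensity Γ μ GK y / evidenceDensity Γ μ G y)
      ≤ ∫ y, (∫ x, φ x y * L x y ∂μ) := integral_mono hKL_int hR_int hmain_pt
    _ = ∫ x, (∫ y, φ x y * L x y) ∂μ := hswap.symm
    _ = ∫ x, (1/2) * normGammaSq Γ (G x - GK x) ∂μ :=
        integral_congr_ae (Filter.Eventually.of_forall fun x => hA4 x)
    _ = (1 / 2) * ∫ x, normGammaSq Γ (G x - GK x) ∂μ := integral_const_mul _ _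
end

section
/- Let μ be a Borel probability measure on a separable Banach space X and let G₁, G₂ : X → ℝ^d each satisfy Assumption A(L₁, L₂, x₀, R, L₃) with the same constants, with evidence densities π₁ and π₂ respectively. Then there is a finite constant C, depending only on L₁, L₂, L₃, R, x₀, d, Γ and μ (not on the particular maps G₁, G₂), such that ∫_{ℝ^d} π₁(y) log²π₂(y) dy ≤ C. -/
open MeasureTheory Real Matrix

/-- `‖z‖_Γ = sqrt(zᵀ Γ⁻¹ z)`. -/
noncomputable def normGamma {d : ℕ} (Γ : Matrix (Fin d) (Fin d) ℝ) (z : Fin d → ℝ) : ℝ :=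
  Real.sqrt (normGammaSq Γ z)

section Helpers

variable {d : ℕ} {Γ : Matrix (Fin d) (Fin d) ℝ}

lemma ngs_nonneg (hΓ_pd : Γ.PosDef) (z : Fin d → ℝ) : 0 ≤ normGammaSq Γ z := by
  have h := hΓ_pd.inv.posSemidef.re_dotProduct_nonneg z
  simpa [normGammaSq] using h

lemma bilin_symm (hΓ_symm : Γ.IsSymm) (a b : Fin d → ℝ) :
    a ⬝ᵥ (Γ⁻¹ *ᵥ b) = b ⬝ᵥ (Γ⁻¹ *ᵥ a) := by
  have hT : (Γ⁻¹)ᵀ = Γ⁻¹ := by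
    rw [Matrix.transpose_nonsing_inv, hΓ_symm.eq]
  calc a ⬝ᵥ (Γ⁻¹ *ᵥ b) = (a ᵥ* Γ⁻¹) ⬝ᵥ b := Matrix.dotProduct_mulVec a _ b
    _ = ((Γ⁻¹)ᵀ *ᵥ a) ⬝ᵥ b := by rw [Matrix.mulVec_transpose]
    _ = (Γ⁻¹ *ᵥ a) ⬝ᵥ b := by rw [hT]
    _ = b ⬝ᵥ (Γ⁻¹ *ᵥ a) := dotProduct_comm _ b

lemma ngs_add_expand (hΓ_symm : Γ.IsSymm) (a b : Fin d → ℝ) :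
    normGammaSq Γ (a + b)
      = normGammaSq Γ a + 2 * (a ⬝ᵥ (Γ⁻¹ *ᵥ b)) + normGammaSq Γ b := by
  simp only [normGammaSq, Matrix.mulVec_add, dotProduct_add, add_dotProduct]
  rw [bilin_symm hΓ_symm b a]
  ring

lemma ngs_smul (c : ℝ) (z : Fin d → ℝ) :
    normGammaSq Γ (c • z) = c ^ 2 * normGammaSq Γ z := by
  simp only [normGammaSq, Matrix.mulVec_smul, smul_dotProduct, dotProduct_smul,
    smul_eq_mul]
  ring

lemma cauchy_schwarz_gamma (hΓ_symm : Γ.IsSymm) (hΓ_pd : Γ.PosDef) (a b : Fin d → ℝ) :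
    (a ⬝ᵥ (Γ⁻¹ *ᵥ b)) ^ 2 ≤ normGammaSq Γ a * normGammaSq Γ b := by
  have h : ∀ t : ℝ, 0 ≤ (normGammaSq Γ b) * (t * t) + (2 * (a ⬝ᵥ (Γ⁻¹ *ᵥ b))) * t
      + normGammaSq Γ a := by
    intro t
    have h0 : 0 ≤ normGammaSq Γ (a + t • b) := ngs_nonneg hΓ_pd _
    rw [ngs_add_expand hΓ_symm] at h0
    have hsm : normGammaSq Γ (t • b) = t ^ 2 * normGammaSq Γ b := ngs_smul t b
    have hb : a ⬝ᵥ (Γ⁻¹ *ᵥ (t • b)) = t * (a ⬝ᵥ (Γ⁻¹ *ᵥ b)) := by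
      simp [Matrix.mulVec_smul]
    rw [hsm, hb] at h0
    nlinarith [h0]
  have hd := discrim_le_zero h
  rw [discrim] at hd
  nlinarith [hd]

lemma normGamma_nonneg (z : Fin d → ℝ) : 0 ≤ normGamma Γ z := Real.sqrt_nonneg _

lemma normGamma_sq_eq (hΓ_pd : Γ.PosDef) (z : Fin d → ℝ) :
    normGamma Γ z ^ 2 = normGammaSq Γ z := Real.sq_sqrt (ngs_nonneg hΓ_pd z)

lemma normGamma_triangle (hΓ_symm : Γ.IsSymm) (hΓ_pd : Γ.PosDef) (a b : Fin d → ℝ) :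
    normGamma Γ (a + b) ≤ normGamma Γ a + normGamma Γ b := by
  have hcs := cauchy_schwarz_gamma hΓ_symm hΓ_pd a b
  have hqa := ngs_nonneg hΓ_pd a
  have hqb := ngs_nonneg hΓ_pd b
  have hB : a ⬝ᵥ (Γ⁻¹ *ᵥ b) ≤ normGamma Γ a * normGamma Γ b := by
    have h1 : (normGamma Γ a * normGamma Γ b) ^ 2 = normGammaSq Γ a * normGammaSq Γ b := by
      rw [mul_pow, normGamma_sq_eq hΓ_pd, normGamma_sq_eq hΓ_pd]
    have h2 : |a ⬝ᵥ (Γ⁻¹ *ᵥ b)| ≤ normGamma Γ a * normGamma Γ b :=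
      abs_le_of_sq_le_sq (by rw [h1]; exact hcs)
        (mul_nonneg (normGamma_nonneg a) (normGamma_nonneg b))
    exact (le_abs_self _).trans h2
  have key : normGammaSq Γ (a + b) ≤ (normGamma Γ a + normGamma Γ b) ^ 2 := by
    rw [ngs_add_expand hΓ_symm]
    have := normGamma_sq_eq hΓ_pd a
    have := normGamma_sq_eq hΓ_pd b
    nlinarith [hB]
  calc normGamma Γ (a + b) = Real.sqrt (normGammaSq Γ (a + b)) := rfl
    _ ≤ Real.sqrt ((normGamma Γ a + normGamma Γ b) ^ 2) := Real.sqrt_le_sqrt key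
    _ = normGamma Γ a + normGamma Γ b := by
        rw [Real.sqrt_sq (add_nonneg (normGamma_nonneg a) (normGamma_nonneg b))]

lemma normGamma_neg (z : Fin d → ℝ) : normGamma Γ (-z) = normGamma Γ z := by
  unfold normGamma normGammaSq
  simp [Matrix.mulVec_neg]

lemma normGamma_rev (hΓ_symm : Γ.IsSymm) (hΓ_pd : Γ.PosDef) (a b : Fin d → ℝ) :
    normGamma Γ b - normGamma Γ a ≤ normGamma Γ (a - b) := by
  have h := normGamma_triangle hΓ_symm hΓ_pd (b - a) a
  simp only [sub_add_cancel] at h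
  have : normGamma Γ (b - a) = normGamma Γ (a - b) := by
    rw [← normGamma_neg (z := a - b)]; congr 1; abel
  linarith [h, this]

end Helpers

section Helpers2

variable {d : ℕ} {Γ : Matrix (Fin d) (Fin d) ℝ}

lemma continuous_ngs (Γ : Matrix (Fin d) (Fin d) ℝ) : Continuous (normGammaSq Γ) := by
  unfold normGammaSq
  simp only [dotProduct, Matrix.mulVec, dotProduct]
  exact continuous_finset_sum _ fun i _ =>
    (continuous_apply i).mul (continuous_finset_sum _ fun j _ =>
      (continuous_const.mul (continuous_apply j)))

lemma ngs_lower (hΓ_pd : Γ.PosDef) :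
    ∃ ε : ℝ, 0 < ε ∧ ∀ z : Fin d → ℝ, ε * (∑ i, z i ^ 2) ≤ normGammaSq Γ z := by
  rcases Nat.eq_zero_or_pos d with hd | hd
  · refine ⟨1, one_pos, fun z => ?_⟩
    subst hd
    simp [normGammaSq, dotProduct]
  · have hne : (Metric.sphere (0 : Fin d → ℝ) 1).Nonempty := by
      have : Nonempty (Fin d) := ⟨⟨0, hd⟩⟩
      exact ⟨fun _ => 1, by simp⟩
    obtain ⟨z₀, hz₀, hmin⟩ := (isCompact_sphere (0 : Fin d → ℝ) 1).exists_isMinOn hne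
      (continuous_ngs Γ).continuousOn
    have hz₀ne : z₀ ≠ 0 := by
      intro h
      rw [Metric.mem_sphere, dist_zero_right, h, norm_zero] at hz₀
      norm_num at hz₀
    have hε₀ : 0 < normGammaSq Γ z₀ := by
      have := hΓ_pd.inv.dotProduct_mulVec_pos hz₀ne
      simpa [normGammaSq] using this
    refine ⟨normGammaSq Γ z₀ / d, by positivity, fun z => ?_⟩
    rcases eq_or_ne z 0 with rfl | hz
    · simp [normGammaSq]
    · have hnz : (0:ℝ) < ‖z‖ := norm_pos_iff.mpr hz
      have hmem : ‖z‖⁻¹ • z ∈ Metric.sphere (0 : Fin d → ℝ) 1 := by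
        simp [norm_smul, abs_of_pos (inv_pos.mpr hnz), inv_mul_cancel₀ hnz.ne']
      have h1 : normGammaSq Γ z₀ ≤ normGammaSq Γ (‖z‖⁻¹ • z) := hmin hmem
      rw [ngs_smul] at h1
      have h2 : normGammaSq Γ z₀ * ‖z‖ ^ 2 ≤ normGammaSq Γ z := by
        have := mul_le_mul_of_nonneg_right h1 (le_of_lt (by positivity : (0:ℝ) < ‖z‖ ^ 2))
        calc normGammaSq Γ z₀ * ‖z‖ ^ 2 ≤ (‖z‖⁻¹) ^ 2 * normGammaSq Γ z * ‖z‖ ^ 2 := this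
          _ = normGammaSq Γ z := by field_simp
      have h3 : (∑ i, z i ^ 2) ≤ d * ‖z‖ ^ 2 := by
        calc (∑ i, z i ^ 2) ≤ ∑ _i : Fin d, ‖z‖ ^ 2 := by
              refine Finset.sum_le_sum fun i _ => ?_
              have := norm_le_pi_norm z i
              have h0 : |z i| ≤ ‖z‖ := by simpa using this
              nlinarith [abs_nonneg (z i), le_abs_self (z i), neg_abs_le (z i)]
          _ = d * ‖z‖ ^ 2 := by simp [Finset.sum_const, nsmul_eq_mul]
      calc normGammaSq Γ z₀ / d * (∑ i, z i ^ 2)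
          ≤ normGammaSq Γ z₀ / d * (d * ‖z‖ ^ 2) := by
            apply mul_le_mul_of_nonneg_left h3 (by positivity)
        _ = normGammaSq Γ z₀ * ‖z‖ ^ 2 := by
            field_simp
        _ ≤ normGammaSq Γ z := h2

lemma integrable_rexp_neg_mul_sum (b : ℝ) (hb : 0 < b) :
    Integrable (fun v : Fin d → ℝ => Real.exp (-(b * ∑ i, v i ^ 2))) := by
  have h := (GaussianFourier.integrable_cexp_neg_mul_sum_add (b := (b:ℂ)) (ι := Fin d)
    (by simpa using hb) (fun _ => 0)).norm
  refine h.congr (Filter.Eventually.of_forall fun v => ?_)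
  show ‖Complex.exp _‖ = _
  rw [Complex.norm_exp]
  congr 1
  rw [show (-(b:ℂ) * ∑ i, ((v i : ℂ)) ^ 2 + ∑ i : Fin d, 0 * ((v i : ℂ))
      = ((-(b * ∑ i, v i ^ 2) : ℝ) : ℂ)) by push_cast; simp]
  exact Complex.ofReal_re _

lemma integrable_gauss_gamma (hΓ_pd : Γ.PosDef) (c : ℝ) (hc : 0 < c) :
    Integrable (fun y : Fin d → ℝ => Real.exp (-(c * normGammaSq Γ y))) := by
  obtain ⟨ε, hε, hεle⟩ := ngs_lower hΓ_pd
  refine Integrable.mono' (integrable_rexp_neg_mul_sum (c * ε) (by positivity)) ?_ ?_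
  · exact (Real.continuous_exp.comp (continuous_const.mul (continuous_ngs Γ)).neg).aestronglyMeasurable
  · refine Filter.Eventually.of_forall fun y => ?_
    rw [Real.norm_eq_abs, abs_of_pos (Real.exp_pos _)]
    apply Real.exp_le_exp.mpr
    have := hεle y
    nlinarith [this]

end Helpers2

section Helpers3

variable {d : ℕ} {Γ : Matrix (Fin d) (Fin d) ℝ} {X : Type*} [MeasurableSpace X]
  {μ : Measure X} {G : X → (Fin d → ℝ)} {y : Fin d → ℝ}

lemma M_pos (hΓ_pd : Γ.PosDef) : 0 < (Real.sqrt ((2 * Real.pi) ^ d * Γ.det))⁻¹ := by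
  have h1 : (0:ℝ) < (2 * Real.pi) ^ d * Γ.det :=
    mul_pos (pow_pos (by positivity) d) hΓ_pd.det_pos
  exact inv_pos.mpr (Real.sqrt_pos.mpr h1)

lemma gl_nonneg (x : X) : 0 ≤ gaussLikelihood Γ G x y :=
  mul_nonneg (inv_nonneg.mpr (Real.sqrt_nonneg _)) (Real.exp_pos _).le

lemma gl_le (hΓ_pd : Γ.PosDef) (x : X) :
    gaussLikelihood Γ G x y ≤ (Real.sqrt ((2 * Real.pi) ^ d * Γ.det))⁻¹ := by
  unfold gaussLikelihood
  have h1 : Real.exp (-(1 / 2) * normGammaSq Γ (G x - y)) ≤ 1 := by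
    rw [Real.exp_le_one_iff]
    nlinarith [ngs_nonneg hΓ_pd (G x - y)]
  nlinarith [M_pos (d := d) hΓ_pd, h1, Real.exp_pos (-(1 / 2) * normGammaSq Γ (G x - y))]

lemma measurable_gl (hGm : Measurable G) :
    Measurable (fun x => gaussLikelihood Γ G x y) := by
  unfold gaussLikelihood
  apply Measurable.const_mul
  apply Real.measurable_exp.comp
  apply Measurable.const_mul
  exact (continuous_ngs Γ).measurable.comp (hGm.sub measurable_const)

lemma integrable_gl [IsFiniteMeasure μ] (hΓ_pd : Γ.PosDef) (hGm : Measurable G) :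
    Integrable (fun x => gaussLikelihood Γ G x y) μ := by
  refine Integrable.mono' (integrable_const ((Real.sqrt ((2 * Real.pi) ^ d * Γ.det))⁻¹))
    (measurable_gl hGm).aestronglyMeasurable ?_
  exact Filter.Eventually.of_forall fun x => by
    rw [Real.norm_eq_abs, abs_of_nonneg (gl_nonneg x)]
    exact gl_le hΓ_pd x

lemma evidence_nonneg : 0 ≤ evidenceDensity Γ μ G y :=
  integral_nonneg fun x => gl_nonneg x

lemma evidence_le [IsProbabilityMeasure μ] (hΓ_pd : Γ.PosDef) (hGm : Measurable G) :
    evidenceDensity Γ μ G y ≤ (Real.sqrt ((2 * Real.pi) ^ d * Γ.det))⁻¹ := by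
  calc evidenceDensity Γ μ G y
      ≤ ∫ _x, (Real.sqrt ((2 * Real.pi) ^ d * Γ.det))⁻¹ ∂μ :=
        integral_mono (integrable_gl hΓ_pd hGm) (integrable_const _) (fun x => gl_le hΓ_pd x)
    _ = (Real.sqrt ((2 * Real.pi) ^ d * Γ.det))⁻¹ := by
        simp [integral_const]

end Helpers3


private lemma aux_case1 {r L₁ L₃ a u : ℝ} (hL₁ : 0 < L₁) (hu : 0 < u) (hua : u ≤ a)
    (hu1 : u * L₁ = r / 2 - L₃) :
    r ^ 2 ≤ 16 * L₁ ^ 2 * (0:ℝ) ^ 2 + 16 * L₁ ^ 2 * a ^ 2 + 16 * L₃ ^ 2 := by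
  have hr : r = 2 * (u * L₁) + 2 * L₃ := by linarith
  have h2 : u * u ≤ a * a := mul_self_le_mul_self hu.le hua
  have hint1 : L₁ ^ 2 * (u * u) ≤ L₁ ^ 2 * (a * a) :=
    mul_le_mul_of_nonneg_left h2 (sq_nonneg L₁)
  have hr2 : r ^ 2 = 4 * (u * L₁) ^ 2 + 8 * (u * L₁) * L₃ + 4 * L₃ ^ 2 := by rw [hr]; ring
  linarith [hr2, hint1, sq_nonneg (u * L₁ - L₃), mul_nonneg (sq_nonneg L₁) (sq_nonneg a),
    sq_nonneg L₃]

private lemma aux_case2 {r L₁ L₃ a u : ℝ} (hL₁ : 0 < L₁) (ha : 0 ≤ a)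
    (hu1 : u * L₁ = r / 2 - L₃) (hL₃ : 0 < L₃) :
    r ^ 2 ≤ 16 * L₁ ^ 2 * (u - a) ^ 2 + 16 * L₁ ^ 2 * a ^ 2 + 16 * L₃ ^ 2 := by
  have hr : r = 2 * (u * L₁) + 2 * L₃ := by linarith
  have hr2 : r ^ 2 = 4 * (u * L₁) ^ 2 + 8 * (u * L₁) * L₃ + 4 * L₃ ^ 2 := by rw [hr]; ring
  linarith [hr2, sq_nonneg (u * L₁ - 2 * L₁ * a), sq_nonneg (u * L₁ - L₃), sq_nonneg L₃]

set_option maxHeartbeats 1000000 in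
/-- There is a finite constant `C`, depending only on the constants in
Assumption A, on `d`, `Γ` and `μ` (but not on the particular forward maps), such that
`∫ π₁(y) log²π₂(y) dy ≤ C` whenever `π₁, π₂` are evidence densities of maps `G₁, G₂`
each satisfying Assumption A with those constants. -/
theorem evidence_squared_log_moment_uniform_bound {d : ℕ}
    {X : Type*} [NormedAddCommGroup X] [NormedSpace ℝ X] [CompleteSpace X]
    [TopologicalSpace.SeparableSpace X] [MeasurableSpace X] [BorelSpace X]
    (μ : Measure X) [IsProbabilityMeasure μ]
    (Γ : Matrix (Fin d) (Fin d) ℝ) (hΓ_symm : Γ.IsSymm) (hΓ_pd : Γ.PosDef)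
    (L₁ L₂ R L₃ : ℝ) (x₀ : X)
    (hL₁ : 0 < L₁) (hL₂ : 0 < L₂) (hR : 0 < R) (hL₃ : 0 < L₃)
    (hSubGauss : Integrable (fun x => Real.exp (L₂ * ‖x‖ ^ 2)) μ)
    (hBall : 0 < μ (Metric.ball x₀ R)) :
    ∃ C : ℝ, ∀ G₁ G₂ : X → (Fin d → ℝ),
      Measurable G₁ → Measurable G₂ →
      (∀ x x' : X, normGamma Γ (G₁ x - G₁ x') ≤ L₁ * ‖x - x'‖) →
      (∀ x x' : X, normGamma Γ (G₂ x - G₂ x') ≤ L₁ * ‖x - x'‖) →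
      (∀ x ∈ Metric.ball x₀ R, normGamma Γ (G₁ x) < L₃) →
      (∀ x ∈ Metric.ball x₀ R, normGamma Γ (G₂ x) < L₃) →
      ∫ y, evidenceDensity Γ μ G₁ y * (Real.log (evidenceDensity Γ μ G₂ y)) ^ 2 ≤ C := by
  obtain ⟨M, hMdef⟩ : ∃ x : ℝ, x = (Real.sqrt ((2 * Real.pi) ^ d * Γ.det))⁻¹ := ⟨_, rfl⟩
  have hM : 0 < M := by rw [hMdef]; exact M_pos hΓ_pd
  obtain ⟨m, hmdef⟩ : ∃ x : ℝ, x = (μ (Metric.ball x₀ R)).toReal := ⟨_, rfl⟩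
  have hm : 0 < m := by rw [hmdef]; exact ENNReal.toReal_pos hBall.ne' (measure_ne_top μ _)
  have hm1 : m ≤ 1 := by
    rw [hmdef]
    have h1 : μ (Metric.ball x₀ R) ≤ 1 := prob_le_one
    have := ENNReal.toReal_mono (by norm_num) h1
    simpa using this
  obtain ⟨I, hIdef⟩ : ∃ x : ℝ, x = ∫ x, Real.exp (L₂ * ‖x‖ ^ 2) ∂μ := ⟨_, rfl⟩
  have hI1 : (1:ℝ) ≤ I := by
    rw [hIdef]
    have h1 : ∫ (_ : X), (1:ℝ) ∂μ ≤ ∫ x, Real.exp (L₂ * ‖x‖ ^ 2) ∂μ :=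
      integral_mono (integrable_const 1) hSubGauss
        (fun x => Real.one_le_exp (by positivity))
    simpa using h1
  obtain ⟨γ, hγdef⟩ : ∃ x : ℝ, x = min (1/8) (L₂ / (16 * L₁ ^ 2)) := ⟨_, rfl⟩
  have hγ : 0 < γ := by rw [hγdef]; exact lt_min (by norm_num) (by positivity)
  have hγ8 : γ ≤ 1/8 := by rw [hγdef]; exact min_le_left _ _
  have hγL : γ ≤ L₂ / (16 * L₁ ^ 2) := by rw [hγdef]; exact min_le_right _ _
  obtain ⟨A, hAdef⟩ : ∃ x : ℝ, x = |Real.log M| - Real.log m + L₃ ^ 2 := ⟨_, rfl⟩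
  have hlm0 : Real.log m ≤ 0 := Real.log_nonpos hm.le hm1
  have hA0 : 0 ≤ A := by
    rw [hAdef]
    have := abs_nonneg (Real.log M); nlinarith [sq_nonneg L₃]
  obtain ⟨E₀, hE₀def⟩ : ∃ x : ℝ, x = Real.exp (L₂ * ‖x₀‖ ^ 2 + L₂ * L₃ ^ 2 / L₁ ^ 2) := ⟨_, rfl⟩
  have hE₀ : 0 < E₀ := by rw [hE₀def]; exact Real.exp_pos _
  obtain ⟨D, hDdef⟩ : ∃ x : ℝ, x = M * (1 + I * E₀) * Real.exp (γ * (2 * L₃) ^ 2) := ⟨_, rfl⟩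
  have hIE : 0 < 1 + I * E₀ := by linarith [mul_pos (lt_of_lt_of_le one_pos hI1) hE₀]
  have hD : 0 < D := by rw [hDdef]; exact mul_pos (mul_pos hM hIE) (Real.exp_pos _)
  obtain ⟨D', hD'def⟩ : ∃ x : ℝ, x = D * (2 * A ^ 2 + 32 / γ ^ 2) := ⟨_, rfl⟩
  have hD' : 0 < D' := by rw [hD'def]; exact mul_pos hD (by positivity)
  refine ⟨∫ y : Fin d → ℝ, D' * Real.exp (-(γ / 2 * normGammaSq Γ y)), ?_⟩
  intro G₁ G₂ hG₁m hG₂m hLip₁ hLip₂ hB₁ hB₂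
  have hgint : Integrable (fun y : Fin d → ℝ => D' * Real.exp (-(γ / 2 * normGammaSq Γ y))) :=
    (integrable_gauss_gamma hΓ_pd (γ / 2) (by positivity)).const_mul D'
  refine integral_mono_of_nonneg ?_ hgint ?_
  · exact Filter.Eventually.of_forall fun y =>
      mul_nonneg evidence_nonneg (sq_nonneg _)
  refine Filter.Eventually.of_forall fun y => ?_
  obtain ⟨r, hrdef⟩ : ∃ x : ℝ, x = normGamma Γ y := ⟨_, rfl⟩
  have hr0 : 0 ≤ r := by rw [hrdef]; exact normGamma_nonneg y
  have hr2 : r ^ 2 = normGammaSq Γ y := by rw [hrdef]; exact normGamma_sq_eq hΓ_pd y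
  -- upper bound for π₂
  have hπ₂le : evidenceDensity Γ μ G₂ y ≤ M := by rw [hMdef]; exact evidence_le hΓ_pd hG₂m
  -- lower bound for π₂
  have hlow : M * Real.exp (-(1 / 2) * (L₃ + r) ^ 2) * m ≤ evidenceDensity Γ μ G₂ y := by
    have hball : ∀ x ∈ Metric.ball x₀ R,
        M * Real.exp (-(1 / 2) * (L₃ + r) ^ 2) ≤ gaussLikelihood Γ G₂ x y := by
      intro x hx
      have h1 : normGamma Γ (G₂ x - y) ≤ L₃ + r := by
        have ht := normGamma_triangle hΓ_symm hΓ_pd (G₂ x) (-y)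
        rw [normGamma_neg] at ht
        have h2 := (hB₂ x hx).le
        calc normGamma Γ (G₂ x - y) = normGamma Γ (G₂ x + -y) := by rw [sub_eq_add_neg]
          _ ≤ normGamma Γ (G₂ x) + normGamma Γ y := ht
          _ ≤ L₃ + r := add_le_add h2 hrdef.symm.le
      have h2 : normGammaSq Γ (G₂ x - y) ≤ (L₃ + r) ^ 2 := by
        rw [← normGamma_sq_eq hΓ_pd]
        exact pow_le_pow_left₀ (normGamma_nonneg _) h1 2
      have h3 : Real.exp (-(1 / 2) * (L₃ + r) ^ 2)
          ≤ Real.exp (-(1 / 2) * normGammaSq Γ (G₂ x - y)) := by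
        apply Real.exp_le_exp.mpr; nlinarith
      unfold gaussLikelihood
      rw [← hMdef]
      exact mul_le_mul_of_nonneg_left h3 hM.le
    calc M * Real.exp (-(1 / 2) * (L₃ + r) ^ 2) * m
        ≤ ∫ x in Metric.ball x₀ R, gaussLikelihood Γ G₂ x y ∂μ := by
          rw [hmdef]
          exact setIntegral_ge_of_const_le_real measurableSet_ball (measure_ne_top μ _) hball
            (integrable_gl hΓ_pd hG₂m).integrableOn
      _ ≤ evidenceDensity Γ μ G₂ y :=
          setIntegral_le_integral (integrable_gl hΓ_pd hG₂m)
            (Filter.Eventually.of_forall fun x => gl_nonneg x)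
  have hπ₂pos : 0 < evidenceDensity Γ μ G₂ y :=
    lt_of_lt_of_le (by positivity) hlow
  -- log bound
  have hlog : |Real.log (evidenceDensity Γ μ G₂ y)| ≤ A + r ^ 2 := by
    rw [abs_le]
    constructor
    · have h1 := Real.log_le_log (by positivity :
        (0:ℝ) < M * Real.exp (-(1 / 2) * (L₃ + r) ^ 2) * m) hlow
      rw [Real.log_mul (by positivity) hm.ne', Real.log_mul hM.ne' (Real.exp_ne_zero _),
        Real.log_exp] at h1
      have habs : -|Real.log M| ≤ Real.log M := neg_abs_le _
      linarith [h1, habs, hAdef, sq_nonneg (L₃ - r)]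
    · have h2 := Real.log_le_log hπ₂pos hπ₂le
      linarith [h2, le_abs_self (Real.log M), hAdef, hlm0, sq_nonneg L₃, sq_nonneg r]
  -- bound on π₁
  have hπ₁ : evidenceDensity Γ μ G₁ y ≤ D * Real.exp (-(γ * r ^ 2)) := by
    rcases le_or_gt r (2 * L₃) with hrs | hrb
    · have h1 : evidenceDensity Γ μ G₁ y ≤ M := by rw [hMdef]; exact evidence_le hΓ_pd hG₁m
      have h3 : (1:ℝ) ≤ Real.exp (γ * (2 * L₃) ^ 2) * Real.exp (-(γ * r ^ 2)) := by
        rw [← Real.exp_add]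
        apply Real.one_le_exp
        have h6 : r ^ 2 ≤ (2 * L₃) ^ 2 := by linarith [mul_self_le_mul_self hr0 hrs, sq_nonneg r]
        linarith [mul_le_mul_of_nonneg_left h6 hγ.le]
      calc evidenceDensity Γ μ G₁ y ≤ M := h1
        _ ≤ M * ((1 + I * E₀) * (Real.exp (γ * (2 * L₃) ^ 2) * Real.exp (-(γ * r ^ 2)))) := by
            have hIE1 : (1:ℝ) ≤ 1 + I * E₀ := by
              linarith [mul_pos (lt_of_lt_of_le one_pos hI1) hE₀]
            have ht := mul_le_mul hIE1 h3 zero_le_one (by linarith)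
            rw [one_mul] at ht
            linarith [mul_le_mul_of_nonneg_left ht hM.le]
        _ = D * Real.exp (-(γ * r ^ 2)) := by rw [hDdef]; ring
    · -- large r
      obtain ⟨u, hudef⟩ : ∃ x : ℝ, x = (r / 2 - L₃) / L₁ := ⟨_, rfl⟩
      have hu : 0 < u := by rw [hudef]; exact div_pos (by linarith) hL₁
      have hu1 : u * L₁ = r / 2 - L₃ := by rw [hudef]; field_simp
      obtain ⟨S, hSdef⟩ : ∃ x : Set X, x = Metric.closedBall x₀ u := ⟨_, rfl⟩
      have hSm : MeasurableSet S := by rw [hSdef]; exact Metric.isClosed_closedBall.measurableSet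
      have hsplit : evidenceDensity Γ μ G₁ y
          = (∫ x in S, gaussLikelihood Γ G₁ x y ∂μ)
            + ∫ x in Sᶜ, gaussLikelihood Γ G₁ x y ∂μ :=
        (integral_add_compl hSm (integrable_gl hΓ_pd hG₁m)).symm
      -- bound on S
      have hS1 : (∫ x in S, gaussLikelihood Γ G₁ x y ∂μ)
          ≤ M * Real.exp (-(r ^ 2 / 8)) := by
        have hb : ∀ x ∈ S, gaussLikelihood Γ G₁ x y ≤ M * Real.exp (-(r ^ 2 / 8)) := by
          intro x hx
          have hdist : ‖x - x₀‖ ≤ u := by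
            rw [hSdef] at hx
            have := Metric.mem_closedBall.mp hx
            rwa [dist_eq_norm] at this
          have hGx : normGamma Γ (G₁ x) ≤ r / 2 := by
            have ht := normGamma_triangle hΓ_symm hΓ_pd (G₁ x - G₁ x₀) (G₁ x₀)
            rw [sub_add_cancel] at ht
            have hlip := hLip₁ x x₀
            have hx₀ := (hB₁ x₀ (Metric.mem_ball_self hR)).le
            have h5 : L₁ * ‖x - x₀‖ ≤ L₁ * u := mul_le_mul_of_nonneg_left hdist hL₁.le
            have h5' : L₁ * u = r / 2 - L₃ := by rw [mul_comm]; exact hu1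
            linarith [ht, hlip, hx₀, h5, h5']
          have hrev : r / 2 ≤ normGamma Γ (G₁ x - y) := by
            have := normGamma_rev hΓ_symm hΓ_pd (G₁ x) y
            linarith
          have hq : r ^ 2 / 4 ≤ normGammaSq Γ (G₁ x - y) := by
            rw [← normGamma_sq_eq hΓ_pd]
            linarith [mul_self_le_mul_self (by linarith : (0:ℝ) ≤ r / 2) hrev, sq_nonneg r]
          have hexp : Real.exp (-(1 / 2) * normGammaSq Γ (G₁ x - y))
              ≤ Real.exp (-(r ^ 2 / 8)) := by
            apply Real.exp_le_exp.mpr; linarith [hq]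
          unfold gaussLikelihood
          rw [← hMdef]
          exact mul_le_mul_of_nonneg_left hexp hM.le
        calc (∫ x in S, gaussLikelihood Γ G₁ x y ∂μ)
            ≤ ∫ _x in S, M * Real.exp (-(r ^ 2 / 8)) ∂μ :=
              setIntegral_mono_on (integrable_gl hΓ_pd hG₁m).integrableOn
                ((integrableOn_const_iff).mpr (Or.inr (measure_lt_top μ S))) hSm hb
          _ = (μ S).toReal • (M * Real.exp (-(r ^ 2 / 8))) := setIntegral_const _
          _ ≤ M * Real.exp (-(r ^ 2 / 8)) := by
              have h1 : (μ S).toReal ≤ 1 := by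
                have hle : μ S ≤ 1 := prob_le_one
                have := ENNReal.toReal_mono (by norm_num) hle
                simpa using this
              have h2 : (0:ℝ) ≤ M * Real.exp (-(r ^ 2 / 8)) := by positivity
              rw [smul_eq_mul]
              exact mul_le_of_le_one_left h2 h1
      -- tail bound
      obtain ⟨v, hvdef⟩ : ∃ x : ℝ, x = max (u - ‖x₀‖) 0 := ⟨_, rfl⟩
      have hv0 : 0 ≤ v := by rw [hvdef]; exact le_max_right _ _
      have htail : (μ Sᶜ).toReal ≤ I * Real.exp (-(L₂ * v ^ 2)) := by
        have hcomp : ∀ x ∈ Sᶜ, Real.exp (L₂ * v ^ 2) ≤ Real.exp (L₂ * ‖x‖ ^ 2) := by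
          intro x hx
          have hd' : u < dist x x₀ := by
            by_contra h
            rw [hSdef] at hx
            exact hx (Metric.mem_closedBall.mpr (not_lt.mp h))
          rw [dist_eq_norm] at hd'
          have hxn : v ≤ ‖x‖ := by
            rw [hvdef]
            refine max_le ?_ (norm_nonneg x)
            have := norm_sub_le x x₀
            linarith [this, hd']
          apply Real.exp_le_exp.mpr
          have h9 := mul_self_le_mul_self hv0 hxn
          linarith [mul_le_mul_of_nonneg_left h9 hL₂.le]
        have h1 : Real.exp (L₂ * v ^ 2) * (μ Sᶜ).toReal
            ≤ ∫ x in Sᶜ, Real.exp (L₂ * ‖x‖ ^ 2) ∂μ :=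
          setIntegral_ge_of_const_le_real hSm.compl (measure_ne_top μ _) hcomp
            hSubGauss.integrableOn
        have h2 : (∫ x in Sᶜ, Real.exp (L₂ * ‖x‖ ^ 2) ∂μ) ≤ I := by
          rw [hIdef]
          exact setIntegral_le_integral hSubGauss
            (Filter.Eventually.of_forall fun x => (Real.exp_pos _).le)
        have h3 : (μ Sᶜ).toReal ≤ I / Real.exp (L₂ * v ^ 2) := by
          rw [le_div_iff₀ (Real.exp_pos _)]
          linarith [h1, h2]
        rwa [div_eq_mul_inv, ← Real.exp_neg] at h3
      -- exponent comparison on the tail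
      have hkey3 : r ^ 2 ≤ 16 * L₁ ^ 2 * v ^ 2 + 16 * L₁ ^ 2 * ‖x₀‖ ^ 2 + 16 * L₃ ^ 2 := by
        rcases le_or_gt (u - ‖x₀‖) 0 with hc | hc
        · have hveq : v = 0 := by rw [hvdef]; exact max_eq_right hc
          rw [hveq]
          exact aux_case1 hL₁ hu (by linarith) hu1
        · have hveq : v = u - ‖x₀‖ := by rw [hvdef]; exact max_eq_left hc.le
          rw [hveq]
          exact aux_case2 hL₁ (norm_nonneg x₀) hu1 hL₃
      have hkey' : γ * r ^ 2 ≤ L₂ * v ^ 2 + (L₂ * ‖x₀‖ ^ 2 + L₂ * L₃ ^ 2 / L₁ ^ 2) := by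
        have hb1 : γ * r ^ 2 ≤ L₂ / (16 * L₁ ^ 2) * r ^ 2 :=
          mul_le_mul_of_nonneg_right hγL (sq_nonneg r)
        have hb2 : L₂ / (16 * L₁ ^ 2) * r ^ 2
            ≤ L₂ / (16 * L₁ ^ 2) * (16 * L₁ ^ 2 * v ^ 2 + 16 * L₁ ^ 2 * ‖x₀‖ ^ 2 + 16 * L₃ ^ 2) :=
          mul_le_mul_of_nonneg_left hkey3 (by positivity)
        have heq : L₂ / (16 * L₁ ^ 2) * (16 * L₁ ^ 2 * v ^ 2 + 16 * L₁ ^ 2 * ‖x₀‖ ^ 2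
              + 16 * L₃ ^ 2)
            = L₂ * v ^ 2 + (L₂ * ‖x₀‖ ^ 2 + L₂ * L₃ ^ 2 / L₁ ^ 2) := by
          field_simp
          ring
        linarith [hb1, hb2, heq]
      have hkey2 : Real.exp (-(L₂ * v ^ 2)) ≤ E₀ * Real.exp (-(γ * r ^ 2)) := by
        rw [hE₀def, ← Real.exp_add]
        apply Real.exp_le_exp.mpr
        linarith [hkey']
      -- bound on Sᶜ
      have hS2 : (∫ x in Sᶜ, gaussLikelihood Γ G₁ x y ∂μ)
          ≤ M * ((μ Sᶜ).toReal) := by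
        calc (∫ x in Sᶜ, gaussLikelihood Γ G₁ x y ∂μ)
            ≤ ∫ _x in Sᶜ, M ∂μ := by
              rw [hMdef]
              exact setIntegral_mono_on (integrable_gl hΓ_pd hG₁m).integrableOn
                ((integrableOn_const_iff).mpr (Or.inr (measure_lt_top μ _))) hSm.compl
                (fun x _ => gl_le hΓ_pd x)
          _ = (μ Sᶜ).toReal • M := setIntegral_const _
          _ = M * ((μ Sᶜ).toReal) := by rw [smul_eq_mul]; ring
      -- combine
      have hexp1 : Real.exp (-(r ^ 2 / 8)) ≤ Real.exp (-(γ * r ^ 2)) := by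
        apply Real.exp_le_exp.mpr
        linarith [mul_le_mul_of_nonneg_right hγ8 (sq_nonneg r)]
      have hfin : evidenceDensity Γ μ G₁ y
          ≤ M * (1 + I * E₀) * Real.exp (-(γ * r ^ 2)) := by
        rw [hsplit]
        have t1 : (∫ x in S, gaussLikelihood Γ G₁ x y ∂μ) ≤ M * Real.exp (-(γ * r ^ 2)) :=
          hS1.trans (mul_le_mul_of_nonneg_left hexp1 hM.le)
        have t2 : (∫ x in Sᶜ, gaussLikelihood Γ G₁ x y ∂μ)
            ≤ M * (I * E₀ * Real.exp (-(γ * r ^ 2))) := by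
          refine hS2.trans ?_
          have h4 : (μ Sᶜ).toReal ≤ I * (E₀ * Real.exp (-(γ * r ^ 2))) := by
            refine htail.trans ?_
            exact mul_le_mul_of_nonneg_left hkey2 (by linarith)
          linarith [mul_le_mul_of_nonneg_left h4 hM.le]
        linarith [t1, t2]
      refine hfin.trans ?_
      rw [hDdef]
      have h5 : (1:ℝ) ≤ Real.exp (γ * (2 * L₃) ^ 2) := Real.one_le_exp (by positivity)
      linarith [mul_le_mul_of_nonneg_left h5
        (mul_pos (mul_pos hM hIE) (Real.exp_pos (-(γ * r ^ 2)))).le]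
  -- final pointwise bound
  have hsq : (Real.log (evidenceDensity Γ μ G₂ y)) ^ 2 ≤ (A + r ^ 2) ^ 2 := by
    have h := abs_le.mp hlog
    exact sq_le_sq' h.1 h.2
  have step1 : evidenceDensity Γ μ G₁ y * (Real.log (evidenceDensity Γ μ G₂ y)) ^ 2
      ≤ (D * Real.exp (-(γ * r ^ 2))) * (A + r ^ 2) ^ 2 :=
    mul_le_mul hπ₁ hsq (sq_nonneg _) (by positivity)
  have hr4 : r ^ 4 ≤ 16 / γ ^ 2 * Real.exp (γ / 2 * r ^ 2) := by
    obtain ⟨w, hwdef⟩ : ∃ x : ℝ, x = γ / 2 * r ^ 2 := ⟨_, rfl⟩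
    rw [← hwdef]
    have hw0 : 0 ≤ w := by rw [hwdef]; positivity
    have h1 : w / 2 + 1 ≤ Real.exp (w / 2) := Real.add_one_le_exp _
    have h2 : (w / 2 + 1) ^ 2 ≤ Real.exp w := by
      have h3 : Real.exp (w / 2) * Real.exp (w / 2) = Real.exp w := by
        rw [← Real.exp_add]; ring_nf
      have h3' := mul_self_le_mul_self (by linarith : (0:ℝ) ≤ w / 2 + 1) h1
      linarith [h3, h3', sq_nonneg (w / 2 + 1)]
    have h4 : w ^ 2 ≤ 4 * Real.exp w := by linarith [h2, hw0, sq_nonneg w]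
    have h5 : w ^ 2 = γ ^ 2 / 4 * r ^ 4 := by rw [hwdef]; ring
    have h6 : r ^ 4 * γ ^ 2 ≤ 16 * Real.exp w := by linarith [h4, h5]
    rw [div_mul_eq_mul_div, le_div_iff₀ (by positivity : (0:ℝ) < γ ^ 2)]
    linarith [h6]
  have hsum : (A + r ^ 2) ^ 2 ≤ (2 * A ^ 2 + 32 / γ ^ 2) * Real.exp (γ / 2 * r ^ 2) := by
    have h1 : (1:ℝ) ≤ Real.exp (γ / 2 * r ^ 2) := Real.one_le_exp (by positivity)
    have h2 : (A + r ^ 2) ^ 2 ≤ 2 * A ^ 2 + 2 * r ^ 4 := by linarith [sq_nonneg (A - r ^ 2)]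
    have h3 := mul_le_mul_of_nonneg_left h1 (by positivity : (0:ℝ) ≤ 2 * A ^ 2)
    have expand : (2 * A ^ 2 + 32 / γ ^ 2) * Real.exp (γ / 2 * r ^ 2)
        = 2 * A ^ 2 * Real.exp (γ / 2 * r ^ 2)
          + 2 * (16 / γ ^ 2 * Real.exp (γ / 2 * r ^ 2)) := by ring
    rw [expand]
    linarith [hr4, h2, h3]
  have step2 : (D * Real.exp (-(γ * r ^ 2))) * (A + r ^ 2) ^ 2
      ≤ D' * Real.exp (-(γ / 2 * normGammaSq Γ y)) := by
    have heq : Real.exp (-(γ * r ^ 2)) * Real.exp (γ / 2 * r ^ 2)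
        = Real.exp (-(γ / 2 * normGammaSq Γ y)) := by
      rw [← Real.exp_add, ← hr2]; ring_nf
    calc (D * Real.exp (-(γ * r ^ 2))) * (A + r ^ 2) ^ 2
        ≤ (D * Real.exp (-(γ * r ^ 2))) * ((2 * A ^ 2 + 32 / γ ^ 2)
            * Real.exp (γ / 2 * r ^ 2)) := by
          apply mul_le_mul_of_nonneg_left hsum (by positivity)
      _ = D' * (Real.exp (-(γ * r ^ 2)) * Real.exp (γ / 2 * r ^ 2)) := by
          rw [hD'def]; ring
      _ = D' * Real.exp (-(γ / 2 * normGammaSq Γ y)) := by rw [heq]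
  exact step1.trans step2
end

section
/- Let μ be a Borel probability measure on a separable Banach space X and let G_K : X → ℝ^d satisfy Assumption A(L₁, L₂, x₀, R, L₃). Let X₁,…,X_M be i.i.d. with law μ and let π_M^K(y) = (1/M)∑_{m=1}^M (2π)^{-d/2} det(Γ)^{-1/2} exp(-½‖G_K(X_m)-y‖_Γ²) be the Gaussian mixture evidence surrogate. Then there is a finite constant C, depending only on L₁, L₂, L₃, R, x₀, d, Γ and μ and independent of M, such that E^{⊗μ}[ ∫_{ℝ^d} π_M^K(y) log²π_M^K(y) dy ] ≤ C, where E^{⊗μ} denotes expectation over the i.i.d. sample X₁,…,X_M. -/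
open MeasureTheory Real Matrix

/-- Gaussian mixture evidence surrogate built on nodes `xs : Fin M → X`:
`π_M(y) = (1/M) ∑ₘ (2π)^{-d/2} det(Γ)^{-1/2} exp(-½‖G(xsₘ)-y‖_Γ²)`. -/
noncomputable def gmmSurrogate {d M : ℕ} (Γ : Matrix (Fin d) (Fin d) ℝ) {X : Type*}
    (G : X → (Fin d → ℝ)) (xs : Fin M → X) (y : Fin d → ℝ) : ℝ :=
  (1 / (M : ℝ)) * ∑ m, gaussLikelihood Γ G (xs m) y

/-- Structure of `normGammaSq` as the squared norm of a linear image, plus coercivity. -/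
lemma exists_norm_facts {d : ℕ} {Γ : Matrix (Fin d) (Fin d) ℝ} (hΓ_pd : Γ.PosDef) :
    ∃ φ : (Fin d → ℝ) →ₗ[ℝ] EuclideanSpace ℝ (Fin d),
      (∀ z, normGammaSq Γ z = ‖φ z‖ ^ 2) ∧
      ∃ κ : ℝ, 0 < κ ∧ ∀ z, (∑ i, z i ^ 2) ≤ κ * ‖φ z‖ ^ 2 := by
  have hN : (Γ⁻¹).PosDef := hΓ_pd.inv
  set S : Matrix (Fin d) (Fin d) ℝ := open scoped MatrixOrder in CFC.sqrt (Γ⁻¹) with hS_def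
  have hSS : S * S = Γ⁻¹ := open scoped MatrixOrder in CFC.sqrt_mul_sqrt_self _ hN.posSemidef.nonneg
  have hS_herm : Sᴴ = S := open scoped MatrixOrder in (CFC.sqrt_nonneg (Γ⁻¹)).posSemidef.1.eq
  have hS_symm : Sᵀ = S := by
    rwa [Matrix.conjTranspose_eq_transpose_of_trivial] at hS_herm
  have hdetS : S.det ≠ 0 := by
    intro h
    have : (Γ⁻¹).det = 0 := by rw [← hSS, Matrix.det_mul, h, mul_zero]
    exact (hN.det_pos.ne' this)
  set E := WithLp.linearEquiv 2 ℝ (Fin d → ℝ)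
  refine ⟨E.symm.toLinearMap ∘ₗ Matrix.mulVecLin S, ?_, ?_⟩
  · intro z
    have h1 : normGammaSq Γ z = (S *ᵥ z) ⬝ᵥ (S *ᵥ z) := by
      rw [normGammaSq, ← hSS, ← Matrix.mulVec_mulVec, Matrix.dotProduct_mulVec (v := z)]
      rw [← hS_symm, Matrix.vecMul_transpose, hS_symm]
    have h2 : ‖(E.symm.toLinearMap ∘ₗ Matrix.mulVecLin S) z‖ ^ 2 = ∑ i, (S *ᵥ z) i ^ 2 := by
      rw [LinearMap.comp_apply]
      rw [EuclideanSpace.norm_eq]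
      rw [Real.sq_sqrt (by positivity)]
      congr 1
      ext i
      simp [E, Real.norm_eq_abs, sq_abs]
    rw [h1, h2, dotProduct]
    simp [pow_two]
  · -- coercivity
    set ψ : EuclideanSpace ℝ (Fin d) →ₗ[ℝ] EuclideanSpace ℝ (Fin d) :=
      E.symm.toLinearMap ∘ₗ Matrix.mulVecLin S⁻¹ ∘ₗ E.toLinearMap
    have hψc : Continuous ψ := ψ.continuous_of_finiteDimensional
    obtain ⟨κ, hκpos, hκ⟩ := (LinearMap.toContinuousLinearMap ψ).bound
    refine ⟨κ ^ 2, by positivity, fun z => ?_⟩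
    have hinv : S⁻¹ *ᵥ (S *ᵥ z) = z := by
      rw [Matrix.mulVec_mulVec, Matrix.nonsing_inv_mul S (isUnit_iff_ne_zero.mpr hdetS), Matrix.one_mulVec]
    have hz : ψ ((E.symm.toLinearMap ∘ₗ Matrix.mulVecLin S) z) = E.symm z := by
      simp only [ψ, LinearMap.comp_apply, LinearEquiv.coe_coe]
      rw [Matrix.mulVecLin_apply, Matrix.mulVecLin_apply]
      exact congrArg _ hinv
    have hnorm : ‖(E.symm z : EuclideanSpace ℝ (Fin d))‖ ^ 2 = ∑ i, z i ^ 2 := by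
      rw [EuclideanSpace.norm_eq, Real.sq_sqrt (by positivity)]
      congr 1
      ext i
      simp [E, Real.norm_eq_abs, sq_abs]
    calc (∑ i, z i ^ 2) = ‖(E.symm z : EuclideanSpace ℝ (Fin d))‖ ^ 2 := hnorm.symm
      _ = ‖ψ ((E.symm.toLinearMap ∘ₗ Matrix.mulVecLin S) z)‖ ^ 2 := by rw [hz]
      _ ≤ (κ * ‖(E.symm.toLinearMap ∘ₗ Matrix.mulVecLin S) z‖) ^ 2 := by
          apply pow_le_pow_left₀ (norm_nonneg _)
          exact hκ _
      _ = κ ^ 2 * ‖(E.symm.toLinearMap ∘ₗ Matrix.mulVecLin S) z‖ ^ 2 := by ring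

/-- Pointwise: `t log² t ≤ 16 √t + (log c)² t` for `0 ≤ t ≤ c`. -/
lemma mul_log_sq_le {t c : ℝ} (ht : 0 ≤ t) (htc : t ≤ c) :
    t * Real.log t ^ 2 ≤ 16 * Real.sqrt t + Real.log c ^ 2 * t := by
  rcases eq_or_lt_of_le ht with h0 | htpos
  · simp [← h0]
  rcases le_or_gt t 1 with h1 | h1
  · -- t log² t ≤ 16 √t
    have hlt : Real.log t ≤ 0 := Real.log_nonpos ht h1
    set u : ℝ := -Real.log t with hu
    have hu0 : 0 ≤ u := by simp [hu]; linarith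
    have hsq : Real.sqrt t = Real.exp (-(u/2)) := by
      rw [hu]
      rw [show -(-Real.log t / 2) = Real.log t / 2 by ring, Real.exp_half, Real.exp_log htpos]
    have ht_eq : t = Real.exp (-(u/2)) * Real.exp (-(u/2)) := by
      rw [← Real.exp_add, hu]
      rw [show -(-Real.log t / 2) + -(-Real.log t / 2) = Real.log t by ring, Real.exp_log htpos]
    have key : u ^ 2 * Real.exp (-(u/2)) ≤ 16 := by
      have h4 : u / 4 ≤ Real.exp (u / 4) := by
        have := Real.add_one_le_exp (u/4)
        linarith
      have h4' : u ≤ 4 * Real.exp (u/4) := by linarith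
      have hsq' : u ^ 2 ≤ 16 * Real.exp (u/2) := by
        calc u ^ 2 ≤ (4 * Real.exp (u/4)) ^ 2 := by
              apply pow_le_pow_left₀ hu0 h4'
          _ = 16 * Real.exp (u/2) := by
              rw [mul_pow, sq (Real.exp (u/4)), ← Real.exp_add]
              norm_num
              ring_nf
      calc u ^ 2 * Real.exp (-(u/2)) ≤ 16 * Real.exp (u/2) * Real.exp (-(u/2)) := by
            apply mul_le_mul_of_nonneg_right hsq' (Real.exp_nonneg _)
        _ = 16 := by rw [mul_assoc, ← Real.exp_add]; simp
    have hlog2 : Real.log t ^ 2 = u ^ 2 := by rw [hu]; ring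
    have : t * Real.log t ^ 2 ≤ 16 * Real.sqrt t := by
      rw [hlog2, hsq]
      nth_rewrite 1 [ht_eq]
      calc Real.exp (-(u/2)) * Real.exp (-(u/2)) * u ^ 2
          = (u ^ 2 * Real.exp (-(u/2))) * Real.exp (-(u/2)) := by ring
        _ ≤ 16 * Real.exp (-(u/2)) := by
            apply mul_le_mul_of_nonneg_right key (Real.exp_nonneg _)
    have : t * Real.log t ^ 2 ≤ 16 * Real.sqrt t + Real.log c ^ 2 * t := by
      have h2 : 0 ≤ Real.log c ^ 2 * t := by positivity
      linarith
    exact this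
  · -- 1 < t ≤ c
    have hlogt : 0 < Real.log t := Real.log_pos h1
    have hlogc : Real.log t ≤ Real.log c := Real.log_le_log htpos htc
    have h2 : Real.log t ^ 2 ≤ Real.log c ^ 2 :=
      pow_le_pow_left₀ hlogt.le hlogc 2
    have h3 : t * Real.log t ^ 2 ≤ Real.log c ^ 2 * t := by
      rw [mul_comm (Real.log c ^ 2) t]
      exact mul_le_mul_of_nonneg_left h2 ht
    have h4 : 0 ≤ 16 * Real.sqrt t := by positivity
    linarith

/-- Finiteness of a Gaussian-type integral `∫ exp(-γ ∑ yᵢ²) dy` on `Fin d → ℝ`. -/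
lemma lintegral_exp_neg_mul_sum_sq_lt_top {d : ℕ} {γ : ℝ} (hγ : 0 < γ) :
    ∫⁻ y : Fin d → ℝ, ENNReal.ofReal (Real.exp (-γ * ∑ i, y i ^ 2)) < ⊤ := by
  have hint : Integrable (fun v : Fin d → ℝ =>
      Complex.exp (-(γ : ℂ) * ∑ i, (v i : ℂ) ^ 2 + ∑ i : Fin d, (0 : ℂ) * (v i))) :=
    GaussianFourier.integrable_cexp_neg_mul_sum_add (by simpa using hγ) _
  have hint2 : Integrable (fun v : Fin d → ℝ => Real.exp (-γ * ∑ i, v i ^ 2)) := by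
    have := hint.norm
    convert this using 2 with v
    simp only [zero_mul, Finset.sum_const_zero, add_zero]
    rw [Complex.norm_exp]
    have hc : ((-γ * ∑ i, v i ^ 2 : ℝ) : ℂ) = -(γ:ℂ) * ∑ i, (v i : ℂ) ^ 2 := by
      push_cast; ring
    rw [← hc, Complex.ofReal_re]
  have := hint2.hasFiniteIntegral
  rw [HasFiniteIntegral] at this
  refine lt_of_le_of_lt (lintegral_mono fun y => ?_) this
  rw [← Real.enorm_eq_ofReal (Real.exp_nonneg _)]

/-- Marginal: integrating a one-coordinate function against a product of copies of a
probability measure. -/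
lemma lintegral_pi_eval {X : Type*} [MeasurableSpace X] (μ : Measure X)
    [IsProbabilityMeasure μ] {M : ℕ} (m : Fin M) {f : X → ENNReal} (hf : Measurable f) :
    ∫⁻ xs, f (xs m) ∂(Measure.pi fun _ : Fin M => μ) = ∫⁻ x, f x ∂μ := by
  have hmap : (Measure.pi fun _ : Fin M => μ).map (Function.eval m) = μ := by
    ext s hs
    rw [Measure.map_apply (measurable_pi_apply m) hs]
    rw [Set.eval_preimage, Measure.pi_pi]
    rw [Fintype.prod_eq_single m (fun i hi => by simp [Function.update_of_ne hi])]
    simp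
  conv_rhs => rw [← hmap]
  rw [lintegral_map hf (measurable_pi_apply m)]

open ENNReal in
set_option maxHeartbeats 2000000 in
/-- There is a finite constant `C`, depending only on the constants of
Assumption A, on `d`, `Γ` and `μ` (and independent of `M` and of the forward map), such that
for an i.i.d. sample `X₁, …, X_M ∼ μ` the Gaussian mixture surrogate satisfies
`E^{⊗μ}[∫ π_M^K(y) log²π_M^K(y) dy] ≤ C`. -/
theorem gmm_surrogate_squared_log_moment_uniform_bound {d : ℕ}
    {X : Type*} [NormedAddCommGroup X] [NormedSpace ℝ X] [CompleteSpace X]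
    [TopologicalSpace.SeparableSpace X] [MeasurableSpace X] [BorelSpace X]
    (μ : Measure X) [IsProbabilityMeasure μ]
    (Γ : Matrix (Fin d) (Fin d) ℝ) (hΓ_symm : Γ.IsSymm) (hΓ_pd : Γ.PosDef)
    (L₁ L₂ R L₃ : ℝ) (x₀ : X)
    (hL₁ : 0 < L₁) (hL₂ : 0 < L₂) (hR : 0 < R) (hL₃ : 0 < L₃)
    (hSubGauss : Integrable (fun x => Real.exp (L₂ * ‖x‖ ^ 2)) μ)
    (hBall : 0 < μ (Metric.ball x₀ R)) :
    ∃ C : ℝ, ∀ GK : X → (Fin d → ℝ),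
      Measurable GK →
      (∀ x x' : X, normGamma Γ (GK x - GK x') ≤ L₁ * ‖x - x'‖) →
      (∀ x ∈ Metric.ball x₀ R, normGamma Γ (GK x) < L₃) →
      ∀ M : ℕ, 0 < M →
        ∫ xs, (∫ y, gmmSurrogate Γ GK xs y * (Real.log (gmmSurrogate Γ GK xs y)) ^ 2)
            ∂(Measure.pi fun _ : Fin M => μ)
          ≤ C := by
  classical
  obtain ⟨φ, hφ, κ, hκpos, hκle⟩ := exists_norm_facts hΓ_pd
  have hφcont : Continuous φ := φ.continuous_of_finiteDimensional
  have hnsq_nonneg : ∀ z, 0 ≤ normGammaSq Γ z := fun z => by rw [hφ z]; positivity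
  have hnG_eq : ∀ z, normGamma Γ z = ‖φ z‖ := fun z => by
    rw [normGamma, hφ z, Real.sqrt_sq (norm_nonneg _)]
  have hnsq_eq : ∀ z, normGammaSq Γ z = normGamma Γ z ^ 2 := fun z => by
    rw [hφ z, hnG_eq z]
  -- constants
  set c : ℝ := (Real.sqrt ((2 * Real.pi) ^ d * Γ.det))⁻¹ with hc_def
  have hc_pos : 0 < c := by
    have hdet := hΓ_pd.det_pos
    have h1 : (0:ℝ) < (2 * Real.pi) ^ d * Γ.det := by positivity
    exact inv_pos.mpr (Real.sqrt_pos.mpr h1)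
  set K : ℝ := Real.log c ^ 2 with hK_def
  have hK_nonneg : 0 ≤ K := sq_nonneg _
  set b : ℝ := L₃ + L₁ * ‖x₀‖ with hb_def
  have hb_pos : 0 < b := by positivity
  have hL₁sq : (0:ℝ) < 8 * L₁ ^ 2 := by positivity
  set β : ℝ := min (1/8) (L₂ / (8 * L₁ ^ 2)) with hβ_def
  have hβ_pos : 0 < β := lt_min (by norm_num) (div_pos hL₂ hL₁sq)
  set A : ℝ := ∫ x, Real.exp (L₂ * ‖x‖ ^ 2) ∂μ with hA_def
  have hA_nonneg : 0 ≤ A := integral_nonneg fun x => Real.exp_nonneg _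
  set D : ℝ := 1 + Real.exp (L₂ * b ^ 2 / L₁ ^ 2) with hD_def
  have hD_pos : 0 < D := by positivity
  set C₁ : ℝ := c * D * A with hC₁_def
  have hC₁_nonneg : 0 ≤ C₁ := by positivity
  -- finiteness of Gaussian-type integrals
  have hI : ∀ γ : ℝ, 0 < γ →
      (∫⁻ y : Fin d → ℝ, ENNReal.ofReal (Real.exp (-γ * normGammaSq Γ y))) < ⊤ := by
    intro γ hγ
    have hγκ : 0 < γ / κ := div_pos hγ hκpos
    refine lt_of_le_of_lt (lintegral_mono fun y => ?_)
      (lintegral_exp_neg_mul_sum_sq_lt_top hγκ)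
    apply ENNReal.ofReal_le_ofReal
    apply Real.exp_le_exp.mpr
    have h1 := hκle y
    rw [hφ y]
    rw [neg_mul, neg_mul, neg_le_neg_iff, div_mul_eq_mul_div, div_le_iff₀ hκpos]
    nlinarith [hγ.le]
  set Iβ2 : ℝ≥0∞ := ∫⁻ y : Fin d → ℝ,
      ENNReal.ofReal (Real.exp (-(β/2) * normGammaSq Γ y)) with hIβ2_def
  set Iβ : ℝ≥0∞ := ∫⁻ y : Fin d → ℝ,
      ENNReal.ofReal (Real.exp (-β * normGammaSq Γ y)) with hIβ_def
  have hIβ2_lt : Iβ2 < ⊤ := hI _ (by positivity)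
  have hIβ_lt : Iβ < ⊤ := hI _ hβ_pos
  set B : ℝ≥0∞ := ENNReal.ofReal 16 * ENNReal.ofReal (Real.sqrt C₁) * Iβ2
      + ENNReal.ofReal K * ENNReal.ofReal C₁ * Iβ with hB_def
  have hB_ne_top : B ≠ ⊤ := by
    apply ENNReal.add_ne_top.mpr
    constructor
    · exact ENNReal.mul_ne_top (ENNReal.mul_ne_top ENNReal.ofReal_ne_top
        ENNReal.ofReal_ne_top) hIβ2_lt.ne
    · exact ENNReal.mul_ne_top (ENNReal.mul_ne_top ENNReal.ofReal_ne_top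
        ENNReal.ofReal_ne_top) hIβ_lt.ne
  refine ⟨B.toReal, ?_⟩
  intro GK hGK hLip hBd M hM
  set ν : Measure (Fin M → X) := Measure.pi fun _ : Fin M => μ with hν_def
  have hMpos : (0:ℝ) < M := Nat.cast_pos.mpr hM
  -- pointwise facts on gaussLikelihood
  have hgl : ∀ (x : X) (y : Fin d → ℝ), gaussLikelihood Γ GK x y
      = c * Real.exp (-(1/2) * normGammaSq Γ (GK x - y)) := fun _ _ => rfl
  have hg_nonneg : ∀ (x : X) (y : Fin d → ℝ), 0 ≤ gaussLikelihood Γ GK x y := fun x y => by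
    rw [hgl]; positivity
  have hg_le : ∀ (x : X) (y : Fin d → ℝ), gaussLikelihood Γ GK x y ≤ c := fun x y => by
    rw [hgl]
    calc c * Real.exp (-(1/2) * normGammaSq Γ (GK x - y)) ≤ c * 1 := by
          apply mul_le_mul_of_nonneg_left _ hc_pos.le
          apply Real.exp_le_one_iff.mpr
          nlinarith [hnsq_nonneg (GK x - y)]
      _ = c := mul_one c
  -- gmm facts
  have hgmm_eq : ∀ (xs : Fin M → X) (y : Fin d → ℝ), gmmSurrogate Γ GK xs y
      = (1/(M:ℝ)) * ∑ m, gaussLikelihood Γ GK (xs m) y := fun _ _ => rfl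
  have hgmm_nonneg : ∀ (xs : Fin M → X) (y : Fin d → ℝ), 0 ≤ gmmSurrogate Γ GK xs y := fun xs y => by
    rw [hgmm_eq]
    exact mul_nonneg (by positivity) (Finset.sum_nonneg fun m _ => hg_nonneg _ _)
  have hgmm_le : ∀ (xs : Fin M → X) (y : Fin d → ℝ), gmmSurrogate Γ GK xs y ≤ c := fun xs y => by
    rw [hgmm_eq]
    have h1 : (∑ m : Fin M, gaussLikelihood Γ GK (xs m) y) ≤ (M : ℝ) * c := by
      calc (∑ m : Fin M, gaussLikelihood Γ GK (xs m) y) ≤ ∑ _m : Fin M, c :=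
            Finset.sum_le_sum fun m _ => hg_le _ _
        _ = (M : ℝ) * c := by
            rw [Finset.sum_const, Finset.card_univ, Fintype.card_fin, nsmul_eq_mul]
    calc (1/(M:ℝ)) * ∑ m, gaussLikelihood Γ GK (xs m) y ≤ (1/(M:ℝ)) * ((M:ℝ) * c) := by
          apply mul_le_mul_of_nonneg_left h1 (by positivity)
      _ = c := by field_simp
  -- measurability
  have hnsq_cont : Continuous (normGammaSq Γ) := by
    have h : normGammaSq Γ = fun z => ‖φ z‖ ^ 2 := funext hφ
    rw [h]; exact (hφcont.norm).pow 2
  have hg_meas : ∀ m : Fin M, Measurable fun p : (Fin M → X) × (Fin d → ℝ) =>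
      gaussLikelihood Γ GK (p.1 m) p.2 := by
    intro m
    have h1 : Measurable fun p : (Fin M → X) × (Fin d → ℝ) => GK (p.1 m) - p.2 :=
      (hGK.comp ((measurable_pi_apply m).comp measurable_fst)).sub measurable_snd
    have h2 : Measurable fun p : (Fin M → X) × (Fin d → ℝ) =>
        Real.exp (-(1/2) * normGammaSq Γ (GK (p.1 m) - p.2)) :=
      Real.measurable_exp.comp ((hnsq_cont.measurable.comp h1).const_mul _)
    simp only [hgl]
    exact h2.const_mul c
  have hgmm_meas : Measurable fun p : (Fin M → X) × (Fin d → ℝ) =>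
      gmmSurrogate Γ GK p.1 p.2 := by
    have h1 : Measurable fun p : (Fin M → X) × (Fin d → ℝ) =>
        ∑ m : Fin M, gaussLikelihood Γ GK (p.1 m) p.2 :=
      Finset.measurable_sum _ fun m _ => hg_meas m
    simp only [hgmm_eq]
    exact h1.const_mul _
  have hh_meas : Measurable fun p : (Fin M → X) × (Fin d → ℝ) =>
      gmmSurrogate Γ GK p.1 p.2 * Real.log (gmmSurrogate Γ GK p.1 p.2) ^ 2 :=
    hgmm_meas.mul ((Real.measurable_log.comp hgmm_meas).pow_const 2)
  have hh_nonneg : ∀ (xs : Fin M → X) (y : Fin d → ℝ),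
      0 ≤ gmmSurrogate Γ GK xs y * Real.log (gmmSurrogate Γ GK xs y) ^ 2 :=
    fun xs y => mul_nonneg (hgmm_nonneg xs y) (sq_nonneg _)
  -- inner integral to lintegral
  have hinner : ∀ (xs : Fin M → X), (∫ y, gmmSurrogate Γ GK xs y * Real.log (gmmSurrogate Γ GK xs y) ^ 2)
      = (∫⁻ y, ENNReal.ofReal
          (gmmSurrogate Γ GK xs y * Real.log (gmmSurrogate Γ GK xs y) ^ 2)).toReal := by
    intro xs
    exact integral_eq_lintegral_of_nonneg_ae (Filter.Eventually.of_forall fun y => hh_nonneg xs y)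
      (hh_meas.comp measurable_prodMk_left).aestronglyMeasurable
  set F : (Fin M → X) → ℝ := fun xs =>
    ∫ y, gmmSurrogate Γ GK xs y * Real.log (gmmSurrogate Γ GK xs y) ^ 2 with hF_def
  have hF_nonneg : ∀ xs, 0 ≤ F xs := fun xs => integral_nonneg fun y => hh_nonneg xs y
  have hL_meas : Measurable fun xs : Fin M → X => ∫⁻ y, ENNReal.ofReal
      (gmmSurrogate Γ GK xs y * Real.log (gmmSurrogate Γ GK xs y) ^ 2) :=
    Measurable.lintegral_prod_right hh_meas.ennreal_ofReal
  have hF_meas : AEStronglyMeasurable F ν := by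
    have h : F = fun xs => (∫⁻ y, ENNReal.ofReal
        (gmmSurrogate Γ GK xs y * Real.log (gmmSurrogate Γ GK xs y) ^ 2)).toReal :=
      funext hinner
    rw [h]
    exact hL_meas.ennreal_toReal.aestronglyMeasurable
  have houter : (∫ xs, F xs ∂ν) = (∫⁻ xs, ENNReal.ofReal (F xs) ∂ν).toReal :=
    integral_eq_lintegral_of_nonneg_ae (Filter.Eventually.of_forall hF_nonneg) hF_meas
  -- per-y measurability
  have hgy_meas : ∀ y : Fin d → ℝ, Measurable fun x : X =>
      ENNReal.ofReal (gaussLikelihood Γ GK x y) := by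
    intro y
    have h1 : Measurable fun x : X => GK x - y := hGK.sub measurable_const
    have h2 : Measurable fun x : X => Real.exp (-(1/2) * normGammaSq Γ (GK x - y)) :=
      Real.measurable_exp.comp ((hnsq_cont.measurable.comp h1).const_mul _)
    simp only [hgl]
    exact (h2.const_mul c).ennreal_ofReal
  -- mean density
  set Pb : (Fin d → ℝ) → ℝ≥0∞ :=
    fun y => ∫⁻ x, ENNReal.ofReal (gaussLikelihood Γ GK x y) ∂μ with hPb_def
  -- C1 : mixture average
  have hC1 : ∀ (y : Fin d → ℝ), (∫⁻ xs, ENNReal.ofReal (gmmSurrogate Γ GK xs y) ∂ν) = Pb y := by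
    intro y
    have hrw : ∀ xs : Fin M → X, ENNReal.ofReal (gmmSurrogate Γ GK xs y)
        = ENNReal.ofReal (1/(M:ℝ)) *
            ∑ m : Fin M, ENNReal.ofReal (gaussLikelihood Γ GK (xs m) y) := by
      intro xs
      rw [hgmm_eq, ENNReal.ofReal_mul (by positivity),
        ENNReal.ofReal_sum_of_nonneg (fun m _ => hg_nonneg _ _)]
    simp_rw [hrw]
    rw [lintegral_const_mul' _ _ ENNReal.ofReal_ne_top]
    rw [lintegral_finset_sum (μ := ν) Finset.univ
      (f := fun (m : Fin M) (xs : Fin M → X) => ENNReal.ofReal (gaussLikelihood Γ GK (xs m) y))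
      (fun m _ => (hgy_meas y).comp (measurable_pi_apply m))]
    have hmar : ∀ m : Fin M, (∫⁻ xs : Fin M → X,
        ENNReal.ofReal (gaussLikelihood Γ GK (xs m) y) ∂ν) = Pb y := fun m =>
      lintegral_pi_eval μ m (hgy_meas y)
    simp_rw [hmar]
    rw [Finset.sum_const, Finset.card_univ, Fintype.card_fin, nsmul_eq_mul, ← mul_assoc]
    have hone : ENNReal.ofReal (1/(M:ℝ)) * (M : ℝ≥0∞) = 1 := by
      rw [one_div, ENNReal.ofReal_inv_of_pos hMpos, ENNReal.ofReal_natCast]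
      exact ENNReal.inv_mul_cancel (by exact_mod_cast hM.ne') (by simp)
    rw [hone, one_mul]
  -- C2 : Cauchy-Schwarz
  have hsqrt_rw : ∀ t : ℝ, 0 ≤ t →
      ENNReal.ofReal (Real.sqrt t) = (ENNReal.ofReal t) ^ (1/2 : ℝ) := by
    intro t ht
    rw [Real.sqrt_eq_rpow, ENNReal.ofReal_rpow_of_nonneg ht (by norm_num)]
  have hC2 : ∀ (y : Fin d → ℝ), (∫⁻ xs, ENNReal.ofReal (Real.sqrt (gmmSurrogate Γ GK xs y)) ∂ν)
      ≤ (Pb y) ^ (1/2 : ℝ) := by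
    intro y
    have hfm : AEMeasurable (fun xs : Fin M → X =>
        (ENNReal.ofReal (gmmSurrogate Γ GK xs y)) ^ (1/2:ℝ)) ν :=
      (((hgmm_meas.comp measurable_prodMk_right).ennreal_ofReal).pow_const _).aemeasurable
    have hold := ENNReal.lintegral_mul_le_Lp_mul_Lq ν (p := 2) (q := 2)
      ⟨by norm_num, by norm_num, by norm_num⟩ hfm (aemeasurable_const (b := (1:ℝ≥0∞)))
    simp only [Pi.mul_apply, mul_one, ENNReal.one_rpow, lintegral_one,
      measure_univ, ENNReal.one_rpow, mul_one] at hold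
    calc (∫⁻ xs, ENNReal.ofReal (Real.sqrt (gmmSurrogate Γ GK xs y)) ∂ν)
        = ∫⁻ xs, (ENNReal.ofReal (gmmSurrogate Γ GK xs y)) ^ (1/2:ℝ) ∂ν := by
          congr 1; funext xs; rw [hsqrt_rw _ (hgmm_nonneg xs y)]
      _ ≤ (∫⁻ xs, ((ENNReal.ofReal (gmmSurrogate Γ GK xs y)) ^ (1/2:ℝ)) ^ (2:ℝ) ∂ν)
            ^ (1/(2:ℝ)) := hold
      _ = (Pb y) ^ (1/2 : ℝ) := by
          congr 1
          rw [← hC1 y]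
          congr 1; funext xs
          rw [← ENNReal.rpow_mul]
          norm_num
  -- D : tail bound on Pb
  have hDb : ∀ (y : Fin d → ℝ), Pb y ≤ ENNReal.ofReal (C₁ * Real.exp (-β * normGammaSq Γ y)) := by
    intro y
    have hpt : ∀ x : X, gaussLikelihood Γ GK x y
        ≤ (c * D * Real.exp (-β * normGammaSq Γ y)) * Real.exp (L₂ * ‖x‖ ^ 2) := by
      intro x
      rw [hgl]
      set s : ℝ := normGamma Γ y with hs
      have hs0 : 0 ≤ s := Real.sqrt_nonneg _
      set q : ℝ := normGamma Γ (GK x - y) with hq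
      have hq0 : 0 ≤ q := Real.sqrt_nonneg _
      have hqsq : normGammaSq Γ (GK x - y) = q ^ 2 := hnsq_eq _
      have hssq : normGammaSq Γ y = s ^ 2 := hnsq_eq _
      have hβ1 : β ≤ 1/8 := min_le_left _ _
      have hβ2 : β ≤ L₂ / (8 * L₁ ^ 2) := min_le_right _ _
      have key : Real.exp (β * s ^ 2 - (1/2) * q ^ 2) ≤ D * Real.exp (L₂ * ‖x‖ ^ 2) := by
        rcases le_or_gt s (2 * q) with hcase | hcase
        · have h1 : β * s ^ 2 - (1/2) * q ^ 2 ≤ 0 := by nlinarith [sq_nonneg q, sq_nonneg s]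
          have h2 : (1:ℝ) ≤ Real.exp (L₂ * ‖x‖ ^ 2) := Real.one_le_exp (by positivity)
          calc Real.exp (β * s ^ 2 - (1/2) * q ^ 2) ≤ 1 := Real.exp_le_one_iff.mpr h1
            _ ≤ D * Real.exp (L₂ * ‖x‖ ^ 2) := by
                have hD1 : (1:ℝ) ≤ D := by
                  rw [hD_def]; linarith [Real.exp_nonneg (L₂ * b ^ 2 / L₁ ^ 2)]
                nlinarith [hD1, h2]
        · have htri : s ≤ normGamma Γ (GK x) + q := by
            have h1 : φ y = φ (GK x) - φ (GK x - y) := by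
              rw [← map_sub, _root_.sub_sub_cancel]
            rw [hs, hq, hnG_eq y, hnG_eq (GK x), hnG_eq (GK x - y), h1]
            exact norm_sub_le _ _
          have hGx : normGamma Γ (GK x) ≤ L₁ * ‖x‖ + b := by
            have h2 : normGamma Γ (GK x) ≤ normGamma Γ (GK x - GK x₀) + normGamma Γ (GK x₀) := by
              rw [hnG_eq, hnG_eq, hnG_eq]
              have h3 : φ (GK x) = φ (GK x - GK x₀) + φ (GK x₀) := by
                rw [← map_add, _root_.sub_add_cancel]
              rw [h3]
              exact norm_add_le _ _
            have h3 := hLip x x₀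
            have h4 : normGamma Γ (GK x₀) ≤ L₃ :=
              (hBd x₀ (by simpa [Metric.mem_ball] using hR)).le
            have h5 : ‖x - x₀‖ ≤ ‖x‖ + ‖x₀‖ := norm_sub_le _ _
            have h6 : L₁ * ‖x - x₀‖ ≤ L₁ * (‖x‖ + ‖x₀‖) :=
              mul_le_mul_of_nonneg_left h5 hL₁.le
            calc normGamma Γ (GK x) ≤ L₁ * ‖x - x₀‖ + L₃ := by linarith
              _ ≤ L₁ * (‖x‖ + ‖x₀‖) + L₃ := by linarith
              _ = L₁ * ‖x‖ + b := by rw [hb_def]; ring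
          have hhalf : s / 2 ≤ L₁ * ‖x‖ + b := by linarith
          have hx2 : s ^ 2 / 8 ≤ L₁ ^ 2 * ‖x‖ ^ 2 + b ^ 2 := by
            nlinarith [sq_nonneg (L₁ * ‖x‖ - b), mul_nonneg hL₁.le (norm_nonneg x), hb_pos]
          have hβs : β * s ^ 2 ≤ L₂ * ‖x‖ ^ 2 + L₂ * b ^ 2 / L₁ ^ 2 := by
            have hL₁2 : (0:ℝ) < L₁ ^ 2 := by positivity
            have h6 : β * s ^ 2 ≤ (L₂ / (8 * L₁ ^ 2)) * s ^ 2 :=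
              mul_le_mul_of_nonneg_right hβ2 (sq_nonneg s)
            have h7 : (L₂ / (8 * L₁ ^ 2)) * s ^ 2 = (L₂ / L₁ ^ 2) * (s ^ 2 / 8) := by ring
            have h8 : (L₂ / L₁ ^ 2) * (s ^ 2 / 8)
                ≤ (L₂ / L₁ ^ 2) * (L₁ ^ 2 * ‖x‖ ^ 2 + b ^ 2) :=
              mul_le_mul_of_nonneg_left hx2 (by positivity)
            have h9 : (L₂ / L₁ ^ 2) * (L₁ ^ 2 * ‖x‖ ^ 2 + b ^ 2)
                = L₂ * ‖x‖ ^ 2 + L₂ * b ^ 2 / L₁ ^ 2 := by field_simp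
            linarith
          calc Real.exp (β * s ^ 2 - (1/2) * q ^ 2) ≤ Real.exp (β * s ^ 2) := by
                apply Real.exp_le_exp.mpr; nlinarith [sq_nonneg q]
            _ ≤ Real.exp (L₂ * ‖x‖ ^ 2 + L₂ * b ^ 2 / L₁ ^ 2) := Real.exp_le_exp.mpr hβs
            _ = Real.exp (L₂ * b ^ 2 / L₁ ^ 2) * Real.exp (L₂ * ‖x‖ ^ 2) := by
                rw [← Real.exp_add]; ring_nf
            _ ≤ D * Real.exp (L₂ * ‖x‖ ^ 2) := by
                apply mul_le_mul_of_nonneg_right _ (Real.exp_nonneg _)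
                rw [hD_def]; linarith
      calc c * Real.exp (-(1/2) * normGammaSq Γ (GK x - y))
          = c * (Real.exp (β * s ^ 2 - (1/2) * q ^ 2) * Real.exp (-β * s ^ 2)) := by
            rw [← Real.exp_add, hqsq]; ring_nf
        _ ≤ c * ((D * Real.exp (L₂ * ‖x‖ ^ 2)) * Real.exp (-β * s ^ 2)) := by
            apply mul_le_mul_of_nonneg_left _ hc_pos.le
            exact mul_le_mul_of_nonneg_right key (Real.exp_nonneg _)
        _ = (c * D * Real.exp (-β * normGammaSq Γ y)) * Real.exp (L₂ * ‖x‖ ^ 2) := by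
            rw [hssq]; ring
    calc Pb y ≤ ∫⁻ x, ENNReal.ofReal
          ((c * D * Real.exp (-β * normGammaSq Γ y)) * Real.exp (L₂ * ‖x‖ ^ 2)) ∂μ :=
          lintegral_mono fun x => ENNReal.ofReal_le_ofReal (hpt x)
      _ = ENNReal.ofReal (c * D * Real.exp (-β * normGammaSq Γ y)) *
            ∫⁻ x, ENNReal.ofReal (Real.exp (L₂ * ‖x‖ ^ 2)) ∂μ := by
          simp_rw [ENNReal.ofReal_mul (show (0:ℝ) ≤ c * D * Real.exp (-β * normGammaSq Γ y)
            by positivity)]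
          rw [lintegral_const_mul' _ _ ENNReal.ofReal_ne_top]
      _ = ENNReal.ofReal (c * D * Real.exp (-β * normGammaSq Γ y)) * ENNReal.ofReal A := by
          rw [← ofReal_integral_eq_lintegral_ofReal hSubGauss
            (Filter.Eventually.of_forall fun x => Real.exp_nonneg _)]
      _ = ENNReal.ofReal (C₁ * Real.exp (-β * normGammaSq Γ y)) := by
          rw [← ENNReal.ofReal_mul (by positivity)]
          congr 1
          rw [hC₁_def]; ring
  -- main chain
  have hmain : (∫⁻ xs, ENNReal.ofReal (F xs) ∂ν) ≤ B := by
    have hptw : ∀ (xs : Fin M → X) (y : Fin d → ℝ), ENNReal.ofReal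
        (gmmSurrogate Γ GK xs y * Real.log (gmmSurrogate Γ GK xs y) ^ 2)
        ≤ ENNReal.ofReal (16 * Real.sqrt (gmmSurrogate Γ GK xs y))
          + ENNReal.ofReal (K * gmmSurrogate Γ GK xs y) := by
      intro xs y
      have h1 := mul_log_sq_le (hgmm_nonneg xs y) (hgmm_le xs y)
      calc ENNReal.ofReal (gmmSurrogate Γ GK xs y * Real.log (gmmSurrogate Γ GK xs y) ^ 2)
          ≤ ENNReal.ofReal (16 * Real.sqrt (gmmSurrogate Γ GK xs y)
              + K * gmmSurrogate Γ GK xs y) := by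
            apply ENNReal.ofReal_le_ofReal
            rw [hK_def]
            exact h1
        _ = _ := ENNReal.ofReal_add (by positivity) (mul_nonneg hK_nonneg (hgmm_nonneg xs y))
    have hmeas1 : Measurable fun p : (Fin M → X) × (Fin d → ℝ) =>
        ENNReal.ofReal (16 * Real.sqrt (gmmSurrogate Γ GK p.1 p.2)) :=
      ((Real.continuous_sqrt.measurable.comp hgmm_meas).const_mul 16).ennreal_ofReal
    have hmeas2 : Measurable fun p : (Fin M → X) × (Fin d → ℝ) =>
        ENNReal.ofReal (K * gmmSurrogate Γ GK p.1 p.2) :=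
      (hgmm_meas.const_mul K).ennreal_ofReal
    have step1 : (∫⁻ xs, ENNReal.ofReal (F xs) ∂ν)
        ≤ ∫⁻ xs, ∫⁻ y, ENNReal.ofReal
            (gmmSurrogate Γ GK xs y * Real.log (gmmSurrogate Γ GK xs y) ^ 2) ∂volume ∂ν := by
      apply lintegral_mono
      intro xs
      calc ENNReal.ofReal (F xs)
          = ENNReal.ofReal ((∫⁻ y, ENNReal.ofReal
              (gmmSurrogate Γ GK xs y * Real.log (gmmSurrogate Γ GK xs y) ^ 2)).toReal) := by
            rw [hF_def]
            simp only []
            rw [hinner xs]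
        _ ≤ _ := ENNReal.ofReal_toReal_le
    have step2 : (∫⁻ xs, ∫⁻ y, ENNReal.ofReal
          (gmmSurrogate Γ GK xs y * Real.log (gmmSurrogate Γ GK xs y) ^ 2) ∂volume ∂ν)
        ≤ (∫⁻ xs, ∫⁻ y, ENNReal.ofReal (16 * Real.sqrt (gmmSurrogate Γ GK xs y)) ∂volume ∂ν)
          + ∫⁻ xs, ∫⁻ y, ENNReal.ofReal (K * gmmSurrogate Γ GK xs y) ∂volume ∂ν := by
      calc (∫⁻ xs, ∫⁻ y, ENNReal.ofReal
            (gmmSurrogate Γ GK xs y * Real.log (gmmSurrogate Γ GK xs y) ^ 2) ∂volume ∂ν)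
          ≤ ∫⁻ xs, ∫⁻ y, (ENNReal.ofReal (16 * Real.sqrt (gmmSurrogate Γ GK xs y))
              + ENNReal.ofReal (K * gmmSurrogate Γ GK xs y)) ∂volume ∂ν := by
            apply lintegral_mono; intro xs; apply lintegral_mono; intro y
            exact hptw xs y
        _ = _ := by
            have hin : ∀ xs : Fin M → X, (∫⁻ y,
                (ENNReal.ofReal (16 * Real.sqrt (gmmSurrogate Γ GK xs y))
                  + ENNReal.ofReal (K * gmmSurrogate Γ GK xs y)) ∂volume)
                = (∫⁻ y, ENNReal.ofReal (16 * Real.sqrt (gmmSurrogate Γ GK xs y)) ∂volume)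
                  + ∫⁻ y, ENNReal.ofReal (K * gmmSurrogate Γ GK xs y) ∂volume := by
              intro xs
              exact lintegral_add_left (hmeas1.comp measurable_prodMk_left) _
            simp_rw [hin]
            exact lintegral_add_left (Measurable.lintegral_prod_right
              (f := fun (xs : Fin M → X) (y : Fin d → ℝ) =>
                ENNReal.ofReal (16 * Real.sqrt (gmmSurrogate Γ GK xs y))) hmeas1) _
    -- swap both
    have hswap1 : (∫⁻ xs, ∫⁻ y, ENNReal.ofReal
          (16 * Real.sqrt (gmmSurrogate Γ GK xs y)) ∂volume ∂ν)
        = ∫⁻ y, ∫⁻ xs, ENNReal.ofReal (16 * Real.sqrt (gmmSurrogate Γ GK xs y)) ∂ν ∂volume :=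
      lintegral_lintegral_swap hmeas1.aemeasurable
    have hswap2 : (∫⁻ xs, ∫⁻ y, ENNReal.ofReal (K * gmmSurrogate Γ GK xs y) ∂volume ∂ν)
        = ∫⁻ y, ∫⁻ xs, ENNReal.ofReal (K * gmmSurrogate Γ GK xs y) ∂ν ∂volume :=
      lintegral_lintegral_swap hmeas2.aemeasurable
    -- term 1
    have hterm1 : (∫⁻ y, ∫⁻ xs, ENNReal.ofReal
          (16 * Real.sqrt (gmmSurrogate Γ GK xs y)) ∂ν ∂volume)
        ≤ ENNReal.ofReal 16 * ENNReal.ofReal (Real.sqrt C₁) * Iβ2 := by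
      have hy : ∀ (y : Fin d → ℝ), (∫⁻ xs, ENNReal.ofReal (16 * Real.sqrt (gmmSurrogate Γ GK xs y)) ∂ν)
          ≤ ENNReal.ofReal 16 * (ENNReal.ofReal (Real.sqrt C₁)
              * ENNReal.ofReal (Real.exp (-(β/2) * normGammaSq Γ y))) := by
        intro y
        have h1 : (∫⁻ xs, ENNReal.ofReal (16 * Real.sqrt (gmmSurrogate Γ GK xs y)) ∂ν)
            = ENNReal.ofReal 16 *
              ∫⁻ xs, ENNReal.ofReal (Real.sqrt (gmmSurrogate Γ GK xs y)) ∂ν := by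
          simp_rw [ENNReal.ofReal_mul (show (0:ℝ) ≤ 16 by norm_num)]
          rw [lintegral_const_mul' _ _ ENNReal.ofReal_ne_top]
        rw [h1]
        apply mul_le_mul_right _ _
        calc (∫⁻ xs, ENNReal.ofReal (Real.sqrt (gmmSurrogate Γ GK xs y)) ∂ν)
            ≤ (Pb y) ^ (1/2 : ℝ) := hC2 y
          _ ≤ (ENNReal.ofReal (C₁ * Real.exp (-β * normGammaSq Γ y))) ^ (1/2 : ℝ) :=
              ENNReal.rpow_le_rpow (hDb y) (by norm_num)
          _ = ENNReal.ofReal (Real.sqrt C₁)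
              * ENNReal.ofReal (Real.exp (-(β/2) * normGammaSq Γ y)) := by
              rw [← hsqrt_rw _ (mul_nonneg hC₁_nonneg (Real.exp_nonneg _))]
              rw [Real.sqrt_mul' _ (Real.exp_nonneg _)]
              rw [← Real.exp_half]
              rw [← ENNReal.ofReal_mul (Real.sqrt_nonneg _)]
              congr 2
              ring
      calc (∫⁻ y, ∫⁻ xs, ENNReal.ofReal (16 * Real.sqrt (gmmSurrogate Γ GK xs y)) ∂ν ∂volume)
          ≤ ∫⁻ y, ENNReal.ofReal 16 * (ENNReal.ofReal (Real.sqrt C₁)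
              * ENNReal.ofReal (Real.exp (-(β/2) * normGammaSq Γ y))) ∂volume :=
            lintegral_mono hy
        _ = ENNReal.ofReal 16 * ENNReal.ofReal (Real.sqrt C₁) * Iβ2 := by
            simp_rw [← mul_assoc]
            rw [lintegral_const_mul' _ _
              (ENNReal.mul_ne_top ENNReal.ofReal_ne_top ENNReal.ofReal_ne_top)]
    -- term 2
    have hterm2 : (∫⁻ y, ∫⁻ xs, ENNReal.ofReal (K * gmmSurrogate Γ GK xs y) ∂ν ∂volume)
        ≤ ENNReal.ofReal K * ENNReal.ofReal C₁ * Iβ := by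
      have hy : ∀ (y : Fin d → ℝ), (∫⁻ xs, ENNReal.ofReal (K * gmmSurrogate Γ GK xs y) ∂ν)
          ≤ ENNReal.ofReal K * (ENNReal.ofReal C₁
              * ENNReal.ofReal (Real.exp (-β * normGammaSq Γ y))) := by
        intro y
        have h1 : (∫⁻ xs, ENNReal.ofReal (K * gmmSurrogate Γ GK xs y) ∂ν)
            = ENNReal.ofReal K * ∫⁻ xs, ENNReal.ofReal (gmmSurrogate Γ GK xs y) ∂ν := by
          simp_rw [ENNReal.ofReal_mul hK_nonneg]
          rw [lintegral_const_mul' _ _ ENNReal.ofReal_ne_top]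
        rw [h1, hC1 y]
        apply mul_le_mul_right _ _
        calc Pb y ≤ ENNReal.ofReal (C₁ * Real.exp (-β * normGammaSq Γ y)) := hDb y
          _ = ENNReal.ofReal C₁ * ENNReal.ofReal (Real.exp (-β * normGammaSq Γ y)) :=
            ENNReal.ofReal_mul hC₁_nonneg
      calc (∫⁻ y, ∫⁻ xs, ENNReal.ofReal (K * gmmSurrogate Γ GK xs y) ∂ν ∂volume)
          ≤ ∫⁻ y, ENNReal.ofReal K * (ENNReal.ofReal C₁
              * ENNReal.ofReal (Real.exp (-β * normGammaSq Γ y))) ∂volume :=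
            lintegral_mono hy
        _ = ENNReal.ofReal K * ENNReal.ofReal C₁ * Iβ := by
            simp_rw [← mul_assoc]
            rw [lintegral_const_mul' _ _
              (ENNReal.mul_ne_top ENNReal.ofReal_ne_top ENNReal.ofReal_ne_top)]
    calc (∫⁻ xs, ENNReal.ofReal (F xs) ∂ν) ≤ _ := step1
      _ ≤ _ := step2
      _ ≤ B := by
          rw [hswap1, hswap2, hB_def]
          exact add_le_add hterm1 hterm2
  -- conclude
  have hfinal : (∫ xs, F xs ∂ν) ≤ B.toReal := by
    rw [houter]
    exact ENNReal.toReal_mono hB_ne_top hmain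
  exact hfinal
end

section
/- Let G : X → ℝ^d and a Borel probability measure μ on a separable Banach space X satisfy Assumption A(L₁, L₂, x₀, R, L₃), set Φ(x,y) = ½‖G(x)-y‖_Γ², Z(y) = ∫_X exp(-Φ(x,y)) μ(dx), and let π be the evidence density. Let p > 1 and assume L₁² < L₂/(p(p-1)). Then ∫_{ℝ^d} ∫_X |exp(-Φ(x,y))/Z(y)|^p μ(dx) π(y) dy < ∞. -/
open MeasureTheory Real Matrix


section QuadAux

variable {d : ℕ} {M : Matrix (Fin d) (Fin d) ℝ}

private lemma quad_nonneg (hM : M.PosSemidef) (z : Fin d → ℝ) : 0 ≤ z ⬝ᵥ M *ᵥ z := by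
  simpa using hM.dotProduct_mulVec_nonneg z

private lemma quad_comm (hM : M.IsHermitian) (u v : Fin d → ℝ) :
    u ⬝ᵥ M *ᵥ v = v ⬝ᵥ M *ᵥ u := by
  have h : Mᵀ = M := by
    ext i j
    simpa [Matrix.conjTranspose_apply] using congrFun (congrFun hM.eq i) j
  rw [Matrix.dotProduct_mulVec, ← Matrix.mulVec_transpose, h, dotProduct_comm]

private lemma quad_expand (hM : M.IsHermitian) (u v : Fin d → ℝ) :
    (u + v) ⬝ᵥ M *ᵥ (u + v) = u ⬝ᵥ M *ᵥ u + 2 * (u ⬝ᵥ M *ᵥ v) + v ⬝ᵥ M *ᵥ v := by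
  have hc := quad_comm hM v u
  simp only [add_dotProduct, dotProduct_add, Matrix.mulVec_add]
  rw [hc]; ring

private lemma quad_cs (hM : M.PosDef) (u v : Fin d → ℝ) :
    (u ⬝ᵥ M *ᵥ v) ^ 2 ≤ (u ⬝ᵥ M *ᵥ u) * (v ⬝ᵥ M *ᵥ v) := by
  rcases eq_or_ne v 0 with rfl | hv
  · simp [Matrix.mulVec_zero]
  · have hqv : 0 < v ⬝ᵥ M *ᵥ v := by simpa using hM.dotProduct_mulVec_pos hv
    have key : ∀ t : ℝ, 0 ≤ (v ⬝ᵥ M *ᵥ v) * (t * t) + (2 * (u ⬝ᵥ M *ᵥ v)) * t + u ⬝ᵥ M *ᵥ u := by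
      intro t
      have h0 := quad_nonneg hM.posSemidef (u + t • v)
      have he : (u + t • v) ⬝ᵥ M *ᵥ (u + t • v)
          = u ⬝ᵥ M *ᵥ u + 2 * t * (u ⬝ᵥ M *ᵥ v) + t * t * (v ⬝ᵥ M *ᵥ v) := by
        rw [quad_expand hM.isHermitian]
        simp only [Matrix.mulVec_smul, dotProduct_smul, smul_dotProduct,
          smul_eq_mul]
        ring
      rw [he] at h0
      nlinarith [h0]
    have hd := discrim_le_zero key
    rw [discrim] at hd
    nlinarith [hd]

private lemma quad_sqrt_add (hM : M.PosDef) (u v : Fin d → ℝ) :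
    Real.sqrt ((u + v) ⬝ᵥ M *ᵥ (u + v))
      ≤ Real.sqrt (u ⬝ᵥ M *ᵥ u) + Real.sqrt (v ⬝ᵥ M *ᵥ v) := by
  have hqu := quad_nonneg hM.posSemidef u
  have hqv := quad_nonneg hM.posSemidef v
  have hip : u ⬝ᵥ M *ᵥ v ≤ Real.sqrt (u ⬝ᵥ M *ᵥ u) * Real.sqrt (v ⬝ᵥ M *ᵥ v) := by
    calc u ⬝ᵥ M *ᵥ v ≤ |u ⬝ᵥ M *ᵥ v| := le_abs_self _
      _ = Real.sqrt ((u ⬝ᵥ M *ᵥ v) ^ 2) := (Real.sqrt_sq_eq_abs _).symm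
      _ ≤ Real.sqrt ((u ⬝ᵥ M *ᵥ u) * (v ⬝ᵥ M *ᵥ v)) := Real.sqrt_le_sqrt (quad_cs hM u v)
      _ = Real.sqrt (u ⬝ᵥ M *ᵥ u) * Real.sqrt (v ⬝ᵥ M *ᵥ v) := Real.sqrt_mul hqu _
  rw [quad_expand hM.isHermitian]
  calc Real.sqrt (u ⬝ᵥ M *ᵥ u + 2 * (u ⬝ᵥ M *ᵥ v) + v ⬝ᵥ M *ᵥ v)
      ≤ Real.sqrt ((Real.sqrt (u ⬝ᵥ M *ᵥ u) + Real.sqrt (v ⬝ᵥ M *ᵥ v)) ^ 2) := by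
        apply Real.sqrt_le_sqrt
        nlinarith [Real.sq_sqrt hqu, Real.sq_sqrt hqv, hip]
    _ = Real.sqrt (u ⬝ᵥ M *ᵥ u) + Real.sqrt (v ⬝ᵥ M *ᵥ v) := by
        exact Real.sqrt_sq (by positivity)

private lemma quad_continuous (M : Matrix (Fin d) (Fin d) ℝ) :
    Continuous fun z : Fin d → ℝ => z ⬝ᵥ M *ᵥ z := by
  simp only [dotProduct, Matrix.mulVec]
  exact continuous_finset_sum _ fun i _ =>
    (continuous_apply i).mul (continuous_finset_sum _ fun j _ =>
      continuous_const.mul (continuous_apply j))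

private lemma quad_coercive (hM : M.PosDef) :
    ∃ c : ℝ, 0 < c ∧ ∀ z : Fin d → ℝ, c * (∑ i, z i ^ 2) ≤ z ⬝ᵥ M *ᵥ z := by
  rcases Nat.eq_zero_or_pos d with hd | hd
  · subst hd
    exact ⟨1, one_pos, fun z => by simp [dotProduct]⟩
  · have hcE : Continuous fun z : EuclideanSpace ℝ (Fin d) => (z : Fin d → ℝ) ⬝ᵥ M *ᵥ z :=
      (quad_continuous M).comp (PiLp.continuous_ofLp 2 fun _ : Fin d => ℝ)
    have hne : ((Metric.sphere (0 : EuclideanSpace ℝ (Fin d)) 1)).Nonempty := by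
      refine ⟨EuclideanSpace.single ⟨0, hd⟩ (1 : ℝ), ?_⟩
      simp [EuclideanSpace.norm_single]
    obtain ⟨w, hwS, hwmin⟩ := (isCompact_sphere (0 : EuclideanSpace ℝ (Fin d)) 1).exists_isMinOn
      hne hcE.continuousOn
    have hw1 : ‖w‖ = 1 := by simpa using hwS
    have hw0 : (w : Fin d → ℝ) ≠ 0 := by
      intro h
      rw [show w = 0 from (WithLp.ofLp_eq_zero 2).mp h] at hw1
      simp at hw1
    have hc : 0 < (w : Fin d → ℝ) ⬝ᵥ M *ᵥ w := by simpa using hM.dotProduct_mulVec_pos hw0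
    refine ⟨_, hc, fun z => ?_⟩
    rcases eq_or_ne z 0 with rfl | hz
    · simp [Matrix.mulVec_zero]
    · set zE : EuclideanSpace ℝ (Fin d) := WithLp.toLp 2 z with hzE
      have hr : 0 < ‖zE‖ := by
        rw [norm_pos_iff]
        simpa [hzE] using hz
      set r := ‖zE‖ with hrdef
      have hmem : r⁻¹ • zE ∈ Metric.sphere (0 : EuclideanSpace ℝ (Fin d)) 1 := by
        simp only [mem_sphere_iff_norm, sub_zero, norm_smul, norm_inv, Real.norm_eq_abs]
        rw [abs_of_pos hr]
        exact inv_mul_cancel₀ hr.ne'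
      have hexp : ((r⁻¹ • zE : EuclideanSpace ℝ (Fin d)) : Fin d → ℝ) ⬝ᵥ M *ᵥ (r⁻¹ • zE)
          = r⁻¹ * (r⁻¹ * (z ⬝ᵥ M *ᵥ z)) := by
        show (r⁻¹ • z) ⬝ᵥ M *ᵥ (r⁻¹ • z) = _
        simp only [smul_dotProduct, Matrix.mulVec_smul, dotProduct_smul,
          smul_eq_mul]
      have hsum : ∑ i, z i ^ 2 = r ^ 2 := by
        rw [hrdef, EuclideanSpace.norm_eq]
        rw [Real.sq_sqrt (by positivity)]
        simp [sq_abs, hzE]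
      have h1 : (w : Fin d → ℝ) ⬝ᵥ M *ᵥ w ≤ (r⁻¹ • zE) ⬝ᵥ M *ᵥ (r⁻¹ • zE) := hwmin hmem
      rw [hexp] at h1
      have h2 : r⁻¹ * (r⁻¹ * (z ⬝ᵥ M *ᵥ z)) * r ^ 2 = z ⬝ᵥ M *ᵥ z := by
        rw [sq]
        field_simp
      rw [hsum]
      nlinarith [mul_le_mul_of_nonneg_right h1 (sq_nonneg r)]

private lemma integrable_gauss (d : ℕ) (κ : ℝ) (hκ : 0 < κ) :
    Integrable (fun y : Fin d → ℝ => Real.exp (-(κ * ∑ i, y i ^ 2))) := by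
  have h := (GaussianFourier.integrable_cexp_neg_sum_mul_add (b := fun _ : Fin d => (κ : ℂ))
    (fun _ => by simpa using hκ) (fun _ => 0)).norm
  have heq : (fun y : Fin d → ℝ => Real.exp (-(κ * ∑ i, y i ^ 2)))
      = fun y : Fin d → ℝ =>
        ‖Complex.exp (-∑ i, (κ : ℂ) * (y i : ℂ) ^ 2 + ∑ i, (0 : ℂ) * (y i : ℂ))‖ := by
    funext y
    rw [Complex.norm_exp]
    congr 1
    have : (-∑ i, (κ : ℂ) * (y i : ℂ) ^ 2 + ∑ i, (0 : ℂ) * (y i : ℂ))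
        = ((-(κ * ∑ i, y i ^ 2) : ℝ) : ℂ) := by
      push_cast
      rw [Finset.mul_sum]
      simp
    rw [this, Complex.ofReal_re]
  rw [heq]
  exact h

end QuadAux

private lemma final_combine (p A B β c₃ K L₁ L₂ L₃ ε κ t g u a : ℝ)
    (hB2 : 2 * κ * t ^ 2 - (t - a) ^ 2 ≤ (1 / ε - 1) * a ^ 2)
    (hid : -(p / 2) * (t - g) ^ 2 + (p - 1) / 2 * (t + L₃) ^ 2 =
      -(1 / 2) * (t - a) ^ 2 + 1 / 2 * a ^ 2 - p / 2 * g ^ 2 + (p - 1) / 2 * L₃ ^ 2)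
    (hΨ : (1 / ε - 1) / 2 * a ^ 2 + 1 / 2 * a ^ 2 - p / 2 * g ^ 2 + (p - 1) / 2 * L₃ ^ 2
      = A * g ^ 2 + B * g + c₃)
    (hg2 : A * g ^ 2 + B * g ≤ A * (L₁ * u + K) ^ 2 + B * (L₁ * u + K))
    (hquad : A * (L₁ * u + K) ^ 2 + B * (L₁ * u + K)
      = A * L₁ ^ 2 * u ^ 2 + β * u + (A * K ^ 2 + B * K))
    (h6 : β * u ≤ L₂ / 4 * u ^ 2 + β ^ 2 / L₂)
    (hu2 : A * L₁ ^ 2 * u ^ 2 ≤ (L₂ / 2 + L₂ / 16) * u ^ 2)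
    (hpos : 0 ≤ L₂ * u ^ 2) :
    -(p / 2) * (t - g) ^ 2 + (p - 1) / 2 * (t + L₃) ^ 2
      ≤ A * K ^ 2 + B * K + c₃ + β ^ 2 / L₂ - κ * t ^ 2 + L₂ * u ^ 2 := by
  linarith

set_option maxHeartbeats 1600000 in
/-- Under Assumption A, if `p > 1` and `L₁² < L₂/(p(p-1))`, then
`∫_{ℝ^d} ∫_X |exp(-Φ(x,y))/Z(y)|^p μ(dx) π(y) dy < ∞`, where
`Φ(x,y) = ½‖G(x)-y‖_Γ²`, `Z(y) = ∫ exp(-Φ(x,y)) μ(dx)` and `π` is the evidence density. -/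

theorem likelihood_evidence_ratio_moment_finite {d : ℕ}
    {X : Type*} [NormedAddCommGroup X] [NormedSpace ℝ X] [CompleteSpace X]
    [TopologicalSpace.SeparableSpace X] [MeasurableSpace X] [BorelSpace X]
    (μ : Measure X) [IsProbabilityMeasure μ]
    (Γ : Matrix (Fin d) (Fin d) ℝ) (hΓ_symm : Γ.IsSymm) (hΓ_pd : Γ.PosDef)
    (G : X → (Fin d → ℝ)) (hG_meas : Measurable G)
    (L₁ L₂ R L₃ : ℝ) (x₀ : X)
    (hL₁ : 0 < L₁) (hL₂ : 0 < L₂) (hR : 0 < R) (hL₃ : 0 < L₃)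
    (hLip : ∀ x x' : X, normGamma Γ (G x - G x') ≤ L₁ * ‖x - x'‖)
    (hSubGauss : Integrable (fun x => Real.exp (L₂ * ‖x‖ ^ 2)) μ)
    (hBall : 0 < μ (Metric.ball x₀ R))
    (hBdd : ∀ x ∈ Metric.ball x₀ R, normGamma Γ (G x) < L₃)
    (p : ℝ) (hp : 1 < p) (hL : L₁ ^ 2 < L₂ / (p * (p - 1))) :
    ∫⁻ y, (∫⁻ x, ENNReal.ofReal
            (|Real.exp (-((1 / 2) * normGammaSq Γ (G x - y)))
              / (∫ x', Real.exp (-((1 / 2) * normGammaSq Γ (G x' - y))) ∂μ)| ^ p) ∂μ)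
          * ENNReal.ofReal (evidenceDensity Γ μ G y)
      < ⊤ := by
  classical
  have hM : (Γ⁻¹).PosDef := hΓ_pd.inv
  -- basic facts about the Γ-norm
  have hQ0 : ∀ z : Fin d → ℝ, 0 ≤ normGammaSq Γ z := fun z => quad_nonneg hM.posSemidef z
  have hN0 : ∀ z : Fin d → ℝ, 0 ≤ normGamma Γ z := fun z => Real.sqrt_nonneg _
  have hNsq : ∀ z : Fin d → ℝ, normGamma Γ z ^ 2 = normGammaSq Γ z := fun z =>
    Real.sq_sqrt (hQ0 z)
  have htri : ∀ u v : Fin d → ℝ, normGamma Γ (u + v) ≤ normGamma Γ u + normGamma Γ v :=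
    fun u v => quad_sqrt_add hM u v
  have hNneg : ∀ z : Fin d → ℝ, normGamma Γ (-z) = normGamma Γ z := by
    intro z
    unfold normGamma normGammaSq
    congr 1
    simp [Matrix.mulVec_neg, neg_dotProduct, dotProduct_neg]
  -- measurability and integrability of the likelihood kernel
  have hQm : Measurable (normGammaSq Γ) := (quad_continuous Γ⁻¹).measurable
  have hfm : ∀ y : Fin d → ℝ,
      Measurable fun x => Real.exp (-((1 / 2) * normGammaSq Γ (G x - y))) := by
    intro y
    exact Real.measurable_exp.comp
      (((hQm.comp (hG_meas.sub measurable_const)).const_mul (1 / 2)).neg)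
  have hfle1 : ∀ (y : Fin d → ℝ) (x : X),
      Real.exp (-((1 / 2) * normGammaSq Γ (G x - y))) ≤ 1 := by
    intro y x
    exact Real.exp_le_one_iff.mpr (by linarith [hQ0 (G x - y)])
  have hfint : ∀ y : Fin d → ℝ,
      Integrable (fun x => Real.exp (-((1 / 2) * normGammaSq Γ (G x - y)))) μ := by
    intro y
    refine Integrable.mono' (integrable_const 1) (hfm y).aestronglyMeasurable ?_
    filter_upwards with x
    rw [Real.norm_eq_abs, abs_of_pos (Real.exp_pos _)]
    exact hfle1 y x
  set W : (Fin d → ℝ) → ℝ :=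
    fun y => ∫ x', Real.exp (-((1 / 2) * normGammaSq Γ (G x' - y))) ∂μ with hWdef
  set m : ℝ := (μ (Metric.ball x₀ R)).toReal with hmdef
  have hm : 0 < m := ENNReal.toReal_pos hBall.ne' (measure_ne_top μ _)
  -- lower bound for the evidence
  have hWlb : ∀ y : Fin d → ℝ,
      m * Real.exp (-((1 / 2) * (normGamma Γ y + L₃) ^ 2)) ≤ W y := by
    intro y
    have hball : ∀ x ∈ Metric.ball x₀ R,
        Real.exp (-((1 / 2) * (normGamma Γ y + L₃) ^ 2))
          ≤ Real.exp (-((1 / 2) * normGammaSq Γ (G x - y))) := by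
      intro x hx
      apply Real.exp_le_exp.mpr
      have h1 : normGamma Γ (G x - y) ≤ normGamma Γ y + L₃ := by
        calc normGamma Γ (G x - y) = normGamma Γ (G x + (-y)) := by rw [sub_eq_add_neg]
          _ ≤ normGamma Γ (G x) + normGamma Γ (-y) := htri _ _
          _ = normGamma Γ (G x) + normGamma Γ y := by rw [hNneg]
          _ ≤ normGamma Γ y + L₃ := by linarith [le_of_lt (hBdd x hx)]
      have h2 : normGammaSq Γ (G x - y) ≤ (normGamma Γ y + L₃) ^ 2 := by
        rw [← hNsq]
        exact sq_le_sq' (by linarith [hN0 (G x - y), hN0 y]) h1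
      linarith
    calc m * Real.exp (-((1 / 2) * (normGamma Γ y + L₃) ^ 2))
        = Real.exp (-((1 / 2) * (normGamma Γ y + L₃) ^ 2)) * m := mul_comm _ _
      _ ≤ ∫ x in Metric.ball x₀ R,
            Real.exp (-((1 / 2) * normGammaSq Γ (G x - y))) ∂μ :=
          setIntegral_ge_of_const_le_real measurableSet_ball (measure_ne_top μ _)
            hball (hfint y).integrableOn
      _ ≤ W y := setIntegral_le_integral (hfint y)
            (Filter.Eventually.of_forall fun x => (Real.exp_pos _).le)
  have hWpos : ∀ y, 0 < W y := fun y => lt_of_lt_of_le (by positivity) (hWlb y)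
  have hW1 : ∀ y, W y ≤ 1 := by
    intro y
    calc W y ≤ ∫ _, (1 : ℝ) ∂μ :=
          integral_mono (hfint y) (integrable_const 1) fun x => hfle1 y x
      _ = 1 := by simp
  -- constants
  set CΓ : ℝ := (Real.sqrt ((2 * Real.pi) ^ d * Γ.det))⁻¹ with hCΓdef
  have hCΓ0 : 0 ≤ CΓ := by positivity
  have hEv : ∀ y, evidenceDensity Γ μ G y = CΓ * W y := by
    intro y
    unfold evidenceDensity gaussLikelihood
    simp only [neg_mul]
    rw [integral_const_mul]
  set K : ℝ := L₁ * ‖x₀‖ + L₃ with hKdef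
  have hK : 0 < K := by positivity
  set s : ℝ := L₂ / (8 * p ^ 2 * L₁ ^ 2) with hsdef
  have hs : 0 < s := by positivity
  set ε : ℝ := 1 / (1 + s) with hεdef
  have hε0 : 0 < ε := by positivity
  have hεinv : 1 / ε = 1 + s := by
    rw [hεdef, one_div_one_div]
  set κ : ℝ := (1 - ε) / 2 with hκdef
  have hε1 : ε < 1 := by
    rw [hεdef]
    rw [div_lt_one (by positivity)]
    linarith
  have hκ0 : 0 < κ := by rw [hκdef]; linarith
  have hpp : 0 < p * (p - 1) := by nlinarith
  have hL' : p * (p - 1) * L₁ ^ 2 < L₂ := by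
    have := (lt_div_iff₀ hpp).mp hL
    linarith [this]
  -- the elementary polynomial inequality
  obtain ⟨C', hC'⟩ : ∃ C' : ℝ, ∀ t g u : ℝ, 0 ≤ t → 0 ≤ g → 0 ≤ u → g ≤ L₁ * u + K →
      -(p / 2) * (t - g) ^ 2 + ((p - 1) / 2) * (t + L₃) ^ 2
        ≤ C' - κ * t ^ 2 + L₂ * u ^ 2 := by
    set A : ℝ := (1 + s) / 2 * p ^ 2 - p / 2 with hAdef
    have hA0 : 0 ≤ A := by
      have h1 : p ≤ p ^ 2 := by nlinarith
      have h2 : 0 ≤ s * p ^ 2 := mul_nonneg hs.le (sq_nonneg p)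
      rw [hAdef]; linarith
    set B : ℝ := (1 + s) * p * (p - 1) * L₃ with hBdef
    have hB0 : 0 ≤ B := by
      have h := mul_pos (mul_pos (mul_pos (show (0:ℝ) < 1 + s by linarith)
        (show (0:ℝ) < p by linarith)) (show (0:ℝ) < p - 1 by linarith)) hL₃
      rw [hBdef]; linarith
    set β : ℝ := 2 * A * L₁ * K + B * L₁ with hβdef
    have hβ0 : 0 ≤ β := by
      have h1 : 0 ≤ 2 * A * L₁ * K := by positivity
      have h2 : 0 ≤ B * L₁ := mul_nonneg hB0 hL₁.le
      rw [hβdef]; linarith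
    set c₃ : ℝ := (1 + s) / 2 * (p - 1) ^ 2 * L₃ ^ 2 + (p - 1) / 2 * L₃ ^ 2 with hc₃def
    refine ⟨A * K ^ 2 + B * K + c₃ + β ^ 2 / L₂, ?_⟩
    intro t g u ht hg hu hgu
    set a : ℝ := p * g + (p - 1) * L₃ with hadef
    have hB2 : 2 * κ * t ^ 2 - (t - a) ^ 2 ≤ (1 / ε - 1) * a ^ 2 := by
      rw [hκdef]
      have hkey : (1 / ε - 1) * a ^ 2 - (2 * ((1 - ε) / 2) * t ^ 2 - (t - a) ^ 2)
          = (ε * t - a) ^ 2 / ε := by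
        field_simp
        ring
      linarith [div_nonneg (sq_nonneg (ε * t - a)) hε0.le]
    have hid : -(p / 2) * (t - g) ^ 2 + ((p - 1) / 2) * (t + L₃) ^ 2
        = -(1 / 2) * (t - a) ^ 2 + (1 / 2) * a ^ 2 - (p / 2) * g ^ 2
          + ((p - 1) / 2) * L₃ ^ 2 := by
      rw [hadef]; ring
    have hΨ : (1 / ε - 1) / 2 * a ^ 2 + (1 / 2) * a ^ 2 - (p / 2) * g ^ 2
        + ((p - 1) / 2) * L₃ ^ 2 = A * g ^ 2 + B * g + c₃ := by
      rw [hεinv, hadef, hAdef, hBdef, hc₃def]; ring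
    have hg2 : A * g ^ 2 + B * g ≤ A * (L₁ * u + K) ^ 2 + B * (L₁ * u + K) := by
      have e1 := mul_le_mul_of_nonneg_left (pow_le_pow_left₀ hg hgu 2) hA0
      have e2 := mul_le_mul_of_nonneg_left hgu hB0
      linarith
    have hquad : A * (L₁ * u + K) ^ 2 + B * (L₁ * u + K)
        = A * L₁ ^ 2 * u ^ 2 + β * u + (A * K ^ 2 + B * K) := by
      rw [hβdef]; ring
    have hsp : s * p ^ 2 * L₁ ^ 2 = L₂ / 8 := by
      rw [hsdef]
      field_simp
    have h5 : A * L₁ ^ 2 ≤ L₂ / 2 + L₂ / 16 := by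
      rw [hAdef]
      linarith [hL', hsp]
    have h6 : β * u ≤ L₂ / 4 * u ^ 2 + β ^ 2 / L₂ := by
      have hkey : L₂ / 4 * u ^ 2 + β ^ 2 / L₂ - β * u = (L₂ / 2 * u - β) ^ 2 / L₂ := by
        field_simp
        ring
      linarith [div_nonneg (sq_nonneg (L₂ / 2 * u - β)) hL₂.le]
    have hu2 : A * L₁ ^ 2 * u ^ 2 ≤ (L₂ / 2 + L₂ / 16) * u ^ 2 :=
      mul_le_mul_of_nonneg_right h5 (sq_nonneg u)
    exact final_combine p A B β c₃ K L₁ L₂ L₃ ε κ t g u a hB2 hid hΨ hg2 hquad h6 hu2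
      (mul_nonneg hL₂.le (sq_nonneg u))
  set C'' : ℝ := CΓ * (m ^ (1 - p) * Real.exp C') with hC''def
  have hC''0 : 0 ≤ C'' := by positivity
  -- key pointwise bound
  have hkey : ∀ (y : Fin d → ℝ) (x : X),
      |Real.exp (-((1 / 2) * normGammaSq Γ (G x - y))) / W y| ^ p * (CΓ * W y)
        ≤ C'' * (Real.exp (-(κ * normGammaSq Γ y)) * Real.exp (L₂ * ‖x‖ ^ 2)) := by
    intro y x
    have hfpos := Real.exp_pos (-((1 / 2) * normGammaSq Γ (G x - y)))
    have habs : |Real.exp (-((1 / 2) * normGammaSq Γ (G x - y))) / W y|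
        = Real.exp (-((1 / 2) * normGammaSq Γ (G x - y))) / W y :=
      abs_of_pos (div_pos hfpos (hWpos y))
    have hgb : normGamma Γ (G x) ≤ L₁ * ‖x‖ + K := by
      have h1 : normGamma Γ (G x) ≤ normGamma Γ (G x - G x₀) + normGamma Γ (G x₀) := by
        calc normGamma Γ (G x) = normGamma Γ ((G x - G x₀) + G x₀) := by rw [sub_add_cancel]
          _ ≤ _ := htri _ _
      have h2 : normGamma Γ (G x₀) < L₃ := hBdd x₀ (Metric.mem_ball_self hR)
      have h3 : normGamma Γ (G x - G x₀) ≤ L₁ * ‖x - x₀‖ := hLip x x₀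
      have h4 : ‖x - x₀‖ ≤ ‖x‖ + ‖x₀‖ := norm_sub_le _ _
      have h5 : L₁ * ‖x - x₀‖ ≤ L₁ * (‖x‖ + ‖x₀‖) :=
        mul_le_mul_of_nonneg_left h4 hL₁.le
      rw [hKdef]
      linarith
    have htg : (normGamma Γ y - normGamma Γ (G x)) ^ 2 ≤ normGammaSq Γ (G x - y) := by
      rw [← hNsq (G x - y)]
      have h1 : normGamma Γ y ≤ normGamma Γ (G x - y) + normGamma Γ (G x) := by
        calc normGamma Γ y = normGamma Γ (-(G x - y) + G x) := by
              rw [neg_sub, sub_add_cancel]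
          _ ≤ normGamma Γ (-(G x - y)) + normGamma Γ (G x) := htri _ _
          _ = normGamma Γ (G x - y) + normGamma Γ (G x) := by rw [hNneg]
      have h2 : normGamma Γ (G x) ≤ normGamma Γ (G x - y) + normGamma Γ y := by
        calc normGamma Γ (G x) = normGamma Γ ((G x - y) + y) := by rw [sub_add_cancel]
          _ ≤ _ := htri _ _
      exact sq_le_sq' (by linarith) (by linarith)
    have hexp : -((1 / 2) * normGammaSq Γ (G x - y)) * p
        + -((1 / 2) * (normGamma Γ y + L₃) ^ 2) * (1 - p)
        ≤ C' - κ * normGamma Γ y ^ 2 + L₂ * ‖x‖ ^ 2 := by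
      have hmain := hC' (normGamma Γ y) (normGamma Γ (G x)) ‖x‖ (hN0 y) (hN0 (G x))
        (norm_nonneg x) hgb
      have hscale := mul_le_mul_of_nonneg_left htg (by linarith : (0:ℝ) ≤ p / 2)
      linarith [hscale, hmain]
    calc |Real.exp (-((1 / 2) * normGammaSq Γ (G x - y))) / W y| ^ p * (CΓ * W y)
        = CΓ * (Real.exp (-((1 / 2) * normGammaSq Γ (G x - y))) ^ p * W y ^ (1 - p)) := by
          rw [habs, Real.div_rpow hfpos.le (hWpos y).le, Real.rpow_sub (hWpos y),
            Real.rpow_one]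
          have hWp : (0:ℝ) < W y ^ p := Real.rpow_pos_of_pos (hWpos y) p
          field_simp
      _ ≤ CΓ * (Real.exp (-((1 / 2) * normGammaSq Γ (G x - y))) ^ p
            * (m * Real.exp (-((1 / 2) * (normGamma Γ y + L₃) ^ 2))) ^ (1 - p)) := by
          apply mul_le_mul_of_nonneg_left _ hCΓ0
          apply mul_le_mul_of_nonneg_left _ (Real.rpow_nonneg hfpos.le p)
          exact Real.rpow_le_rpow_of_nonpos (by positivity) (hWlb y) (by linarith)
      _ = CΓ * (m ^ (1 - p) * Real.exp (-((1 / 2) * normGammaSq Γ (G x - y)) * p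
            + -((1 / 2) * (normGamma Γ y + L₃) ^ 2) * (1 - p))) := by
          rw [Real.mul_rpow hm.le (Real.exp_pos _).le, ← Real.exp_mul, ← Real.exp_mul,
            Real.exp_add]
          ring
      _ ≤ CΓ * (m ^ (1 - p) * Real.exp (C' - κ * normGamma Γ y ^ 2 + L₂ * ‖x‖ ^ 2)) := by
          apply mul_le_mul_of_nonneg_left _ hCΓ0
          apply mul_le_mul_of_nonneg_left _ (Real.rpow_nonneg hm.le _)
          exact Real.exp_le_exp.mpr hexp
      _ = C'' * (Real.exp (-(κ * normGammaSq Γ y)) * Real.exp (L₂ * ‖x‖ ^ 2)) := by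
          rw [hC''def, ← hNsq y]
          have harg : C' - κ * normGamma Γ y ^ 2 + L₂ * ‖x‖ ^ 2
              = C' + (-(κ * normGamma Γ y ^ 2) + L₂ * ‖x‖ ^ 2) := by ring
          rw [harg, Real.exp_add, Real.exp_add]
          ring
  -- finiteness of the two factors
  obtain ⟨c₁, hc₁, hco⟩ := quad_coercive hM
  have hco' : ∀ z : Fin d → ℝ, c₁ * ∑ i, z i ^ 2 ≤ normGammaSq Γ z := hco
  have h2fin : (∫⁻ x, ENNReal.ofReal (Real.exp (L₂ * ‖x‖ ^ 2)) ∂μ) < ⊤ :=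
    hSubGauss.lintegral_lt_top
  have h1fin : (∫⁻ y : Fin d → ℝ, ENNReal.ofReal (C'' * Real.exp (-(κ * normGammaSq Γ y)))) < ⊤ := by
    have hmono : ∀ y : Fin d → ℝ, C'' * Real.exp (-(κ * normGammaSq Γ y))
        ≤ C'' * Real.exp (-(κ * c₁ * (∑ i, y i ^ 2))) := by
      intro y
      apply mul_le_mul_of_nonneg_left _ hC''0
      apply Real.exp_le_exp.mpr
      have h := mul_le_mul_of_nonneg_left (hco' y) hκ0.le
      calc -(κ * normGammaSq Γ y) ≤ -(κ * (c₁ * ∑ i, y i ^ 2)) := neg_le_neg h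
        _ = -(κ * c₁ * ∑ i, y i ^ 2) := by ring
    calc (∫⁻ y : Fin d → ℝ, ENNReal.ofReal (C'' * Real.exp (-(κ * normGammaSq Γ y))))
        ≤ ∫⁻ y : Fin d → ℝ, ENNReal.ofReal (C'' * Real.exp (-(κ * c₁ * (∑ i, y i ^ 2)))) :=
          lintegral_mono fun y => ENNReal.ofReal_le_ofReal (hmono y)
      _ < ⊤ := by
          have : Integrable (fun y : Fin d → ℝ =>
              C'' * Real.exp (-(κ * c₁ * ∑ i, y i ^ 2))) := by
            have := (integrable_gauss d (κ * c₁) (by positivity)).const_mul C''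
            simpa [mul_assoc] using this
          exact this.lintegral_lt_top
  -- assembling everything
  calc ∫⁻ y, (∫⁻ x, ENNReal.ofReal
            (|Real.exp (-((1 / 2) * normGammaSq Γ (G x - y)))
              / (∫ x', Real.exp (-((1 / 2) * normGammaSq Γ (G x' - y))) ∂μ)| ^ p) ∂μ)
          * ENNReal.ofReal (evidenceDensity Γ μ G y)
      = ∫⁻ y, ∫⁻ x, ENNReal.ofReal
            (|Real.exp (-((1 / 2) * normGammaSq Γ (G x - y))) / W y| ^ p
              * (CΓ * W y)) ∂μ := by
        refine lintegral_congr fun y => ?_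
        rw [hEv y]
        rw [← lintegral_mul_const' (ENNReal.ofReal (CΓ * W y)) _ ENNReal.ofReal_ne_top]
        exact lintegral_congr fun x => (ENNReal.ofReal_mul (by positivity)).symm
    _ ≤ ∫⁻ y, ∫⁻ x, ENNReal.ofReal
            (C'' * (Real.exp (-(κ * normGammaSq Γ y)) * Real.exp (L₂ * ‖x‖ ^ 2))) ∂μ :=
        lintegral_mono fun y => lintegral_mono fun x =>
          ENNReal.ofReal_le_ofReal (hkey y x)
    _ = (∫⁻ y : Fin d → ℝ, ENNReal.ofReal (C'' * Real.exp (-(κ * normGammaSq Γ y))))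
          * (∫⁻ x, ENNReal.ofReal (Real.exp (L₂ * ‖x‖ ^ 2)) ∂μ) := by
        rw [← lintegral_mul_const' _ _ h2fin.ne]
        refine lintegral_congr fun y => ?_
        rw [← lintegral_const_mul' _ _ ENNReal.ofReal_ne_top]
        refine lintegral_congr fun x => ?_
        have harg : C'' * (Real.exp (-(κ * normGammaSq Γ y)) * Real.exp (L₂ * ‖x‖ ^ 2))
            = (C'' * Real.exp (-(κ * normGammaSq Γ y))) * Real.exp (L₂ * ‖x‖ ^ 2) := by ring
        rw [harg]
        exact ENNReal.ofReal_mul (mul_nonneg hC''0 (Real.exp_pos _).le)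
    _ < ⊤ := ENNReal.mul_lt_top h1fin h2fin
end
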